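/- arXiv:0912.2537 — 9 statements merged into one kernel-verified Lean document; each statement's English description precedes it below -/
import Mathlib

section
/- For the linear operators e_{ij} := ∫^i∂^j − ∫^{i+1}∂^{j+1} on K[x] (where ∂ is differentiation and ∫ is the integration operator sending x^s to x^{s+1}/(s+1)), one has e_{ij} e_{kl} = δ_{jk} e_{il} for all i,j,k,l ∈ ℕ, where δ is the Kronecker delta. -/
open Polynomial

/-- The differentiation operator `∂` on `K[x]` as a `K`-linear endomorphism. -/
noncomputable def Dop (K : Type*) [Field K] : Module.End K (Polynomial K) :=
  Polynomial.derivative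

/-- The integration operator `∫` on `K[x]`, sending `x^s` to `x^{s+1}/(s+1)`. -/
noncomputable def Iop (K : Type*) [Field K] : Module.End K (Polynomial K) :=
  Polynomial.lsum fun n =>
    LinearMap.toSpanSingleton K _ (Polynomial.monomial (n + 1) (((n : K) + 1)⁻¹))

/-- The operators `e_{ij} := ∫^i ∂^j − ∫^{i+1} ∂^{j+1}` in `End_K(K[x])`. -/
noncomputable def eop (K : Type*) [Field K] (i j : ℕ) : Module.End K (Polynomial K) :=
  Iop K ^ i * Dop K ^ j - Iop K ^ (i + 1) * Dop K ^ (j + 1)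

lemma DI (K : Type*) [Field K] [CharZero K] : Dop K * Iop K = 1 := by
  apply Polynomial.lhom_ext'
  intro n
  ext a
  have hn : (n : K) + 1 ≠ 0 := Nat.cast_add_one_ne_zero n
  simp [Dop, Iop, Module.End.mul_apply, LinearMap.toSpanSingleton_apply,
    Polynomial.derivative_monomial, Polynomial.smul_monomial, inv_mul_cancel₀ hn,
    mul_comm, mul_assoc]

lemma DIpow (K : Type*) [Field K] [CharZero K] (n : ℕ) : Dop K ^ n * Iop K ^ n = 1 := by
  induction n with
  | zero => simp
  | succ n ih =>
    rw [pow_succ, pow_succ']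
    simp only [mul_assoc]
    rw [← mul_assoc (Dop K), DI, one_mul, ih]

/-- `P := 1 - ∫∂`, the projection killing the image of `∫`. -/
noncomputable def Pop (K : Type*) [Field K] : Module.End K (Polynomial K) :=
  1 - Iop K * Dop K

lemma PI (K : Type*) [Field K] [CharZero K] : Pop K * Iop K = 0 := by
  rw [Pop, sub_mul, one_mul, mul_assoc, DI, mul_one, sub_self]

lemma DP (K : Type*) [Field K] [CharZero K] : Dop K * Pop K = 0 := by
  rw [Pop, mul_sub, mul_one, ← mul_assoc, DI, one_mul, sub_self]

lemma PP (K : Type*) [Field K] [CharZero K] : Pop K * Pop K = Pop K := by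
  rw [Pop, sub_mul, one_mul, mul_assoc, ← Pop, DP, mul_zero, sub_zero]

lemma eop_eq (K : Type*) [Field K] (i j : ℕ) :
    eop K i j = Iop K ^ i * Pop K * Dop K ^ j := by
  rw [eop, Pop]
  rw [mul_sub, mul_one, sub_mul, pow_succ, pow_succ']
  simp only [mul_assoc]

/-- `e_{ij} e_{kl} = δ_{jk} e_{il}` for all `i, j, k, l ∈ ℕ`. -/
theorem eop_mul_eop (K : Type*) [Field K] [CharZero K] (i j k l : ℕ) :
    eop K i j * eop K k l = if j = k then eop K i l else 0 := by
  rw [eop_eq, eop_eq]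
  rcases lt_trichotomy j k with h | h | h
  · rw [if_neg h.ne]
    have hk : Iop K ^ k = Iop K ^ j * (Iop K * Iop K ^ (k - j - 1)) := by
      rw [← pow_succ', ← pow_add]
      congr 1
      omega
    calc Iop K ^ i * Pop K * Dop K ^ j * (Iop K ^ k * Pop K * Dop K ^ l)
        = Iop K ^ i * ((Pop K * (Dop K ^ j * Iop K ^ j)) * Iop K *
            (Iop K ^ (k - j - 1) * Pop K * Dop K ^ l)) := by rw [hk]; simp only [mul_assoc]
      _ = 0 := by rw [DIpow, mul_one, PI]; simp
  · subst h
    rw [if_pos rfl, eop_eq]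
    calc Iop K ^ i * Pop K * Dop K ^ j * (Iop K ^ j * Pop K * Dop K ^ l)
        = Iop K ^ i * (Pop K * (Dop K ^ j * Iop K ^ j) * Pop K) * Dop K ^ l := by simp only [mul_assoc]
      _ = Iop K ^ i * Pop K * Dop K ^ l := by rw [DIpow, mul_one, PP]
  · rw [if_neg h.ne']
    have hj : Dop K ^ j = Dop K ^ (j - k - 1) * Dop K * Dop K ^ k := by
      rw [← pow_succ, ← pow_add]
      congr 1
      omega
    calc Iop K ^ i * Pop K * Dop K ^ j * (Iop K ^ k * Pop K * Dop K ^ l)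
        = Iop K ^ i * (Pop K * (Dop K ^ (j - k - 1) *
            (Dop K * (Dop K ^ k * Iop K ^ k * (Pop K * Dop K ^ l))))) := by
          rw [hj]; simp only [mul_assoc]
      _ = 0 := by rw [DIpow, one_mul, ← mul_assoc (Dop K), DP]; simp
end

section
/- In End_K(K[x]), the centralizer of the multiplication operator x within the subalgebra generated by x, ∂, ∫ contains only polynomials in x; more precisely, any element of K⟨x, ∂, ∫⟩ commuting with x lies in K[x]. -/
open Polynomial

/-- Multiplication by `x` on `K[x]` as a `K`-linear endomorphism. -/
noncomputable def Xop (K : Type*) [Field K] : Module.End K (Polynomial K) :=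
  LinearMap.mulLeft K (Polynomial.X : Polynomial K)

/-- Any element of the algebra `K⟨x, ∂, ∫⟩ ⊆ End_K(K[x])` commuting with (multiplication by) `x`
lies in `K[x]`, i.e. in the subalgebra generated by `x` alone. -/
theorem centralizer_of_x (K : Type*) [Field K] [CharZero K]
    (f : Module.End K (Polynomial K))
    (hf : f ∈ Algebra.adjoin K ({Xop K, Dop K, Iop K} : Set (Module.End K (Polynomial K))))
    (hcomm : Commute f (Xop K)) :
    f ∈ Algebra.adjoin K ({Xop K} : Set (Module.End K (Polynomial K))) := by
  -- f commutes with multiplication by X, hence f p = p * f 1 for all p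
  have hX : ∀ p : Polynomial K, f (X * p) = X * f p := by
    intro p
    have := LinearMap.congr_fun hcomm.eq p
    simpa [Xop, Module.End.mul_apply] using this
  have hpow : ∀ n : ℕ, f (X ^ n) = X ^ n * f 1 := by
    intro n
    induction n with
    | zero => simp
    | succ n ih =>
      rw [pow_succ, mul_comm (X ^ n) X, hX, ih, ← mul_assoc, mul_comm X (X ^ n)]
  have key : ∀ p : Polynomial K, f p = p * f 1 := by
    intro p
    induction p using Polynomial.induction_on' with
    | add p q hp hq => rw [map_add, hp, hq, add_mul]
    | monomial n a =>
      rw [← C_mul_X_pow_eq_monomial, ← smul_eq_C_mul, map_smul, hpow, smul_mul_assoc,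
        smul_eq_C_mul]
  -- hence f = lmul (f 1) = aeval (Xop K) (f 1)
  have hXop : Xop K = Algebra.lmul K (Polynomial K) X := rfl
  have hfeq : f = Polynomial.aeval (Xop K) (f 1) := by
    rw [hXop, Polynomial.aeval_algHom_apply, Polynomial.aeval_X_left_apply]
    exact LinearMap.ext fun p => (key p).trans (mul_comm _ _)
  rw [Algebra.adjoin_singleton_eq_range_aeval]
  exact ⟨f 1, hfeq.symm⟩
end

section
/- Let B₁ = K[H][x, x^{−1}; σ] with σ(H) = H − 1. Every K-algebra automorphism of B₁ is of the form ζ^ε ∘ t_λ ∘ s_p for unique ε ∈ {0,1}, λ ∈ K^*, p ∈ K[x, x^{−1}], where ζ: x ↦ x^{−1}, H ↦ −H; t_λ: x ↦ λx, H ↦ H; s_p: x ↦ x, H ↦ H + p. Hence Aut(B₁) ≅ ℤ/2 ⋉ (K^* ⋉ K[x,x^{−1}]). -/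
open Finset

section B1
variable {K B : Type*} [Field K] [CharZero K] [Ring B] [Algebra K B]

lemma zpow_h (h : B) (x : Bˣ) (hrel : (x : B) * h = (h - 1) * (x : B)) :
    ∀ k : ℤ, ((x ^ k : Bˣ) : B) * h = (h - (k : B)) * ((x ^ k : Bˣ) : B) := by
  have h2 : h * ((x⁻¹ : Bˣ) : B) = ((x⁻¹ : Bˣ) : B) * (h - 1) := by
    calc h * ((x⁻¹ : Bˣ) : B) = ((x⁻¹ : Bˣ) : B) * ((x : B) * h) * ((x⁻¹ : Bˣ) : B) := by
          rw [Units.inv_mul_cancel_left]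
    _ = ((x⁻¹ : Bˣ) : B) * (h - 1) * ((x : B) * ((x⁻¹ : Bˣ) : B)) := by
          rw [hrel]; noncomm_ring
    _ = ((x⁻¹ : Bˣ) : B) * (h - 1) := by rw [Units.mul_inv]; rw [mul_one]
  have hinv : ((x⁻¹ : Bˣ) : B) * h = (h + 1) * ((x⁻¹ : Bˣ) : B) := by
    rw [add_mul, h2]; noncomm_ring
  intro k
  induction k using Int.induction_on with
  | zero => simp
  | succ i ih =>
      have hx : ((x ^ ((i : ℤ) + 1) : Bˣ) : B) = ((x ^ (i : ℤ) : Bˣ) : B) * (x : B) := by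
        rw [zpow_add_one]; rfl
      rw [hx, mul_assoc, hrel, ← mul_assoc, mul_sub, mul_one, ih]
      push_cast
      noncomm_ring
  | pred i ih =>
      have hx : ((x ^ (-(i : ℤ) - 1) : Bˣ) : B) = ((x ^ (-(i : ℤ)) : Bˣ) : B) * ((x⁻¹ : Bˣ) : B) := by
        rw [zpow_sub_one]; rfl
      rw [hx, mul_assoc, hinv, ← mul_assoc, mul_add, mul_one, ih]
      push_cast
      noncomm_ring

lemma zpow_hpow (h : B) (x : Bˣ) (hrel : (x : B) * h = (h - 1) * (x : B)) (k : ℤ) :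
    ∀ m : ℕ, ((x ^ k : Bˣ) : B) * h ^ m = (h - (k : B)) ^ m * ((x ^ k : Bˣ) : B) := by
  intro m
  induction m with
  | zero => simp
  | succ m ih =>
      rw [pow_succ, ← mul_assoc, ih, mul_assoc, zpow_h h x hrel k, ← mul_assoc, ← pow_succ]

end B1

section B1
variable {K B : Type*} [Field K] [CharZero K] [Ring B] [Algebra K B]

lemma basis_mul (h : B) (x : Bˣ) (hrel : (x : B) * h = (h - 1) * (x : B))
    (b : Module.Basis (ℕ × ℤ) K B) (hb : ∀ m : ℕ, ∀ k : ℤ, b (m, k) = h ^ m * ((x ^ k : Bˣ) : B))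
    (m m' : ℕ) (k k' : ℤ) :
    b (m, k) * b (m', k') =
      ∑ i ∈ range (m' + 1),
        ((m'.choose i : K) * (-(k : K)) ^ (m' - i)) • b (m + i, k + k') := by
  have hc : Commute h (-(k : B)) := (Int.cast_commute k h).neg_left.symm
  have e1 : b (m, k) * b (m', k') = h ^ m * (h - (k : B)) ^ m' * ((x ^ (k + k') : Bˣ) : B) := by
    rw [hb, hb]
    calc h ^ m * ((x ^ k : Bˣ) : B) * (h ^ m' * ((x ^ k' : Bˣ) : B))
        = h ^ m * (((x ^ k : Bˣ) : B) * h ^ m') * ((x ^ k' : Bˣ) : B) := by noncomm_ring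
      _ = h ^ m * ((h - (k : B)) ^ m' * ((x ^ k : Bˣ) : B)) * ((x ^ k' : Bˣ) : B) := by
            rw [zpow_hpow h x hrel]
      _ = h ^ m * (h - (k : B)) ^ m' * (((x ^ k : Bˣ) : B) * ((x ^ k' : Bˣ) : B)) := by
            noncomm_ring
      _ = h ^ m * (h - (k : B)) ^ m' * ((x ^ (k + k') : Bˣ) : B) := by
            rw [← Units.val_mul, ← zpow_add]
  rw [e1, sub_eq_add_neg, Commute.add_pow hc, Finset.mul_sum, Finset.sum_mul]
  refine Finset.sum_congr rfl fun i _ => ?_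
  have hs : (-(k : B)) ^ (m' - i) * (m'.choose i : B) =
      algebraMap K B ((m'.choose i : K) * (-(k : K)) ^ (m' - i)) := by
    rw [map_mul, map_pow, map_neg, map_intCast, map_natCast]
    exact ((Nat.cast_commute (m'.choose i) ((-(k : B)) ^ (m' - i))).symm).eq
  rw [hb, Algebra.smul_def]
  calc h ^ m * (h ^ i * (-(k : B)) ^ (m' - i) * (m'.choose i : B)) * ((x ^ (k + k') : Bˣ) : B)
      = h ^ m * h ^ i * ((-(k : B)) ^ (m' - i) * (m'.choose i : B)) * ((x ^ (k + k') : Bˣ) : B) := by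
        noncomm_ring
    _ = h ^ (m + i) * algebraMap K B ((m'.choose i : K) * (-(k : K)) ^ (m' - i)) * ((x ^ (k + k') : Bˣ) : B) := by
        rw [hs, pow_add]
    _ = algebraMap K B ((m'.choose i : K) * (-(k : K)) ^ (m' - i)) * (h ^ (m + i) * ((x ^ (k + k') : Bˣ) : B)) := by
        rw [← Algebra.commutes]; noncomm_ring

end B1

section B2
variable {K B : Type*} [Field K] [CharZero K] [Ring B] [Algebra K B]

set_option linter.unusedSectionVars false

lemma lead_coeff (h : B) (x : Bˣ) (hrel : (x : B) * h = (h - 1) * (x : B))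
    (b : Module.Basis (ℕ × ℤ) K B) (hb : ∀ m : ℕ, ∀ k : ℤ, b (m, k) = h ^ m * ((x ^ k : Bˣ) : B))
    (u v : B) (ku kv : ℤ) (Mu Mv : ℕ)
    (hku : ∀ p ∈ (b.repr u).support, ∀ q ∈ (b.repr v).support,
      p.2 + q.2 = ku + kv → p.2 = ku ∧ q.2 = kv)
    (hMu : ∀ p ∈ (b.repr u).support, p.2 = ku → p.1 ≤ Mu)
    (hMv : ∀ q ∈ (b.repr v).support, q.2 = kv → q.1 ≤ Mv) :
    b.repr (u * v) (Mu + Mv, ku + kv) = b.repr u (Mu, ku) * b.repr v (Mv, kv) := by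
  classical
  set S := (b.repr u).support with hS
  set T := (b.repr v).support with hT
  have hu : u = ∑ p ∈ S, b.repr u p • b p := by
    conv_lhs => rw [← b.linearCombination_repr u]
    rw [Finsupp.linearCombination_apply, Finsupp.sum]
  have hv : v = ∑ q ∈ T, b.repr v q • b q := by
    conv_lhs => rw [← b.linearCombination_repr v]
    rw [Finsupp.linearCombination_apply, Finsupp.sum]
  have huv : u * v = ∑ p ∈ S, ∑ q ∈ T, (b.repr u p * b.repr v q) • (b p * b q) := by
    conv_lhs => rw [hu, hv]
    rw [Finset.sum_mul]
    refine Finset.sum_congr rfl fun p _ => ?_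
    rw [Finset.mul_sum]
    refine Finset.sum_congr rfl fun q _ => ?_
    rw [smul_mul_assoc, mul_smul_comm, smul_smul]
  -- coefficient of the product of two basis vectors at the leading index
  have hbb : ∀ p ∈ S, ∀ q ∈ T,
      b.repr (b p * b q) (Mu + Mv, ku + kv)
        = if p = (Mu, ku) ∧ q = (Mv, kv) then 1 else 0 := by
    rintro ⟨m, k⟩ hp ⟨m', k'⟩ hq
    rw [basis_mul h x hrel b hb, map_sum]
    simp only [map_smul, b.repr_self, Finsupp.finset_sum_apply, Finsupp.smul_apply,
      Finsupp.single_apply, smul_eq_mul]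
    by_cases hPQ : ((m, k) : ℕ × ℤ) = (Mu, ku) ∧ ((m', k') : ℕ × ℤ) = (Mv, kv)
    · obtain ⟨h1, h2⟩ := hPQ
      have hm : m = Mu := congrArg Prod.fst h1
      have hk : k = ku := congrArg Prod.snd h1
      have hm' : m' = Mv := congrArg Prod.fst h2
      have hk' : k' = kv := congrArg Prod.snd h2
      rw [if_pos ⟨h1, h2⟩]
      rw [Finset.sum_eq_single_of_mem m' (Finset.self_mem_range_succ m')]
      · rw [hm, hk, hm', hk']
        simp
      · intro i _ hi
        rw [if_neg, mul_zero]
        simp only [Prod.mk.injEq, not_and]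
        intro hcon
        omega
    · rw [if_neg hPQ]
      refine Finset.sum_eq_zero fun i hi => ?_
      rw [if_neg, mul_zero]
      intro hcon
      have hksum : k + k' = ku + kv := congrArg Prod.snd hcon
      obtain ⟨hk, hk'⟩ := hku _ hp _ hq hksum
      have hmMu : m ≤ Mu := hMu _ hp hk
      have hm'Mv : m' ≤ Mv := hMv _ hq hk'
      have hiq : i ≤ m' := Nat.lt_succ_iff.mp (Finset.mem_range.mp hi)
      have hmsum : m + i = Mu + Mv := congrArg Prod.fst hcon
      exact hPQ ⟨by rw [Prod.mk.injEq]; omega, by rw [Prod.mk.injEq]; omega⟩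
  have key : b.repr (u * v) (Mu + Mv, ku + kv) = ∑ p ∈ S, ∑ q ∈ T,
      (b.repr u p * b.repr v q) * (if p = (Mu, ku) ∧ q = (Mv, kv) then 1 else 0) := by
    rw [huv, map_sum]
    rw [Finsupp.finset_sum_apply]
    refine Finset.sum_congr rfl fun p hp => ?_
    rw [map_sum, Finsupp.finset_sum_apply]
    refine Finset.sum_congr rfl fun q hq => ?_
    rw [map_smul, Finsupp.smul_apply, smul_eq_mul, hbb p hp q hq]
  rw [key]
  have inner : ∀ p, (∑ q ∈ T,
      (b.repr u p * b.repr v q) * (if p = (Mu, ku) ∧ q = (Mv, kv) then 1 else 0))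
      = (b.repr u p * b.repr v (Mv, kv)) * (if p = (Mu, ku) then 1 else 0) := by
    intro p
    by_cases hQT : ((Mv, kv) : ℕ × ℤ) ∈ T
    · rw [Finset.sum_eq_single_of_mem ((Mv, kv) : ℕ × ℤ) hQT]
      · by_cases hpP : p = ((Mu, ku) : ℕ × ℤ) <;> simp [hpP]
      · intro q _ hq
        rw [if_neg (fun hc => hq hc.2), mul_zero]
    · have hz : b.repr v (Mv, kv) = 0 := Finsupp.notMem_support_iff.mp hQT
      rw [hz]
      rw [Finset.sum_eq_zero, mul_zero, zero_mul]
      intro q hq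
      rw [if_neg, mul_zero]
      rintro ⟨-, rfl⟩
      exact hQT hq
  rw [Finset.sum_congr rfl fun p _ => inner p]
  by_cases hPS : ((Mu, ku) : ℕ × ℤ) ∈ S
  · rw [Finset.sum_eq_single_of_mem ((Mu, ku) : ℕ × ℤ) hPS]
    · simp
    · intro p _ hp
      rw [if_neg hp, mul_zero]
  · have hz : b.repr u (Mu, ku) = 0 := Finsupp.notMem_support_iff.mp hPS
    rw [hz, zero_mul]
    refine Finset.sum_eq_zero fun p hp => ?_
    rcases eq_or_ne p ((Mu, ku) : ℕ × ℤ) with rfl | hne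
    · exact absurd hp hPS
    · rw [if_neg hne, mul_zero]

end B2

section B3
variable {K B : Type*} [Field K] [CharZero K] [Ring B] [Algebra K B]
set_option linter.unusedSectionVars false

lemma exists_max (b : Module.Basis (ℕ × ℤ) K B) (w : B) (hw : w ≠ 0) :
    ∃ (ku : ℤ) (Mu : ℕ), b.repr w (Mu, ku) ≠ 0 ∧
      (∀ p ∈ (b.repr w).support, p.2 ≤ ku) ∧
      (∀ p ∈ (b.repr w).support, p.2 = ku → p.1 ≤ Mu) := by
  classical
  have hr : b.repr w ≠ 0 := fun hc => hw (by
    have := congrArg b.repr.symm hc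
    simpa using this)
  have hne : (b.repr w).support.Nonempty := Finsupp.support_nonempty_iff.mpr hr
  set S := (b.repr w).support
  have hSn : (S.image Prod.snd).Nonempty := hne.image _
  set ku := (S.image Prod.snd).max' hSn with hku
  have hF : (S.filter (fun p => p.2 = ku)).Nonempty := by
    obtain ⟨p, hp, hpk⟩ := Finset.mem_image.mp ((S.image Prod.snd).max'_mem hSn)
    exact ⟨p, Finset.mem_filter.mpr ⟨hp, hpk⟩⟩
  have hFn : ((S.filter (fun p => p.2 = ku)).image Prod.fst).Nonempty := hF.image _
  set Mu := ((S.filter (fun p => p.2 = ku)).image Prod.fst).max' hFn with hMu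
  refine ⟨ku, Mu, ?_, ?_, ?_⟩
  · obtain ⟨p, hp, hp1⟩ := Finset.mem_image.mp
      (Finset.max'_mem _ hFn)
    obtain ⟨hpS, hp2⟩ := Finset.mem_filter.mp hp
    have : p = (Mu, ku) := Prod.ext hp1 hp2
    rw [← this]
    exact Finsupp.mem_support_iff.mp hpS
  · intro p hp
    exact Finset.le_max' _ _ (Finset.mem_image_of_mem Prod.snd hp)
  · intro p hp hpk
    exact Finset.le_max' _ _
      (Finset.mem_image_of_mem Prod.fst (Finset.mem_filter.mpr ⟨hp, hpk⟩))

lemma exists_min (b : Module.Basis (ℕ × ℤ) K B) (w : B) (hw : w ≠ 0) :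
    ∃ (ku : ℤ) (Mu : ℕ), b.repr w (Mu, ku) ≠ 0 ∧
      (∀ p ∈ (b.repr w).support, ku ≤ p.2) ∧
      (∀ p ∈ (b.repr w).support, p.2 = ku → p.1 ≤ Mu) := by
  classical
  have hr : b.repr w ≠ 0 := fun hc => hw (by
    have := congrArg b.repr.symm hc
    simpa using this)
  have hne : (b.repr w).support.Nonempty := Finsupp.support_nonempty_iff.mpr hr
  set S := (b.repr w).support
  have hSn : (S.image Prod.snd).Nonempty := hne.image _
  set ku := (S.image Prod.snd).min' hSn with hku
  have hF : (S.filter (fun p => p.2 = ku)).Nonempty := by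
    obtain ⟨p, hp, hpk⟩ := Finset.mem_image.mp ((S.image Prod.snd).min'_mem hSn)
    exact ⟨p, Finset.mem_filter.mpr ⟨hp, hpk⟩⟩
  have hFn : ((S.filter (fun p => p.2 = ku)).image Prod.fst).Nonempty := hF.image _
  set Mu := ((S.filter (fun p => p.2 = ku)).image Prod.fst).max' hFn with hMu
  refine ⟨ku, Mu, ?_, ?_, ?_⟩
  · obtain ⟨p, hp, hp1⟩ := Finset.mem_image.mp
      (Finset.max'_mem _ hFn)
    obtain ⟨hpS, hp2⟩ := Finset.mem_filter.mp hp
    have : p = (Mu, ku) := Prod.ext hp1 hp2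
    rw [← this]
    exact Finsupp.mem_support_iff.mp hpS
  · intro p hp
    exact Finset.min'_le _ _ (Finset.mem_image_of_mem Prod.snd hp)
  · intro p hp hpk
    exact Finset.le_max' _ _
      (Finset.mem_image_of_mem Prod.fst (Finset.mem_filter.mpr ⟨hp, hpk⟩))

lemma repr_one (h : B) (x : Bˣ)
    (b : Module.Basis (ℕ × ℤ) K B) (hb : ∀ m : ℕ, ∀ k : ℤ, b (m, k) = h ^ m * ((x ^ k : Bˣ) : B)) :
    b.repr (1 : B) = Finsupp.single ((0 : ℕ), (0 : ℤ)) 1 := by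
  have h1 : b (0, 0) = 1 := by rw [hb]; simp
  rw [← h1, b.repr_self]

lemma unit_is_monomial (h : B) (x : Bˣ) (hrel : (x : B) * h = (h - 1) * (x : B))
    (b : Module.Basis (ℕ × ℤ) K B) (hb : ∀ m : ℕ, ∀ k : ℤ, b (m, k) = h ^ m * ((x ^ k : Bˣ) : B))
    (u v : B) (huv : u * v = 1) (hu : u ≠ 0) (hv : v ≠ 0) :
    ∃ (c : K) (k : ℤ), c ≠ 0 ∧ u = c • ((x ^ k : Bˣ) : B) := by
  classical
  obtain ⟨ku, Mu, hu1, hu2, hu3⟩ := exists_max b u hu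
  obtain ⟨kv, Mv, hv1, hv2, hv3⟩ := exists_max b v hv
  obtain ⟨ku', Mu', hu1', hu2', hu3'⟩ := exists_min b u hu
  obtain ⟨kv', Mv', hv1', hv2', hv3'⟩ := exists_min b v hv
  have E1 : b.repr (u * v) (Mu + Mv, ku + kv) = b.repr u (Mu, ku) * b.repr v (Mv, kv) :=
    lead_coeff h x hrel b hb u v ku kv Mu Mv
      (fun p hp q hq hsum => by
        have := hu2 p hp; have := hv2 q hq; constructor <;> omega) hu3 hv3
  have E2 : b.repr (u * v) (Mu' + Mv', ku' + kv') = b.repr u (Mu', ku') * b.repr v (Mv', kv') :=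
    lead_coeff h x hrel b hb u v ku' kv' Mu' Mv'
      (fun p hp q hq hsum => by
        have := hu2' p hp; have := hv2' q hq; constructor <;> omega) hu3' hv3'
  rw [huv, repr_one h x b hb] at E1 E2
  have hne1 : b.repr u (Mu, ku) * b.repr v (Mv, kv) ≠ 0 := mul_ne_zero hu1 hv1
  have hne2 : b.repr u (Mu', ku') * b.repr v (Mv', kv') ≠ 0 := mul_ne_zero hu1' hv1'
  rw [← E1] at hne1
  rw [← E2] at hne2
  rw [Finsupp.single_apply] at hne1 hne2
  have hz1 : ((0 : ℕ), (0 : ℤ)) = ((Mu + Mv : ℕ), (ku + kv : ℤ)) := by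
    by_contra hc; rw [if_neg hc] at hne1; exact hne1 rfl
  have hz2 : ((0 : ℕ), (0 : ℤ)) = ((Mu' + Mv' : ℕ), (ku' + kv' : ℤ)) := by
    by_contra hc; rw [if_neg hc] at hne2; exact hne2 rfl
  have hMu0 : Mu = 0 := by
    have := congrArg Prod.fst hz1; simp at this; omega
  have hks : ku + kv = 0 := (congrArg Prod.snd hz1).symm
  have hks' : ku' + kv' = 0 := (congrArg Prod.snd hz2).symm
  have hkule : ku' ≤ ku := hu2 _ (Finsupp.mem_support_iff.mpr hu1')
  have hkvle : kv' ≤ kv := hv2 _ (Finsupp.mem_support_iff.mpr hv1')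
  have hkeq : ku' = ku := by omega
  -- support of u is contained in {(0, ku)}
  have hsub : (b.repr u).support ⊆ {((0 : ℕ), ku)} := by
    intro p hp
    have h1 := hu2 p hp
    have h2 := hu2' p hp
    have h3 : p.2 = ku := by omega
    have h4 : p.1 ≤ Mu := hu3 p hp h3
    have h5 : p = ((0 : ℕ), ku) := Prod.ext (by omega) h3
    simp [h5]
  have hrep : b.repr u = Finsupp.single ((0 : ℕ), ku) (b.repr u ((0 : ℕ), ku)) :=
    Finsupp.support_subset_singleton.mp hsub
  refine ⟨b.repr u ((0 : ℕ), ku), ku, ?_, ?_⟩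
  · intro hc
    rw [hc, Finsupp.single_zero] at hrep
    exact hu (by
      have := congrArg b.repr.symm hrep
      simpa using this)
  · calc u = b.repr.symm (b.repr u) := by simp
      _ = b.repr.symm (Finsupp.single ((0 : ℕ), ku) (b.repr u ((0 : ℕ), ku))) := by rw [← hrep]
      _ = (b.repr u ((0 : ℕ), ku)) • b ((0 : ℕ), ku) := Module.Basis.repr_symm_single b _ _
      _ = (b.repr u ((0 : ℕ), ku)) • ((x ^ ku : Bˣ) : B) := by rw [hb]; simp

end B3

section B4
variable {K B : Type*} [Field K] [CharZero K] [Ring B] [Algebra K B]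
set_option linter.unusedSectionVars false

lemma conj_eq_coeff (h : B) (x : Bˣ) (hrel : (x : B) * h = (h - 1) * (x : B))
    (b : Module.Basis (ℕ × ℤ) K B) (hb : ∀ m : ℕ, ∀ k : ℤ, b (m, k) = h ^ m * ((x ^ k : Bˣ) : B))
    (n : ℤ) (w : B)
    (heq : ((x ^ n : Bˣ) : B) * w = (w - 1) * ((x ^ n : Bˣ) : B)) (m : ℕ) (k : ℤ) :
    ∑ p ∈ (b.repr w).support,
      (if p.2 = k ∧ m ≤ p.1 then b.repr w p * ((p.1.choose m : K) * (-(n : K)) ^ (p.1 - m))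
        else 0)
    = b.repr w (m, k) - (if m = 0 ∧ k = 0 then 1 else 0) := by
  classical
  set S := (b.repr w).support with hSdef
  have hxn : ((x ^ n : Bˣ) : B) = b ((0 : ℕ), n) := by rw [hb]; simp
  have hw : w = ∑ p ∈ S, b.repr w p • b p := by
    conv_lhs => rw [← b.linearCombination_repr w]
    rw [Finsupp.linearCombination_apply, Finsupp.sum]
  have hbbL : ∀ p : ℕ × ℤ, b.repr (b ((0 : ℕ), n) * b p) (m, k + n)
      = if p.2 = k ∧ m ≤ p.1 then ((p.1.choose m : K) * (-(n : K)) ^ (p.1 - m)) else 0 := by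
    intro p
    rw [show p = (p.1, p.2) from rfl, basis_mul h x hrel b hb, map_sum]
    simp only [map_smul, b.repr_self, Finsupp.finset_sum_apply, Finsupp.smul_apply,
      Finsupp.single_apply, smul_eq_mul]
    by_cases hc : p.2 = k ∧ m ≤ p.1
    · rw [if_pos hc]
      rw [Finset.sum_eq_single_of_mem m (Finset.mem_range.mpr (Nat.lt_succ_of_le hc.2))]
      · rw [if_pos (by rw [Prod.mk.injEq]; omega), mul_one]
      · intro i _ hi
        rw [if_neg, mul_zero]
        rw [Prod.mk.injEq]
        omega
    · rw [if_neg hc]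
      refine Finset.sum_eq_zero fun i hi => ?_
      rw [if_neg, mul_zero]
      rw [Prod.mk.injEq]
      have := Finset.mem_range.mp hi
      intro hcon
      exact hc ⟨by omega, by omega⟩
  have hbbR : ∀ p : ℕ × ℤ, b.repr (b p * b ((0 : ℕ), n)) (m, k + n)
      = if p = (m, k) then 1 else 0 := by
    intro p
    rw [show p = (p.1, p.2) from rfl, basis_mul h x hrel b hb, map_sum]
    simp only [map_smul, b.repr_self, Finsupp.finset_sum_apply, Finsupp.smul_apply,
      Finsupp.single_apply, smul_eq_mul]
    rw [Finset.sum_range_one]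
    simp only [Nat.choose_self, Nat.cast_one, Nat.sub_zero, pow_zero, one_mul, add_zero]
    by_cases hp : p = ((m : ℕ), (k : ℤ))
    · rw [if_pos hp, if_pos (show ((p.1 : ℕ), p.2 + n) = ((m : ℕ), k + n) by rw [hp])]
    · rw [if_neg hp, if_neg]
      rw [Prod.mk.injEq]
      intro hcon
      exact hp (Prod.ext hcon.1 (by omega))
  have hL : b.repr (((x ^ n : Bˣ) : B) * w) (m, k + n)
      = ∑ p ∈ S, (if p.2 = k ∧ m ≤ p.1
          then b.repr w p * ((p.1.choose m : K) * (-(n : K)) ^ (p.1 - m)) else 0) := by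
    conv_lhs => rw [hxn, hw]
    rw [Finset.mul_sum, map_sum, Finsupp.finset_sum_apply]
    refine Finset.sum_congr rfl fun p hp => ?_
    rw [mul_smul_comm, map_smul, Finsupp.smul_apply, smul_eq_mul, hbbL p]
    by_cases hc : p.2 = k ∧ m ≤ p.1
    · rw [if_pos hc, if_pos hc]
    · rw [if_neg hc, if_neg hc, mul_zero]
  have hR : b.repr ((w - 1) * ((x ^ n : Bˣ) : B)) (m, k + n)
      = b.repr w (m, k) - (if m = 0 ∧ k = 0 then 1 else 0) := by
    rw [sub_mul, one_mul, map_sub, Finsupp.sub_apply]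
    congr 1
    · conv_lhs => rw [hw, hxn]
      rw [Finset.sum_mul, map_sum, Finsupp.finset_sum_apply]
      rw [Finset.sum_congr rfl (fun p (hp : p ∈ S) => by
        rw [smul_mul_assoc, map_smul, Finsupp.smul_apply, smul_eq_mul, hbbR p,
          mul_ite, mul_one, mul_zero])]
      rw [Finset.sum_ite_eq' S ((m : ℕ), (k : ℤ)) (fun p => b.repr w p)]
      by_cases hm : ((m : ℕ), (k : ℤ)) ∈ S
      · rw [if_pos hm]
      · rw [if_neg hm, Finsupp.notMem_support_iff.mp hm]
    · rw [hxn, b.repr_self, Finsupp.single_apply]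
      by_cases hc : m = 0 ∧ k = 0
      · rw [if_pos hc, if_pos]
        rw [Prod.mk.injEq]
        exact ⟨hc.1.symm, by omega⟩
      · rw [if_neg hc, if_neg]
        rw [Prod.mk.injEq]
        intro hcon
        exact hc ⟨hcon.1.symm, by omega⟩
  rw [← hL, ← hR, heq]

end B4

section B5
variable {K B : Type*} [Field K] [CharZero K] [Ring B] [Algebra K B]
set_option linter.unusedSectionVars false

lemma shape_of_w (h : B) (x : Bˣ) (hrel : (x : B) * h = (h - 1) * (x : B))
    (b : Module.Basis (ℕ × ℤ) K B) (hb : ∀ m : ℕ, ∀ k : ℤ, b (m, k) = h ^ m * ((x ^ k : Bˣ) : B))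
    (n : ℤ) (hn : n = 1 ∨ n = -1) (w : B)
    (heq : ((x ^ n : Bˣ) : B) * w = (w - 1) * ((x ^ n : Bˣ) : B)) :
    (∀ m : ℕ, ∀ k : ℤ, 2 ≤ m → b.repr w (m, k) = 0) ∧
    (∀ k : ℤ, k ≠ 0 → b.repr w (1, k) = 0) ∧
    b.repr w (1, 0) = (n : K) := by
  classical
  set S := (b.repr w).support with hSdef
  have hnK : (n : K) * (n : K) = 1 := by rcases hn with rfl | rfl <;> norm_num
  have hnK0 : (n : K) ≠ 0 := by rcases hn with rfl | rfl <;> norm_num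
  -- strict form of the coefficient equation
  have E : ∀ m : ℕ, ∀ k : ℤ,
      (∑ p ∈ S, if p.2 = k ∧ m + 1 ≤ p.1
        then b.repr w p * ((p.1.choose m : K) * (-(n : K)) ^ (p.1 - m)) else 0)
      = -(if m = 0 ∧ k = 0 then 1 else 0) := by
    intro m k
    have E0 := conj_eq_coeff h x hrel b hb n w heq m k
    have split : ∀ p ∈ S,
        (if p.2 = k ∧ m ≤ p.1 then b.repr w p * ((p.1.choose m : K) * (-(n : K)) ^ (p.1 - m))
          else 0)
        = (if p.2 = k ∧ m + 1 ≤ p.1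
            then b.repr w p * ((p.1.choose m : K) * (-(n : K)) ^ (p.1 - m)) else 0)
          + (if p = (m, k) then b.repr w p else 0) := by
      intro p _
      by_cases h1 : p = ((m : ℕ), (k : ℤ))
      · rw [if_pos h1, if_pos (by rw [h1]; exact ⟨rfl, le_refl m⟩), if_neg (by rw [h1]; simp)]
        rw [h1]
        simp
      · rw [if_neg h1, add_zero]
        rcases eq_or_ne p.2 k with h2 | h2
        · rcases eq_or_ne p.1 m with h3 | h3
          · exact absurd (Prod.ext h3 h2) h1
          · rw [if_congr (show (p.2 = k ∧ m ≤ p.1) ↔ (p.2 = k ∧ m + 1 ≤ p.1) by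
              constructor
              · rintro ⟨ha, hb'⟩; exact ⟨ha, by omega⟩
              · rintro ⟨ha, hb'⟩; exact ⟨ha, by omega⟩) rfl rfl]
        · rw [if_neg (fun hc => h2 hc.1), if_neg (fun hc => h2 hc.1)]
    rw [Finset.sum_congr rfl split, Finset.sum_add_distrib,
      Finset.sum_ite_eq' S ((m : ℕ), (k : ℤ)) (fun p => b.repr w p)] at E0
    have h2 : (if ((m : ℕ), (k : ℤ)) ∈ S then b.repr w (m, k) else 0) = b.repr w (m, k) := by
      by_cases hm : ((m : ℕ), (k : ℤ)) ∈ S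
      · rw [if_pos hm]
      · rw [if_neg hm, Finsupp.notMem_support_iff.mp hm]
    rw [h2] at E0
    linear_combination E0
  set N := S.sup Prod.fst with hN
  have hbound : ∀ p ∈ S, p.1 ≤ N := fun p hp => Finset.le_sup hp
  have vanish : ∀ d : ℕ, ∀ m : ℕ, ∀ k : ℤ, N < m + d → 2 ≤ m → b.repr w (m, k) = 0 := by
    intro d
    induction d with
    | zero =>
        intro m k hNm _
        by_contra hc
        have hmem : ((m : ℕ), k) ∈ S := Finsupp.mem_support_iff.mpr hc
        have := hbound _ hmem
        omega
    | succ d ih =>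
        intro m k hNm hm
        have Em := E (m - 1) k
        have hm1 : m - 1 + 1 = m := by omega
        rw [hm1] at Em
        rw [Finset.sum_eq_single ((m : ℕ), (k : ℤ))] at Em
        · rw [if_pos (show ((k : ℤ) = k ∧ m ≤ m) from ⟨rfl, le_refl m⟩)] at Em
          rw [if_neg (show ¬(m - 1 = 0 ∧ k = 0) by omega), neg_zero] at Em
          have hch : (m.choose (m - 1)) = m := by
            rw [Nat.choose_symm (show 1 ≤ m by omega), Nat.choose_one_right]
          have hex : m - (m - 1) = 1 := by omega
          rw [hch, hex, pow_one] at Em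
          have hnz : (m : K) * (-(n : K)) ≠ 0 :=
            mul_ne_zero (Nat.cast_ne_zero.mpr (by omega)) (neg_ne_zero.mpr hnK0)
          exact (mul_eq_zero.mp Em).resolve_right hnz
        · intro p hp hne
          by_cases hcnd : p.2 = k ∧ m ≤ p.1
          · rw [if_pos hcnd]
            have hp1 : p.1 ≠ m := fun hc => hne (Prod.ext hc hcnd.1)
            have hz : b.repr w p = 0 := by
              have hpk : p = (p.1, k) := Prod.ext rfl hcnd.1
              rw [hpk]
              exact ih p.1 k (by omega) (by omega)
            rw [hz, zero_mul]
          · rw [if_neg hcnd]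
        · intro hm'
          rw [Finsupp.notMem_support_iff.mp hm', zero_mul, if_pos ⟨rfl, le_refl m⟩]
  have partA : ∀ m : ℕ, ∀ k : ℤ, 2 ≤ m → b.repr w (m, k) = 0 :=
    fun m k hm => vanish (N + 1) m k (by omega) hm
  have partBC : ∀ k : ℤ, b.repr w (1, k) * (-(n : K)) = -(if k = 0 then 1 else 0) := by
    intro k
    have Em := E 0 k
    rw [Finset.sum_eq_single ((1 : ℕ), (k : ℤ))] at Em
    · rw [if_pos (show ((k : ℤ) = k ∧ 0 + 1 ≤ 1) from ⟨rfl, le_refl 1⟩)] at Em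
      simpa using Em
    · intro p hp hne
      by_cases hcnd : p.2 = k ∧ 0 + 1 ≤ p.1
      · rw [if_pos hcnd]
        have hp1 : p.1 ≠ 1 := fun hc => hne (Prod.ext hc hcnd.1)
        have hz : b.repr w p = 0 := by
          have hpk : p = (p.1, k) := Prod.ext rfl hcnd.1
          rw [hpk]
          exact partA p.1 k (by omega)
        rw [hz, zero_mul]
      · rw [if_neg hcnd]
    · intro hm'
      rw [Finsupp.notMem_support_iff.mp hm', zero_mul, if_pos ⟨rfl, le_refl 1⟩]
  refine ⟨partA, ?_, ?_⟩
  · intro k hk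
    have := partBC k
    rw [if_neg hk, neg_zero] at this
    exact (mul_eq_zero.mp this).resolve_right (neg_ne_zero.mpr hnK0)
  · have := partBC 0
    rw [if_pos rfl] at this
    have h1 : b.repr w (1, 0) * (n : K) = 1 := by
      linear_combination -this
    calc b.repr w (1, 0) = b.repr w (1, 0) * ((n : K) * (n : K)) := by rw [hnK, mul_one]
      _ = (b.repr w (1, 0) * (n : K)) * (n : K) := by ring
      _ = (n : K) := by rw [h1, one_mul]

end B5

section B6
variable {K B : Type*} [Field K] [CharZero K] [Ring B] [Algebra K B]
set_option linter.unusedSectionVars false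

lemma finj : Function.Injective (fun k : ℤ => ((0 : ℕ), k)) := fun a a' ha => by simpa using ha

lemma repr_xsum (h : B) (x : Bˣ)
    (b : Module.Basis (ℕ × ℤ) K B) (hb : ∀ m : ℕ, ∀ k : ℤ, b (m, k) = h ^ m * ((x ^ k : Bˣ) : B))
    (p : ℤ →₀ K) :
    b.repr (p.sum fun i a => a • ((x ^ i : Bˣ) : B))
      = Finsupp.mapDomain (fun i : ℤ => ((0 : ℕ), i)) p := by
  have hb0 : ∀ i : ℤ, ((x ^ i : Bˣ) : B) = b (0, i) := fun i => by rw [hb]; simp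
  rw [map_finsuppSum, Finsupp.mapDomain]
  refine Finsupp.sum_congr fun i _ => ?_
  rw [hb0 i, map_smul, b.repr_self, Finsupp.smul_single, smul_eq_mul, mul_one]

lemma reconstruct (h : B) (x : Bˣ)
    (b : Module.Basis (ℕ × ℤ) K B) (hb : ∀ m : ℕ, ∀ k : ℤ, b (m, k) = h ^ m * ((x ^ k : Bˣ) : B))
    (w : B) (e : K)
    (hA : ∀ m : ℕ, ∀ k : ℤ, 2 ≤ m → b.repr w (m, k) = 0)
    (hB1 : ∀ k : ℤ, k ≠ 0 → b.repr w (1, k) = 0)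
    (hC : b.repr w (1, 0) = e) :
    w = e • h + (Finsupp.comapDomain (fun k : ℤ => ((0 : ℕ), k)) (b.repr w)
        (finj.injOn)).sum (fun i a => a • ((x ^ i : Bˣ) : B)) := by
  have hbh : b ((1 : ℕ), (0 : ℤ)) = h := by rw [hb]; simp
  apply b.repr.injective
  rw [map_add, map_smul, repr_xsum h x b hb, ← hbh, b.repr_self]
  ext q
  obtain ⟨m, k⟩ := q
  rw [Finsupp.add_apply, Finsupp.smul_apply, Finsupp.single_apply, smul_eq_mul]
  match m with
  | 0 =>
      rw [Finsupp.mapDomain_apply finj _ k, Finsupp.comapDomain_apply, if_neg (by simp), mul_zero,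
        zero_add]
  | 1 =>
      have hnr : ((1 : ℕ), k) ∉ Set.range (fun i : ℤ => ((0 : ℕ), i)) := by
        rintro ⟨i, hi⟩
        simp at hi
      rw [Finsupp.mapDomain_notin_range _ _ hnr, add_zero]
      rcases eq_or_ne k 0 with rfl | hk
      · rw [if_pos rfl, mul_one, hC]
      · rw [if_neg (by simp [hk.symm]), mul_zero, hB1 k hk]
  | (m + 2) =>
      have hnr : ((m + 2 : ℕ), k) ∉ Set.range (fun i : ℤ => ((0 : ℕ), i)) := by
        rintro ⟨i, hi⟩
        simp at hi
      rw [Finsupp.mapDomain_notin_range _ _ hnr, add_zero, if_neg (by simp), mul_zero,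
        hA (m + 2) k (by omega)]

lemma coeff_of_form (h : B) (x : Bˣ)
    (b : Module.Basis (ℕ × ℤ) K B) (hb : ∀ m : ℕ, ∀ k : ℤ, b (m, k) = h ^ m * ((x ^ k : Bˣ) : B))
    (w : B) (e : Bool) (p : ℤ →₀ K)
    (hf : w = (if e then -h else h) + p.sum fun i a => a • ((x ^ i : Bˣ) : B)) :
    ∀ k : ℤ, p k = b.repr w (0, k) := by
  intro k
  have hbh : b ((1 : ℕ), (0 : ℤ)) = h := by rw [hb]; simp
  have he : (if e then -h else h) = (if e then (-1 : K) else 1) • h := by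
    rcases e with _ | _ <;> simp
  rw [hf, he, map_add, map_smul, repr_xsum h x b hb, ← hbh, b.repr_self,
    Finsupp.add_apply, Finsupp.smul_apply,
    Finsupp.single_eq_of_ne' (show ((1 : ℕ), (0 : ℤ)) ≠ ((0 : ℕ), k) by simp),
    smul_zero, zero_add, Finsupp.mapDomain_apply finj _ k]

end B6


/- `B₁ = K[H][x, x^{−1}; σ]`, `σ(H) = H − 1`, is axiomatised as a `K`-algebra `B` with an
element `h`, a unit `x`, the commutation rule `x h = (h − 1) x`, and `K`-basis
`{h^m x^k : m ∈ ℕ, k ∈ ℤ}`. -/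
/-- Every `K`-algebra automorphism of `B₁` is of the form `ζ^ε ∘ t_λ ∘ s_p` for unique
`ε ∈ {0,1}`, `λ ∈ K^*`, `p ∈ K[x, x^{−1}]`, where `ζ : x ↦ x^{−1}, H ↦ −H`;
`t_λ : x ↦ λx, H ↦ H`; `s_p : x ↦ x, H ↦ H + p`; i.e. every automorphism sends
`x ↦ λ x^{±1}` and `H ↦ ±H + p(x)`, for unique data `(ε, λ, p)`. -/
theorem aut_of_B1 (K B : Type*) [Field K] [CharZero K] [Ring B] [Algebra K B]
    (h : B) (x : Bˣ) (hrel : (x : B) * h = (h - 1) * (x : B))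
    (b : Module.Basis (ℕ × ℤ) K B) (hb : ∀ m : ℕ, ∀ k : ℤ, b (m, k) = h ^ m * ((x ^ k : Bˣ) : B)) :
    ∀ σ : B ≃ₐ[K] B, ∃! t : Bool × Kˣ × (ℤ →₀ K),
      σ (x : B) = algebraMap K B t.2.1 * ((x ^ (if t.1 then (-1 : ℤ) else 1) : Bˣ) : B) ∧
      σ h = (if t.1 then -h else h) + t.2.2.sum fun i a => a • ((x ^ i : Bˣ) : B) := by
  intro σ
  classical
  have hnt : Nontrivial B := ⟨b (0, 0), 0, b.ne_zero (0, 0)⟩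
  have hx0 : ((x : Bˣ) : B) ≠ 0 := by
    intro hc
    have h1 := Units.mul_inv x
    rw [hc, zero_mul] at h1
    exact one_ne_zero h1.symm
  have hxinv0 : ((x⁻¹ : Bˣ) : B) ≠ 0 := by
    intro hc
    have h1 := Units.inv_mul x
    rw [hc, zero_mul] at h1
    exact one_ne_zero h1.symm
  have huv : σ (x : B) * σ ((x⁻¹ : Bˣ) : B) = 1 := by
    rw [← map_mul]
    simp
  have hu0 : σ (x : B) ≠ 0 := fun hc => hx0 (σ.injective (hc.trans (map_zero σ).symm))
  have hv0 : σ ((x⁻¹ : Bˣ) : B) ≠ 0 :=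
    fun hc => hxinv0 (σ.injective (hc.trans (map_zero σ).symm))
  obtain ⟨c, N, hc0, hσx⟩ := unit_is_monomial h x hrel b hb _ _ huv hu0 hv0
  have huv' : σ.symm (x : B) * σ.symm ((x⁻¹ : Bˣ) : B) = 1 := by
    rw [← map_mul]
    simp
  have hu0' : σ.symm (x : B) ≠ 0 :=
    fun hc => hx0 (σ.symm.injective (hc.trans (map_zero σ.symm).symm))
  have hv0' : σ.symm ((x⁻¹ : Bˣ) : B) ≠ 0 :=
    fun hc => hxinv0 (σ.symm.injective (hc.trans (map_zero σ.symm).symm))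
  obtain ⟨c', N', hc0', hσx'⟩ := unit_is_monomial h x hrel b hb _ _ huv' hu0' hv0'
  -- N * N' = 1
  set φ : B →* B := σ.toAlgHom.toRingHom.toMonoidHom with hφ
  set cunit : Bˣ := Units.map (algebraMap K B).toMonoidHom (Units.mk0 c hc0) with hcunit
  have hcu : (cunit : B) = algebraMap K B c := rfl
  have hUeq : Units.map φ x = cunit * x ^ N := by
    apply Units.ext
    rw [Units.val_mul, Units.coe_map, hcu, ← Algebra.smul_def]
    exact hσx
  have hcomm : Commute cunit (x ^ N) := Units.ext (by
    rw [Units.val_mul, Units.val_mul, hcu]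
    exact Algebra.commutes c _)
  have hzp : σ ((x ^ N' : Bˣ) : B) = ((cunit ^ N' : Bˣ) : B) * ((x ^ (N * N') : Bˣ) : B) := by
    have e1 : σ ((x ^ N' : Bˣ) : B) = ((Units.map φ (x ^ N') : Bˣ) : B) := by
      rw [Units.coe_map]
      rfl
    rw [e1, map_zpow, hUeq, hcomm.mul_zpow, Units.val_mul, ← zpow_mul]
  have hxeq : (x : B) = (c' * ((Units.mk0 c hc0 ^ N' : Kˣ) : K)) • ((x ^ (N * N') : Bˣ) : B) := by
    conv_lhs => rw [← σ.apply_symm_apply (x : B)]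
    rw [hσx', map_smul, hzp]
    have e2 : ((cunit ^ N' : Bˣ) : B) = algebraMap K B ((Units.mk0 c hc0 ^ N' : Kˣ) : K) := by
      rw [hcunit, ← map_zpow]
      rfl
    rw [e2, ← Algebra.smul_def, smul_smul]
  have hM : N * N' = 1 := by
    by_contra hMc
    have hx1 : ((x : Bˣ) : B) = b (0, 1) := by rw [hb]; simp
    have hxM : ((x ^ (N * N') : Bˣ) : B) = b (0, N * N') := by rw [hb]; simp
    have hcon := congrArg (fun z => b.repr z ((0 : ℕ), (1 : ℤ))) hxeq
    simp only [hx1, hxM, map_smul, b.repr_self, Finsupp.smul_apply, Finsupp.single_apply,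
      smul_eq_mul, Prod.mk.injEq, hMc] at hcon
    simp at hcon
  have hNpm : N = 1 ∨ N = -1 := Int.isUnit_iff.mp (IsUnit.of_mul_eq_one N' hM)
  -- the commutation relation for w = σ h
  have hrel2 : σ (x : B) * σ h = (σ h - 1) * σ (x : B) := by
    have hcon := congrArg σ hrel
    rw [map_mul, map_mul, map_sub, map_one] at hcon
    exact hcon
  have heq : ((x ^ N : Bˣ) : B) * σ h = (σ h - 1) * ((x ^ N : Bˣ) : B) := by
    rw [hσx, smul_mul_assoc, mul_smul_comm] at hrel2
    exact smul_right_injective B hc0 hrel2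
  obtain ⟨pA, pB, pC⟩ := shape_of_w h x hrel b hb N hNpm (σ h) heq
  have hNe : (if decide (N = -1) = true then (-1 : ℤ) else 1) = N := by
    rcases hNpm with rfl | rfl <;> simp
  set p : ℤ →₀ K :=
    Finsupp.comapDomain (fun k : ℤ => ((0 : ℕ), k)) (b.repr (σ h)) finj.injOn with hpdef
  refine ⟨(decide (N = -1), Units.mk0 c hc0, p), ⟨?_, ?_⟩, ?_⟩
  · show σ (x : B) = algebraMap K B ((Units.mk0 c hc0 : Kˣ) : K)
      * ((x ^ (if decide (N = -1) = true then (-1 : ℤ) else 1) : Bˣ) : B)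
    rw [hNe, hσx, Algebra.smul_def]
    rfl
  · show σ h = (if decide (N = -1) = true then -h else h) + p.sum fun i a => a • ((x ^ i : Bˣ) : B)
    have hrec := reconstruct h x b hb (σ h) ((N : K)) pA pB pC
    rw [hrec]
    congr 1
    rcases hNpm with rfl | rfl <;> simp
  · rintro ⟨e', lam', p'⟩ ⟨hcx, hch⟩
    have hbj : ∀ j : ℤ, ((x ^ j : Bˣ) : B) = b (0, j) := fun j => by rw [hb]; simp
    have h1 : σ (x : B) = (lam' : K) • b (0, (if e' then (-1 : ℤ) else 1)) := by
      rw [hcx, hbj, Algebra.smul_def]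
    have h2 : σ (x : B) = c • b (0, N) := by rw [hσx, hbj]
    have h3 : Finsupp.single ((0 : ℕ), (if e' then (-1 : ℤ) else 1)) ((lam' : K))
        = Finsupp.single ((0 : ℕ), N) c := by
      have := (h1.symm.trans h2)
      have h4 := congrArg b.repr this
      rw [map_smul, map_smul, b.repr_self, b.repr_self, Finsupp.smul_single,
        Finsupp.smul_single, smul_eq_mul, smul_eq_mul, mul_one, mul_one] at h4
      exact h4
    rcases Finsupp.single_eq_single_iff _ _ _ _ |>.mp h3 with ⟨hj, hlc⟩ | ⟨hl0, _⟩
    · have hjN : (if e' then (-1 : ℤ) else 1) = N := (Prod.mk.injEq _ _ _ _ ▸ hj).2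
      have he' : e' = decide (N = -1) := by
        rcases hNpm with rfl | rfl <;> cases e'
        · decide
        · exact absurd hjN (by decide)
        · exact absurd hjN (by decide)
        · decide
      have hl : lam' = Units.mk0 c hc0 := Units.ext hlc
      have hp' : p' = p := by
        ext k
        rw [coeff_of_form h x b hb (σ h) e' p' hch k, hpdef, Finsupp.comapDomain_apply]
      rw [he', hl, hp']
    · exact absurd hl0 lam'.ne_zero
end

section
/- Let B₁ = K[H][x, x^{−1}; σ] with σ(H) = H − 1. The group Aut_{K-alg}(B₁) has trivial centre. -/
set_option linter.unusedSectionVars false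
set_option maxHeartbeats 1600000

open Polynomial

section AuxB1

variable {K B : Type*} [Field K] [CharZero K] [Ring B] [Algebra K B]

theorem B1conjp {a y z : B} (hz : a * y = z * a) : ∀ n : ℕ, a * y ^ n = z ^ n * a := by
  intro n
  induction n with
  | zero => simp
  | succ n ih => rw [pow_succ, ← mul_assoc, ih, mul_assoc, hz, ← mul_assoc, ← pow_succ]

theorem B1subpow (y : B) (k : ℤ) (n : ℕ) :
    (y - (k : B)) ^ n
      = ∑ j ∈ Finset.range (n+1), ((n.choose j : K) * (-(k : K)) ^ (n - j)) • y ^ j := by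
  have hc : Commute y (-(k : B) : B) := ((Int.cast_commute k y).symm).neg_right
  rw [sub_eq_add_neg, hc.add_pow]
  refine Finset.sum_congr rfl fun j _ => ?_
  have e1 : (-(k : B)) = algebraMap K B (-(k : K)) := by push_cast; simp
  have e2 : ((n.choose j : ℕ) : B) = algebraMap K B (n.choose j : K) := by simp
  rw [e1, e2, ← map_pow, mul_assoc, ← map_mul, ← Algebra.commutes, Algebra.smul_def]
  congr 1
  rw [mul_comm]

theorem B1two_zpow_eq_one {k : ℤ} (hk : (2 : K) ^ k = 1) : k = 0 := by
  by_contra hne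
  rcases k with n | n
  · have h1 : (2 : K) ^ (n : ℕ) = 1 := by rw [← hk]; exact (zpow_natCast _ _).symm
    have h1' : ((2 ^ n : ℕ) : K) = ((1 : ℕ) : K) := by push_cast; simpa using h1
    have h2 : (2 : ℕ) ^ n = 1 := Nat.cast_injective h1'
    have hn : n ≠ 0 := fun hh => hne (by simp [hh])
    have := (pow_eq_one_iff.mp h2).resolve_right hn
    omega
  · have h1 : (2 : K) ^ (Int.negSucc n) = ((2 : K) ^ (n + 1))⁻¹ := zpow_negSucc _ _
    rw [h1, inv_eq_one] at hk
    have h1' : ((2 ^ (n + 1) : ℕ) : K) = ((1 : ℕ) : K) := by push_cast; simpa using hk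
    have h2 : (2 : ℕ) ^ (n + 1) = 1 := Nat.cast_injective h1'
    have := (pow_eq_one_iff.mp h2).resolve_right (Nat.succ_ne_zero n)
    omega

theorem B1two_zpow_eq_two {k : ℤ} (hk : (2 : K) ^ k = 2) : k = 1 := by
  have h2 : (2 : K) ≠ 0 := two_ne_zero
  have h3 : (2 : K) ^ (k - 1) = 1 := by
    rw [zpow_sub₀ h2, hk, zpow_one, div_self h2]
  have := B1two_zpow_eq_one (K := K) h3
  omega

theorem B1two_zpow_eq_half {k : ℤ} (hk : (2 : K) ^ k = (2 : K)⁻¹) : k = -1 := by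
  have h2 : (2 : K) ≠ 0 := two_ne_zero
  have h3 : (2 : K) ^ (k + 1) = 1 := by
    rw [zpow_add₀ h2, hk, zpow_one, inv_mul_cancel₀ h2]
  have := B1two_zpow_eq_one (K := K) h3
  omega

variable (h : B) (x : Bˣ) (hrel : (x : B) * h = (h - 1) * (x : B))
  (b : Module.Basis (ℕ × ℤ) K B) (hb : ∀ m : ℕ, ∀ k : ℤ, b (m, k) = h ^ m * ((x ^ k : Bˣ) : B))

include hrel in
theorem B1xinv_h : ((x⁻¹ : Bˣ) : B) * h = (h + 1) * ((x⁻¹ : Bˣ) : B) := by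
  have h2 : ((x⁻¹ : Bˣ) : B) * (h - 1) = h * ((x⁻¹ : Bˣ) : B) := by
    calc ((x⁻¹ : Bˣ) : B) * (h - 1)
        = ((x⁻¹ : Bˣ) : B) * ((h - 1) * (x : B)) * ((x⁻¹ : Bˣ) : B) := by
          rw [mul_assoc ((x⁻¹ : Bˣ) : B), mul_assoc, Units.mul_inv, mul_one]
      _ = ((x⁻¹ : Bˣ) : B) * ((x : B) * h) * ((x⁻¹ : Bˣ) : B) := by rw [hrel]
      _ = h * ((x⁻¹ : Bˣ) : B) := by simp [← mul_assoc, ← Units.val_mul]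
  rw [mul_sub, mul_one, sub_eq_iff_eq_add] at h2
  rw [h2, add_mul, one_mul]

include hrel in
theorem B1xzpow_h : ∀ k : ℤ, ((x ^ k : Bˣ) : B) * h = (h - (k : B)) * ((x ^ k : Bˣ) : B) := by
  intro k
  induction k using Int.induction_on with
  | zero => simp
  | succ n ih =>
    have e : (x ^ ((n : ℤ) + 1) : Bˣ) = x ^ (n : ℤ) * x := by rw [zpow_add_one]
    rw [e, Units.val_mul, mul_assoc, hrel, ← mul_assoc, mul_sub, mul_one, ih]
    push_cast
    noncomm_ring
  | pred n ih =>
    have e : (x ^ (-(n : ℤ) - 1) : Bˣ) = x ^ (-(n : ℤ)) * x⁻¹ := by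
      rw [← zpow_neg_one, ← zpow_add, sub_eq_add_neg]
    rw [e, Units.val_mul, mul_assoc, B1xinv_h h x hrel, ← mul_assoc, mul_add, mul_one, ih]
    push_cast
    noncomm_ring

include hrel hb in
theorem B1bmul (m n : ℕ) (k l : ℤ) :
    b (m, k) * b (n, l) = ∑ j ∈ Finset.range (n+1),
      ((n.choose j : K) * (-(k : K)) ^ (n - j)) • b (m + j, k + l) := by
  rw [hb, hb]
  calc h ^ m * ((x ^ k : Bˣ) : B) * (h ^ n * ((x ^ l : Bˣ) : B))
      = h ^ m * (((x ^ k : Bˣ) : B) * h ^ n) * ((x ^ l : Bˣ) : B) := by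
        rw [mul_assoc, mul_assoc, mul_assoc]
    _ = h ^ m * ((h - (k : B)) ^ n * ((x ^ k : Bˣ) : B)) * ((x ^ l : Bˣ) : B) := by
        rw [B1conjp (B1xzpow_h h x hrel k)]
    _ = h ^ m * (h - (k : B)) ^ n * ((x ^ (k + l) : Bˣ) : B) := by
        rw [zpow_add, Units.val_mul, ← mul_assoc, ← mul_assoc]
    _ = ∑ j ∈ Finset.range (n+1),
          ((n.choose j : K) * (-(k : K)) ^ (n - j)) • b (m + j, k + l) := by
        rw [B1subpow (K := K) h k n, Finset.mul_sum, Finset.sum_mul]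
        refine Finset.sum_congr rfl fun j _ => ?_
        rw [hb, mul_smul_comm, smul_mul_assoc, ← pow_add]

include hrel hb in
theorem B1mkHom (y : B) (u : ℤ → B) (hu0 : u 0 = 1)
    (huadd : ∀ k l : ℤ, u k * u l = u (k + l))
    (huy : ∀ k : ℤ, u k * y = (y - (k : B)) * u k) :
    ∃ F : B →ₐ[K] B, ∀ p : ℕ × ℤ, F (b p) = y ^ p.1 * u p.2 := by
  set L : B →ₗ[K] B := b.constr K (fun p : ℕ × ℤ => y ^ p.1 * u p.2) with hL
  have hLb : ∀ p : ℕ × ℤ, L (b p) = y ^ p.1 * u p.2 := fun p => b.constr_basis K _ p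
  have key : ∀ p q : ℕ × ℤ, L (b p * b q) = L (b p) * L (b q) := by
    rintro ⟨m, k⟩ ⟨n, l⟩
    rw [B1bmul h x hrel b hb, map_sum]
    simp only [map_smul, hLb]
    calc ∑ j ∈ Finset.range (n+1),
          ((n.choose j : K) * (-(k : K)) ^ (n - j)) • (y ^ (m + j) * u (k + l))
        = y ^ m * (y - (k : B)) ^ n * u (k + l) := by
          rw [B1subpow (K := K) y k n, Finset.mul_sum, Finset.sum_mul]
          refine (Finset.sum_congr rfl fun j _ => ?_).symm
          rw [mul_smul_comm, smul_mul_assoc, ← pow_add]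
      _ = y ^ m * u k * (y ^ n * u l) := by
          rw [mul_assoc, mul_assoc]
          congr 1
          rw [← huadd k l, ← mul_assoc, ← B1conjp (huy k) n, mul_assoc]
  have mul2 : ∀ (p : ℕ × ℤ) (c : B), L (b p * c) = L (b p) * L c := by
    intro p c
    have hext : L ∘ₗ LinearMap.mulLeft K (b p) = LinearMap.mulLeft K (L (b p)) ∘ₗ L :=
      b.ext fun q => by simpa using key p q
    simpa using LinearMap.congr_fun hext c
  have hmul : ∀ a c : B, L (a * c) = L a * L c := by
    intro a c
    have hext : L ∘ₗ LinearMap.mulRight K c = LinearMap.mulRight K (L c) ∘ₗ L :=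
      b.ext fun p => by simpa using mul2 p c
    simpa using LinearMap.congr_fun hext a
  have hone : L 1 = 1 := by
    have hb1 : (1 : B) = b (0, 0) := by rw [hb]; simp
    nth_rewrite 1 [hb1]
    rw [hLb]
    simp [hu0]
  exact ⟨AlgHom.ofLinearMap L hone hmul, hLb⟩

theorem B1mkEquiv (F G : B →ₐ[K] B) (h1 : ∀ p : ℕ × ℤ, F (G (b p)) = b p)
    (h2 : ∀ p : ℕ × ℤ, G (F (b p)) = b p) :
    ∃ E : B ≃ₐ[K] B, ∀ a : B, E a = F a := by
  refine ⟨AlgEquiv.ofAlgHom F G ?_ ?_, fun a => rfl⟩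
  · apply AlgHom.toLinearMap_injective
    exact b.ext fun p => by simpa using h1 p
  · apply AlgHom.toLinearMap_injective
    exact b.ext fun p => by simpa using h2 p

theorem B1diag_repr (E : B →ₗ[K] B) (c : ℕ × ℤ → K) (hE : ∀ p, E (b p) = c p • b p)
    (a : B) (q : ℕ × ℤ) : b.repr (E a) q = c q * b.repr a q := by
  have hext : (Finsupp.lapply q) ∘ₗ (b.repr : B →ₗ[K] (ℕ × ℤ) →₀ K) ∘ₗ E
      = c q • ((Finsupp.lapply q) ∘ₗ (b.repr : B →ₗ[K] (ℕ × ℤ) →₀ K)) := by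
    refine b.ext fun p => ?_
    simp only [LinearMap.comp_apply, LinearMap.smul_apply,
      Finsupp.lapply_apply, Finsupp.smul_apply]
    rw [hE p]
    rcases eq_or_ne p q with rfl | hpq
    · simp
    · simp [Finsupp.single_apply, hpq]
  have := LinearMap.congr_fun hext a
  simpa using this

include hb in
theorem B1hpow_eq (n : ℕ) : h ^ n = b (n, 0) := by rw [hb]; simp

include hb in
theorem B1aeval_inj (f : Polynomial K) (hf : Polynomial.aeval h f = 0) : f = 0 := by
  have li : LinearIndependent K (fun n : ℕ => b (n, 0)) :=
    b.linearIndependent.comp (fun n : ℕ => ((n, 0) : ℕ × ℤ)) (fun a a' ha => by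
      simpa using ha)
  have expand : Polynomial.aeval h f = ∑ n ∈ f.support, f.coeff n • b (n, 0) := by
    conv_lhs => rw [f.as_sum_support]
    rw [map_sum]
    refine Finset.sum_congr rfl fun n _ => ?_
    rw [Polynomial.aeval_monomial, ← Algebra.smul_def, B1hpow_eq h x b hb]
  rw [expand] at hf
  have hcoeff := linearIndependent_iff'.mp li f.support f.coeff hf
  have hsupp : f.support = ∅ :=
    Finset.eq_empty_of_forall_notMem fun n hn => (Polynomial.mem_support_iff.mp hn) (hcoeff n hn)
  exact Polynomial.support_eq_empty.mp hsupp

include hb in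
theorem B1aeval_inj' (f g : Polynomial K) (hf : Polynomial.aeval h f = Polynomial.aeval h g) :
    f = g := by
  have : f - g = 0 := B1aeval_inj h x b hb _ (by rw [map_sub, hf, sub_self])
  exact sub_eq_zero.mp this

include hb in
theorem B1recon (a : B) (k0 : ℤ) (ha : ∀ q : ℕ × ℤ, q.2 ≠ k0 → b.repr a q = 0) :
    ∃ f : Polynomial K, a = Polynomial.aeval h f * ((x ^ k0 : Bˣ) : B) := by
  refine ⟨∑ p ∈ (b.repr a).support, Polynomial.C (b.repr a p) * Polynomial.X ^ p.1, ?_⟩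
  rw [map_sum, Finset.sum_mul]
  have hterm : ∀ p ∈ (b.repr a).support,
      Polynomial.aeval h (Polynomial.C (b.repr a p) * Polynomial.X ^ p.1) * ((x ^ k0 : Bˣ) : B)
      = b.repr a p • b p := by
    intro p hp
    have hp2 : p.2 = k0 := by
      by_contra hne
      exact (Finsupp.mem_support_iff.mp hp) (ha p hne)
    rw [map_mul, Polynomial.aeval_C, Polynomial.aeval_X_pow, ← Algebra.smul_def,
      smul_mul_assoc, ← hp2, ← hb]
  have hsum : ∑ p ∈ (b.repr a).support, b.repr a p • b p = a := by
    conv_rhs => rw [← b.linearCombination_repr a]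
    rw [Finsupp.linearCombination_apply, Finsupp.sum]
  rw [Finset.sum_congr rfl hterm, hsum]

include hrel in
theorem B1conj_aeval (g : Polynomial K) :
    (x : B) * Polynomial.aeval h g = Polynomial.aeval (h - 1) g * (x : B) := by
  induction g using Polynomial.induction_on' with
  | add p q hp hq => rw [map_add, map_add, mul_add, add_mul, hp, hq]
  | monomial n c =>
    rw [Polynomial.aeval_monomial, Polynomial.aeval_monomial]
    calc (x : B) * ((algebraMap K B) c * h ^ n)
        = algebraMap K B c * ((x : B) * h ^ n) := by
          rw [← mul_assoc, ← Algebra.commutes c ((x : B)), mul_assoc]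
      _ = algebraMap K B c * ((h - 1) ^ n * (x : B)) := by rw [B1conjp hrel n]
      _ = algebraMap K B c * (h - 1) ^ n * (x : B) := by rw [mul_assoc]

include hrel hb in
theorem B1mkShift (z : B) (hz : ∀ k : ℤ, ((x ^ k : Bˣ) : B) * z = z * ((x ^ k : Bˣ) : B))
    (hz2 : z = (x : B) ∨ ∃ c : K, z = algebraMap K B c) :
    ∃ S : B ≃ₐ[K] B, S h = h + z := by
  have hb10 : b (1, 0) = h := by rw [hb]; simp
  have hb0k : ∀ k : ℤ, b (0, k) = ((x ^ k : Bˣ) : B) := fun k => by rw [hb]; simp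
  have mk : ∀ w : B, (∀ k : ℤ, ((x ^ k : Bˣ) : B) * w = w * ((x ^ k : Bˣ) : B)) →
      ∃ F : B →ₐ[K] B, ∀ p : ℕ × ℤ, F (b p) = (h + w) ^ p.1 * ((x ^ p.2 : Bˣ) : B) := by
    intro w hw
    refine B1mkHom h x hrel b hb (h + w) (fun k => ((x ^ k : Bˣ) : B)) (by simp) ?_ ?_
    · intro k l; rw [← Units.val_mul, ← zpow_add]
    · intro k
      rw [mul_add, B1xzpow_h h x hrel k, hw k]
      noncomm_ring
  obtain ⟨F, hF⟩ := mk z hz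
  obtain ⟨G, hG⟩ := mk (-z) (fun k => by rw [mul_neg, hz k, neg_mul])
  have hFh : F h = h + z := by
    have := hF (1, 0)
    rw [hb10] at this
    simpa using this
  have hGh : G h = h - z := by
    have := hG (1, 0)
    rw [hb10] at this
    simp only [pow_one, zpow_zero] at this
    rw [this]
    simp [sub_eq_add_neg]
  have hFx : ∀ k : ℤ, F ((x ^ k : Bˣ) : B) = ((x ^ k : Bˣ) : B) := by
    intro k
    have := hF (0, k)
    rw [hb0k k] at this
    simpa using this
  have hGx : ∀ k : ℤ, G ((x ^ k : Bˣ) : B) = ((x ^ k : Bˣ) : B) := by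
    intro k
    have := hG (0, k)
    rw [hb0k k] at this
    simpa using this
  have hFz : F z = z := by
    rcases hz2 with hzx | ⟨c, hzc⟩
    · rw [hzx]
      have := hFx 1
      simpa using this
    · rw [hzc]; exact F.commutes c
  have hGz : G z = z := by
    rcases hz2 with hzx | ⟨c, hzc⟩
    · rw [hzx]
      have := hGx 1
      simpa using this
    · rw [hzc]; exact G.commutes c
  have h1 : ∀ p : ℕ × ℤ, F (G (b p)) = b p := by
    rintro ⟨m, k⟩
    rw [hG (m, k), map_mul, map_pow, map_add, map_neg, hFh, hFz, hFx, hb]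
    congr 2
    abel
  have h2 : ∀ p : ℕ × ℤ, G (F (b p)) = b p := by
    rintro ⟨m, k⟩
    rw [hF (m, k), map_mul, map_pow, map_add, hGh, hGz, hGx, hb]
    congr 2
    abel
  obtain ⟨S, hS⟩ := B1mkEquiv b F G h1 h2
  exact ⟨S, by rw [hS, hFh]⟩

end AuxB1

/- `B₁ = K[H][x, x^{−1}; σ]`, `σ(H) = H − 1`, is axiomatised as a `K`-algebra `B` with an
element `h`, a unit `x`, the commutation rule `x h = (h − 1) x`, and `K`-basis
`{h^m x^k : m ∈ ℕ, k ∈ ℤ}`. -/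
/-- The group `Aut_{K-alg}(B₁)` has trivial centre. -/
theorem center_aut_B1_trivial (K B : Type*) [Field K] [CharZero K] [Ring B] [Algebra K B]
    (h : B) (x : Bˣ) (hrel : (x : B) * h = (h - 1) * (x : B))
    (b : Module.Basis (ℕ × ℤ) K B) (hb : ∀ m : ℕ, ∀ k : ℤ, b (m, k) = h ^ m * ((x ^ k : Bˣ) : B)) :
    ∀ σ : B ≃ₐ[K] B, (∀ τ : B ≃ₐ[K] B, σ * τ = τ * σ) → σ = 1 := by
  intro σ hcomm
  have hc : ∀ (τ : B ≃ₐ[K] B) (a : B), σ (τ a) = τ (σ a) := by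
    intro τ a
    have := congrArg (fun e : B ≃ₐ[K] B => e a) (hcomm τ)
    simpa [AlgEquiv.mul_apply] using this
  have hb00 : b (0, 0) = (1 : B) := by rw [hb]; simp
  have hb10 : b (1, 0) = h := by rw [hb]; simp
  have hb0k : ∀ k : ℤ, b (0, k) = ((x ^ k : Bˣ) : B) := fun k => by rw [hb]; simp
  haveI : Nontrivial B := nontrivial_of_ne (1 : B) 0 (hb00 ▸ b.ne_zero (0, 0))
  have h2K : (2 : K) ≠ 0 := two_ne_zero
  -- the automorphism T = t₂ : h ↦ h, x ↦ 2x
  obtain ⟨FT, hFT⟩ := B1mkHom h x hrel b hb h (fun k => (2 : K) ^ k • ((x ^ k : Bˣ) : B))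
    (by simp)
    (fun k l => by
      rw [smul_mul_smul_comm, ← Units.val_mul, ← zpow_add, ← zpow_add₀ h2K])
    (fun k => by rw [smul_mul_assoc, B1xzpow_h h x hrel k, mul_smul_comm])
  obtain ⟨GT, hGT⟩ := B1mkHom h x hrel b hb h (fun k => ((2 : K)⁻¹) ^ k • ((x ^ k : Bˣ) : B))
    (by simp)
    (fun k l => by
      rw [smul_mul_smul_comm, ← Units.val_mul, ← zpow_add, ← zpow_add₀ (inv_ne_zero h2K)])
    (fun k => by rw [smul_mul_assoc, B1xzpow_h h x hrel k, mul_smul_comm])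
  have hFTb : ∀ p : ℕ × ℤ, FT (b p) = (2 : K) ^ p.2 • b p := by
    intro p
    rw [hFT p, mul_smul_comm, ← hb p.1 p.2]
  have hGTb : ∀ p : ℕ × ℤ, GT (b p) = ((2 : K)⁻¹) ^ p.2 • b p := by
    intro p
    rw [hGT p, mul_smul_comm, ← hb p.1 p.2]
  have hTinv : ∀ p : ℕ × ℤ, ((2 : K)⁻¹) ^ p.2 • ((2 : K) ^ p.2 • b p) = b p := by
    intro p
    rw [smul_smul, ← mul_zpow, inv_mul_cancel₀ h2K, one_zpow, one_smul]
  have hTinv' : ∀ p : ℕ × ℤ, (2 : K) ^ p.2 • (((2 : K)⁻¹) ^ p.2 • b p) = b p := by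
    intro p
    rw [smul_smul, ← mul_zpow, mul_inv_cancel₀ h2K, one_zpow, one_smul]
  obtain ⟨T, hT⟩ := B1mkEquiv b FT GT
    (fun p => by rw [hGTb p, map_smul, hFTb p, hTinv p])
    (fun p => by rw [hFTb p, map_smul, hGTb p, hTinv' p])
  have hTb : ∀ p : ℕ × ℤ, T (b p) = (2 : K) ^ p.2 • b p := fun p => by rw [hT, hFTb p]
  have hTrepr : ∀ (a : B) (q : ℕ × ℤ), b.repr (T a) q = (2 : K) ^ q.2 * b.repr a q := by
    intro a q
    exact B1diag_repr b T.toLinearMap (fun p => (2 : K) ^ p.2)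
      (fun p => by simpa using hTb p) a q
  have hTh : T h = h := by
    rw [← hb10, hTb]
    simp
  have hTx : T (x : B) = (2 : K) • (x : B) := by
    have := hTb (0, 1)
    rw [hb0k 1] at this
    simpa using this
  have hTxi : T ((x⁻¹ : Bˣ) : B) = (2 : K)⁻¹ • ((x⁻¹ : Bˣ) : B) := by
    have := hTb (0, -1)
    rw [hb0k (-1)] at this
    simpa using this
  -- support constraints for σ h, σ x, σ x⁻¹
  have cancel : ∀ (r : K) (v : B), T v = r • v →
      ∀ q : ℕ × ℤ, (2 : K) ^ q.2 ≠ r → b.repr v q = 0 := by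
    intro r v hv q hne
    have h2 := hTrepr v q
    rw [hv, map_smul, Finsupp.smul_apply, smul_eq_mul] at h2
    by_contra hc0
    exact hne (mul_right_cancel₀ hc0 h2).symm
  have supp_h : ∀ q : ℕ × ℤ, q.2 ≠ 0 → b.repr (σ h) q = 0 := by
    intro q hq
    refine cancel 1 (σ h) ?_ q (fun he => hq (B1two_zpow_eq_one (K := K) he))
    rw [← hc T h, hTh, one_smul]
  have supp_x : ∀ q : ℕ × ℤ, q.2 ≠ 1 → b.repr (σ (x : B)) q = 0 := by
    intro q hq
    refine cancel 2 (σ (x : B)) ?_ q (fun he => hq (B1two_zpow_eq_two (K := K) he))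
    rw [← hc T (x : B), hTx, map_smul]
  have supp_xi : ∀ q : ℕ × ℤ, q.2 ≠ -1 → b.repr (σ ((x⁻¹ : Bˣ) : B)) q = 0 := by
    intro q hq
    refine cancel ((2:K)⁻¹) (σ ((x⁻¹ : Bˣ) : B)) ?_ q
      (fun he => hq (B1two_zpow_eq_half (K := K) he))
    rw [← hc T ((x⁻¹ : Bˣ) : B), hTxi, map_smul]
  -- the automorphism Z = ζ : h ↦ -h, x ↦ x⁻¹
  obtain ⟨FZ, hFZ⟩ := B1mkHom h x hrel b hb (-h) (fun k => ((x ^ (-k) : Bˣ) : B))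
    (by simp)
    (fun k l => by
      show ((x ^ (-k) : Bˣ) : B) * ((x ^ (-l) : Bˣ) : B) = ((x ^ (-(k+l)) : Bˣ) : B)
      rw [← Units.val_mul, ← zpow_add, neg_add])
    (fun k => by
      rw [mul_neg, B1xzpow_h h x hrel (-k)]
      push_cast
      noncomm_ring)
  have hFZh : FZ h = -h := by
    have := hFZ (1, 0)
    rw [hb10] at this
    simpa using this
  have hFZx : ∀ k : ℤ, FZ ((x ^ k : Bˣ) : B) = ((x ^ (-k) : Bˣ) : B) := by
    intro k
    have := hFZ (0, k)
    rw [hb0k k] at this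
    simpa using this
  obtain ⟨Z, hZ⟩ := B1mkEquiv b FZ FZ
    (fun p => by
      rw [hFZ p, map_mul, map_pow, map_neg, hFZh, hFZx, neg_neg, neg_neg, ← hb p.1 p.2])
    (fun p => by
      rw [hFZ p, map_mul, map_pow, map_neg, hFZh, hFZx, neg_neg, neg_neg, ← hb p.1 p.2])
  have hZh : Z h = -h := by rw [hZ, hFZh]
  -- reconstruction of σ h, σ x, σ x⁻¹
  obtain ⟨qh, hqh⟩ := B1recon h x b hb (σ h) 0 supp_h
  rw [zpow_zero, Units.val_one, mul_one] at hqh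
  obtain ⟨fx, hfx⟩ := B1recon h x b hb (σ (x : B)) 1 supp_x
  rw [zpow_one] at hfx
  obtain ⟨gx, hgx⟩ := B1recon h x b hb (σ ((x⁻¹ : Bˣ) : B)) (-1) supp_xi
  rw [zpow_neg_one] at hgx
  -- shifts by constants: qh.comp (X + C c) = qh + C c
  have keyc : ∀ c : K, qh.comp (Polynomial.X + Polynomial.C c) = qh + Polynomial.C c := by
    intro c
    obtain ⟨S, hSh⟩ := B1mkShift h x hrel b hb (algebraMap K B c)
      (fun k => (Algebra.commutes c _).symm) (Or.inr ⟨c, rfl⟩)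
    have hS2 : S (σ h) = Polynomial.aeval h (qh.comp (Polynomial.X + Polynomial.C c)) := by
      calc S (σ h) = S (Polynomial.aeval h qh) := by rw [hqh]
        _ = Polynomial.aeval (S h) qh :=
            (Polynomial.aeval_algHom_apply (S : B →ₐ[K] B) h qh).symm
        _ = Polynomial.aeval (Polynomial.aeval h (Polynomial.X + Polynomial.C c)) qh := by
            rw [map_add, Polynomial.aeval_X, Polynomial.aeval_C, hSh]
        _ = Polynomial.aeval h (qh.comp (Polynomial.X + Polynomial.C c)) := by
            rw [Polynomial.aeval_comp]
    have hS1 : σ (S h) = Polynomial.aeval h (qh + Polynomial.C c) := by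
      rw [hSh, map_add, AlgEquiv.commutes, hqh, map_add, Polynomial.aeval_C]
    refine B1aeval_inj' h x b hb _ _ ?_
    rw [← hS2, ← hS1]
    exact (hc S h).symm
  have heval : ∀ c : K, qh.eval c = qh.eval 0 + c := by
    intro c
    have h1 := congrArg (Polynomial.eval 0) (keyc c)
    rw [Polynomial.eval_comp] at h1
    simpa using h1
  have hqh' : qh = Polynomial.X + Polynomial.C (qh.eval 0) := by
    refine Polynomial.funext fun z => ?_
    rw [heval z]
    simp [add_comm]
  have hσh : σ h = h + algebraMap K B (qh.eval 0) := by
    rw [hqh, hqh', map_add, Polynomial.aeval_X, Polynomial.aeval_C]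
    simp
  -- ζ forces the constant to vanish
  have he0 : qh.eval 0 = 0 := by
    have h1 := hc Z h
    rw [hZh, map_neg, hσh, map_add, hZh, AlgEquiv.commutes] at h1
    -- h1 : -(h + A e) = -h + A e
    have h2 : -algebraMap K B (qh.eval 0) = algebraMap K B (qh.eval 0) := by
      have h3 : -h + -algebraMap K B (qh.eval 0) = -h + algebraMap K B (qh.eval 0) := by
        rw [← neg_add, h1]
      exact add_left_cancel h3
    have h4 : algebraMap K B (qh.eval 0 + qh.eval 0) = 0 := by
      rw [map_add]
      nth_rewrite 1 [← h2]
      rw [neg_add_cancel]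
    have h5 : qh.eval 0 + qh.eval 0 = 0 := by
      apply (algebraMap K B).injective
      rw [h4, map_zero]
    exact add_self_eq_zero.mp h5
  have hσh' : σ h = h := by rw [hσh, he0, map_zero, add_zero]
  -- σ x is a scalar multiple of x
  have hxx : (x : B) * ((x⁻¹ : Bˣ) : B) = 1 := x.mul_inv
  have hcg : Polynomial.aeval h (gx.comp (Polynomial.X - Polynomial.C 1))
      = Polynomial.aeval (h - 1) gx := by
    rw [Polynomial.aeval_comp, map_sub, Polynomial.aeval_X, Polynomial.aeval_C, map_one]
  have h1 : σ ((x : B) * ((x⁻¹ : Bˣ) : B)) = 1 := by rw [hxx, map_one]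
  rw [map_mul, hfx, hgx] at h1
  have h2 : (Polynomial.aeval h fx * (x : B)) * (Polynomial.aeval h gx * ((x⁻¹ : Bˣ) : B))
      = Polynomial.aeval h (fx * gx.comp (Polynomial.X - Polynomial.C 1)) := by
    rw [map_mul, hcg]
    calc (Polynomial.aeval h fx * (x : B)) * (Polynomial.aeval h gx * ((x⁻¹ : Bˣ) : B))
        = Polynomial.aeval h fx * ((x : B) * Polynomial.aeval h gx) * ((x⁻¹ : Bˣ) : B) := by
          noncomm_ring
      _ = Polynomial.aeval h fx * (Polynomial.aeval (h - 1) gx * (x : B)) * ((x⁻¹ : Bˣ) : B) := by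
          rw [B1conj_aeval h x hrel gx]
      _ = Polynomial.aeval h fx * Polynomial.aeval (h - 1) gx * ((x : B) * ((x⁻¹ : Bˣ) : B)) := by
          noncomm_ring
      _ = Polynomial.aeval h fx * Polynomial.aeval (h - 1) gx := by rw [hxx, mul_one]
  have h3 : Polynomial.aeval h (fx * gx.comp (Polynomial.X - Polynomial.C 1)) = 1 :=
    h2.symm.trans h1
  have hprod : fx * gx.comp (Polynomial.X - Polynomial.C 1) = 1 :=
    B1aeval_inj' h x b hb _ 1 (by rw [h3, map_one])
  obtain ⟨lam, hlamU, hlamC⟩ := Polynomial.isUnit_iff.mp (IsUnit.of_mul_eq_one _ hprod)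
  have hσx : σ (x : B) = algebraMap K B lam * (x : B) := by
    rw [hfx, ← hlamC, Polynomial.aeval_C]
  -- the shift by x forces lam = 1
  have hzx : ∀ k : ℤ, ((x ^ k : Bˣ) : B) * (x : B) = (x : B) * ((x ^ k : Bˣ) : B) := by
    intro k
    have e : (x ^ k * x : Bˣ) = (x * x ^ k : Bˣ) := by
      rw [← zpow_add_one, ← zpow_one_add, add_comm]
    calc ((x ^ k : Bˣ) : B) * (x : B) = ((x ^ k * x : Bˣ) : B) := (Units.val_mul _ _).symm
      _ = ((x * x ^ k : Bˣ) : B) := by rw [e]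
      _ = (x : B) * ((x ^ k : Bˣ) : B) := Units.val_mul _ _
  obtain ⟨Sx, hSxh⟩ := B1mkShift h x hrel b hb (x : B) hzx (Or.inl rfl)
  have hl1 : h + algebraMap K B lam * (x : B) = h + (x : B) := by
    have h1 := hc Sx h
    rw [hSxh, map_add, hσh', hσx, hSxh] at h1
    exact h1
  have hlam1 : lam = 1 := by
    have h2 := add_left_cancel hl1
    have h3 : algebraMap K B lam * ((x : B) * ((x⁻¹ : Bˣ) : B))
        = (x : B) * ((x⁻¹ : Bˣ) : B) := by rw [← mul_assoc, h2]
    rw [hxx, mul_one] at h3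
    apply (algebraMap K B).injective
    rw [h3, map_one]
  have hσx' : σ (x : B) = (x : B) := by rw [hσx, hlam1, map_one, one_mul]
  have hσxi : σ ((x⁻¹ : Bˣ) : B) = ((x⁻¹ : Bˣ) : B) := by
    have h1 : σ ((x : B) * ((x⁻¹ : Bˣ) : B)) = 1 := by rw [hxx, map_one]
    rw [map_mul, hσx'] at h1
    have h2 : ((x⁻¹ : Bˣ) : B) * ((x : B) * σ ((x⁻¹ : Bˣ) : B)) = ((x⁻¹ : Bˣ) : B) := by
      rw [h1, mul_one]
    rw [← mul_assoc, x.inv_mul, one_mul] at h2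
    exact h2
  have hσxk : ∀ k : ℤ, σ ((x ^ k : Bˣ) : B) = ((x ^ k : Bˣ) : B) := by
    intro k
    induction k using Int.induction_on with
    | zero => simp
    | succ n ih =>
      have e : (x ^ ((n : ℤ) + 1) : Bˣ) = x ^ (n : ℤ) * x := by rw [zpow_add_one]
      rw [e, Units.val_mul, map_mul, ih, hσx']
    | pred n ih =>
      have e : (x ^ (-(n : ℤ) - 1) : Bˣ) = x ^ (-(n : ℤ)) * x⁻¹ := by
        rw [← zpow_neg_one, ← zpow_add, sub_eq_add_neg]
      rw [e, Units.val_mul, map_mul, ih, hσxi]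
  have hσb : ∀ p : ℕ × ℤ, σ (b p) = b p := by
    rintro ⟨m, k⟩
    rw [hb, map_mul, map_pow, hσh', hσxk]
  have hlin : σ.toLinearMap = (AlgEquiv.refl (R := K) (A₁ := B)).toLinearMap :=
    b.ext fun p => by simpa using hσb p
  refine AlgEquiv.ext fun a => ?_
  have hfin := LinearMap.congr_fun hlin a
  simpa using hfin
end

section
/- Let G = ⟨ζ⟩ ⋉ T¹ ⋉ Sh₁ be the automorphism group of B₁ (notation as above). Then the commutator subgroup [G,G] equals {t_{λ²} : λ ∈ K^*} ⋉ Sh₁, and G/[G,G] ≅ ℤ/2 × K^*/(K^*)². -/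
open Polynomial
open Module
open scoped commutatorElement

/-- Bundled data of the generalized Weyl algebra `B₁`. -/
structure GWA (K B : Type*) [Field K] [CharZero K] [Ring B] [Algebra K B] where
  h : B
  x : Bˣ
  hrel : (x : B) * h = (h - 1) * (x : B)
  b : Basis (ℕ × ℤ) K B
  hb : ∀ m : ℕ, ∀ k : ℤ, b (m, k) = h ^ m * ((x ^ k : Bˣ) : B)

namespace GWA

variable {K B : Type*} [Field K] [CharZero K] [Ring B] [Algebra K B] (S : GWA K B)

/-- `x^k` as an element of `B`. -/
noncomputable def xp (k : ℤ) : B := ((S.x ^ k : Bˣ) : B)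

lemma xp_zero : S.xp 0 = 1 := by simp [xp]

lemma xp_one : S.xp 1 = (S.x : B) := by simp [xp]

lemma xp_mul (k l : ℤ) : S.xp k * S.xp l = S.xp (k + l) := by
  simp [xp, ← Units.val_mul, ← zpow_add]

lemma xp_comm (k l : ℤ) : S.xp k * S.xp l = S.xp l * S.xp k := by
  rw [xp_mul, xp_mul, add_comm]

lemma b_eq (m : ℕ) (k : ℤ) : S.b (m, k) = S.h ^ m * S.xp k := S.hb m k

lemma h_mul_xpneg : S.h * S.xp (-1) = S.xp (-1) * (S.h - 1) := by
  have key := congrArg (fun z => S.xp (-1) * z * S.xp (-1)) S.hrel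
  simp only [← S.xp_one] at key
  rw [← mul_assoc, S.xp_mul, ← mul_assoc] at key
  rw [mul_assoc (S.xp (-1) * (S.h - 1)), S.xp_mul] at key
  simpa [xp_zero, mul_assoc] using key

lemma xpneg_mul_h : S.xp (-1) * S.h = (S.h + 1) * S.xp (-1) := by
  have : S.xp (-1) * S.h = S.xp (-1) * (S.h - 1) + S.xp (-1) := by
    rw [mul_sub, mul_one, sub_add_cancel]
  rw [this, ← S.h_mul_xpneg, add_mul, one_mul]

lemma xp_mul_h (k : ℤ) : S.xp k * S.h = (S.h - (k : B)) * S.xp k := by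
  induction k using Int.induction_on with
  | zero => simp [xp_zero]
  | succ n ih =>
      have e1 : S.xp (n + 1) = S.xp n * S.xp 1 := by rw [xp_mul]
      rw [e1, mul_assoc, xp_one, S.hrel, ← mul_assoc]
      have e2 : S.xp (n:ℤ) * (S.h - 1) = (S.h - ((n:ℤ) : B) - 1) * S.xp n := by
        rw [mul_sub, mul_one, ih]; noncomm_ring
      rw [e2, mul_assoc, ← xp_one, xp_mul]
      push_cast
      rw [sub_sub]
  | pred n ih =>
      have e1 : S.xp (-(n:ℤ) - 1) = S.xp (-n) * S.xp (-1) := by rw [xp_mul]; ring_nf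
      rw [e1, mul_assoc, xpneg_mul_h, ← mul_assoc]
      have e2 : S.xp (-(n:ℤ)) * (S.h + 1) = (S.h - ((-(n:ℤ)):B) + 1) * S.xp (-n) := by
        rw [mul_add, mul_one, ih, add_mul, one_mul]
        push_cast
        abel
      rw [e2, mul_assoc, xp_mul]
      have e3 : S.h - ((-(n:ℤ)):B) + 1 = S.h - ((-(n:ℤ) - 1 : ℤ) : B) := by
        push_cast; abel
      rw [e3]

lemma xp_mul_hpow (k : ℤ) (m : ℕ) : S.xp k * S.h ^ m = (S.h - (k : B)) ^ m * S.xp k := by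
  induction m with
  | zero => simp
  | succ m ih =>
      rw [pow_succ, ← mul_assoc, ih, mul_assoc, xp_mul_h, ← mul_assoc, ← pow_succ]

omit [CharZero K] in
lemma intCast_eq (k : ℤ) : ((k : B)) = algebraMap K B ((k : K)) := by
  rw [map_intCast]

lemma xp_mul_aeval (k : ℤ) (q : K[X]) :
    S.xp k * (aeval S.h q) = aeval (S.h - (k : B)) q * S.xp k := by
  induction q using Polynomial.induction_on' with
  | add p q hp hq => rw [map_add, map_add, mul_add, add_mul, hp, hq]
  | monomial m a =>
      rw [aeval_monomial, aeval_monomial]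
      rw [← mul_assoc, ← Algebra.commutes a (S.xp k), mul_assoc, xp_mul_hpow, ← mul_assoc]

lemma b_mul_b (m : ℕ) (k : ℤ) (n : ℕ) (l : ℤ) :
    S.b (m, k) * S.b (n, l) =
      aeval S.h ((X : K[X]) ^ m * (X - C (k : K)) ^ n) * S.xp (k + l) := by
  rw [b_eq, b_eq, map_mul, aeval_X_pow, map_pow, map_sub, aeval_X, aeval_C]
  rw [← intCast_eq (K := K) (B := B) k, mul_assoc, ← mul_assoc (S.xp k), S.xp_mul_hpow,
    mul_assoc, S.xp_mul, ← mul_assoc]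

lemma aeval_mul_xp_eq_sum (q : K[X]) (j : ℤ) :
    aeval S.h q * S.xp j = q.sum fun m a => a • S.b (m, j) := by
  rw [aeval_def, eval₂_eq_sum, Polynomial.sum_def, Polynomial.sum_def, Finset.sum_mul]
  refine Finset.sum_congr rfl fun m _ => ?_
  rw [b_eq, Algebra.smul_def, mul_assoc, ← mul_assoc]

lemma repr_aeval_mul_xp (q : K[X]) (j : ℤ) (m : ℕ) (t : ℤ) :
    S.b.repr (aeval S.h q * S.xp j) (m, t) = if t = j then q.coeff m else 0 := by
  rw [aeval_mul_xp_eq_sum, Polynomial.sum_def, map_sum, Finsupp.finset_sum_apply]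
  simp only [map_smul, Basis.repr_self, Finsupp.smul_single, smul_eq_mul, mul_one,
    Finsupp.single_apply]
  by_cases ht : t = j
  · subst ht
    have he : ∀ e ∈ q.support,
        (if ((e : ℕ), t) = (m, t) then q.coeff e else 0) = if e = m then q.coeff e else 0 := by
      intro e _
      simp [Prod.ext_iff]
    rw [Finset.sum_congr rfl he, Finset.sum_ite_eq' q.support m fun e => q.coeff e]
    by_cases hm : m ∈ q.support
    · simp [hm]
    · simp [hm, Polynomial.notMem_support_iff.mp hm]
  · rw [if_neg ht]
    refine Finset.sum_eq_zero fun e _ => ?_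
    exact if_neg fun hp => ht ((Prod.ext_iff.mp hp).2).symm

lemma repr_b_mul_b (p q : ℕ × ℤ) (M : ℕ) (J : ℤ) :
    S.b.repr (S.b p * S.b q) (M, J) =
      if p.2 + q.2 = J then ((X : K[X]) ^ p.1 * (X - C ((p.2 : K))) ^ q.1).coeff M else 0 := by
  rw [show S.b p = S.b (p.1, p.2) from rfl, show S.b q = S.b (q.1, q.2) from rfl,
    S.b_mul_b, repr_aeval_mul_xp]
  by_cases hj : p.2 + q.2 = J
  · simp [hj]
  · rw [if_neg (fun hj' => hj hj'.symm), if_neg hj]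

lemma repr_mul_apply (u v : B) (M : ℕ) (J : ℤ) :
    S.b.repr (u * v) (M, J) =
      ∑ p ∈ (S.b.repr u).support, ∑ q ∈ (S.b.repr v).support,
        (if p.2 + q.2 = J then
          S.b.repr u p * S.b.repr v q * ((X : K[X]) ^ p.1 * (X - C ((p.2 : K))) ^ q.1).coeff M
        else 0) := by
  conv_lhs => rw [← Basis.linearCombination_repr (b := S.b) (x := u), ← Basis.linearCombination_repr (b := S.b) (x := v)]
  rw [Finsupp.linearCombination_apply, Finsupp.linearCombination_apply, Finsupp.sum, Finsupp.sum, Finset.sum_mul]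
  simp_rw [Finset.mul_sum]
  rw [map_sum, Finsupp.finset_sum_apply]
  refine Finset.sum_congr rfl fun p _ => ?_
  rw [map_sum, Finsupp.finset_sum_apply]
  refine Finset.sum_congr rfl fun q _ => ?_
  rw [smul_mul_assoc, mul_smul_comm, map_smul, map_smul, Finsupp.smul_apply,
    Finsupp.smul_apply, S.repr_b_mul_b p q M J, smul_eq_mul, smul_eq_mul]
  split_ifs <;> ring

lemma natDegree_corner_poly (m n : ℕ) (c : K) :
    ((X : K[X]) ^ m * (X - C c) ^ n).natDegree = m + n := by
  rw [(monic_X_pow m).natDegree_mul ((monic_X_sub_C c).pow n), natDegree_pow, natDegree_X,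
    natDegree_pow, natDegree_X_sub_C, mul_one, mul_one]

lemma coeff_corner_poly_lt (m n : ℕ) (c : K) (M : ℕ) (hlt : m + n < M) :
    ((X : K[X]) ^ m * (X - C c) ^ n).coeff M = 0 :=
  coeff_eq_zero_of_natDegree_lt (by rw [natDegree_corner_poly]; omega)

lemma coeff_corner_poly_self (m n : ℕ) (c : K) :
    ((X : K[X]) ^ m * (X - C c) ^ n).coeff (m + n) = 1 := by
  have := ((monic_X_pow (R := K) m).mul ((monic_X_sub_C c).pow n)).coeff_natDegree
  rwa [natDegree_corner_poly] at this

lemma repr_corner (u v : B) (m₀ n₀ : ℕ) (k₀ l₀ : ℤ)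
    (hm : S.b.repr u (m₀, k₀) ≠ 0) (hn : S.b.repr v (n₀, l₀) ≠ 0)
    (hu : ∀ m k, S.b.repr u (m, k) ≠ 0 → k = k₀ → m ≤ m₀)
    (hv : ∀ n l, S.b.repr v (n, l) ≠ 0 → l = l₀ → n ≤ n₀)
    (hkl : ∀ p ∈ (S.b.repr u).support, ∀ q ∈ (S.b.repr v).support,
        p.2 + q.2 = k₀ + l₀ → p.2 = k₀ ∧ q.2 = l₀) :
    S.b.repr (u * v) (m₀ + n₀, k₀ + l₀) = S.b.repr u (m₀, k₀) * S.b.repr v (n₀, l₀) := by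
  rw [repr_mul_apply]
  rw [Finset.sum_eq_single ((m₀, k₀) : ℕ × ℤ)]
  · rw [Finset.sum_eq_single ((n₀, l₀) : ℕ × ℤ)]
    · rw [if_pos rfl, coeff_corner_poly_self, mul_one]
    · intro q hq hne
      by_cases hc : (m₀, k₀).2 + q.2 = k₀ + l₀
      · have hq2 : q.2 = l₀ :=
          (hkl _ (Finsupp.mem_support_iff.mpr hm) _ hq hc).2
        have hq1 : q.1 ≤ n₀ := by
          refine hv q.1 q.2 ?_ hq2
          rw [show ((q.1 : ℕ), q.2) = q from rfl]
          exact Finsupp.mem_support_iff.mp hq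
        have hq1' : q.1 ≠ n₀ := by
          intro hq1'
          exact hne (Prod.ext hq1' hq2)
        rw [if_pos hc, coeff_corner_poly_lt _ _ _ _ (by omega), mul_zero]
      · rw [if_neg hc]
    · intro hns
      exact absurd (Finsupp.notMem_support_iff.mp hns) hn
  · intro p hp hne
    refine Finset.sum_eq_zero fun q hq => ?_
    by_cases hc : p.2 + q.2 = k₀ + l₀
    · have h2 := hkl _ hp _ hq hc
      have hp1 : p.1 ≤ m₀ := by
        refine hu p.1 p.2 ?_ h2.1
        rw [show ((p.1 : ℕ), p.2) = p from rfl]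
        exact Finsupp.mem_support_iff.mp hp
      have hq1 : q.1 ≤ n₀ := by
        refine hv q.1 q.2 ?_ h2.2
        rw [show ((q.1 : ℕ), q.2) = q from rfl]
        exact Finsupp.mem_support_iff.mp hq
      have hp1' : p.1 ≠ m₀ := by
        intro hp1'
        exact hne (Prod.ext hp1' h2.1)
      rw [if_pos hc, coeff_corner_poly_lt _ _ _ _ (by omega), mul_zero]
    · rw [if_neg hc]
  · intro hms
    exact absurd (Finsupp.notMem_support_iff.mp hms) hm

lemma xp_eq_b (j : ℤ) : S.xp j = S.b (0, j) := by
  rw [b_eq, pow_zero, one_mul]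

lemma one_eq_b : (1 : B) = S.b (0, 0) := by
  rw [b_eq, pow_zero, one_mul, xp_zero]

lemma repr_smul_xp (a : K) (j : ℤ) :
    S.b.repr (a • S.xp j) = Finsupp.single (0, j) a := by
  rw [xp_eq_b, map_smul, Basis.repr_self, Finsupp.smul_single, smul_eq_mul, mul_one]

lemma smul_xp_inj {a a' : K} {j j' : ℤ} (ha : a ≠ 0)
    (hE : a • S.xp j = a' • S.xp j') : a = a' ∧ j = j' := by
  have := congrArg S.b.repr hE
  rw [repr_smul_xp, repr_smul_xp] at this
  rcases (Finsupp.single_eq_single_iff _ _ _ _).mp this with ⟨hp, ha'⟩ | ⟨h0, _⟩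
  · exact ⟨ha', (Prod.ext_iff.mp hp).2⟩
  · exact absurd h0 ha

lemma repr_ne_zero_of_ne_zero {w : B} (hw : w ≠ 0) : S.b.repr w ≠ 0 := by
  intro h0
  exact hw (by simpa [map_zero] using (S.b.repr.injective (by rw [h0, map_zero])))

lemma exists_corner_max (w : B) (hw : w ≠ 0) :
    ∃ m₀ k₀, S.b.repr w (m₀, k₀) ≠ 0 ∧ (∀ m k, S.b.repr w (m, k) ≠ 0 → k ≤ k₀) ∧
      (∀ m k, S.b.repr w (m, k) ≠ 0 → k = k₀ → m ≤ m₀) := by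
  set c := S.b.repr w with hc
  have hne : c.support.Nonempty :=
    Finsupp.support_nonempty_iff.mpr (S.repr_ne_zero_of_ne_zero hw)
  have hne2 : (c.support.image Prod.snd).Nonempty := hne.image _
  set k₀ := (c.support.image Prod.snd).max' hne2 with hk₀
  have hk0mem : k₀ ∈ c.support.image Prod.snd := Finset.max'_mem _ _
  obtain ⟨p, hp, hpk⟩ := Finset.mem_image.mp hk0mem
  have hne3 : ((c.support.filter (fun p => p.2 = k₀)).image Prod.fst).Nonempty :=
    ⟨p.1, Finset.mem_image.mpr ⟨p, Finset.mem_filter.mpr ⟨hp, hpk⟩, rfl⟩⟩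
  set m₀ := ((c.support.filter (fun p => p.2 = k₀)).image Prod.fst).max' hne3 with hm₀
  have hm0mem := Finset.max'_mem _ hne3
  obtain ⟨q, hq, hqm⟩ := Finset.mem_image.mp hm0mem
  have hq' := Finset.mem_filter.mp hq
  refine ⟨m₀, k₀, ?_, ?_, ?_⟩
  · have : q = (m₀, k₀) := Prod.ext hqm hq'.2
    rw [← this]
    exact Finsupp.mem_support_iff.mp hq'.1
  · intro m k hmk
    rw [hk₀]
    apply Finset.le_max'
    exact Finset.mem_image.mpr ⟨(m, k), Finsupp.mem_support_iff.mpr hmk, rfl⟩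
  · intro m k hmk hkk
    rw [hm₀]
    apply Finset.le_max'
    exact Finset.mem_image.mpr ⟨(m, k),
      Finset.mem_filter.mpr ⟨Finsupp.mem_support_iff.mpr hmk, hkk⟩, rfl⟩

lemma exists_corner_min (w : B) (hw : w ≠ 0) :
    ∃ m₀ k₀, S.b.repr w (m₀, k₀) ≠ 0 ∧ (∀ m k, S.b.repr w (m, k) ≠ 0 → k₀ ≤ k) ∧
      (∀ m k, S.b.repr w (m, k) ≠ 0 → k = k₀ → m ≤ m₀) := by
  set c := S.b.repr w with hc
  have hne : c.support.Nonempty :=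
    Finsupp.support_nonempty_iff.mpr (S.repr_ne_zero_of_ne_zero hw)
  have hne2 : (c.support.image Prod.snd).Nonempty := hne.image _
  set k₀ := (c.support.image Prod.snd).min' hne2 with hk₀
  have hk0mem : k₀ ∈ c.support.image Prod.snd := Finset.min'_mem _ _
  obtain ⟨p, hp, hpk⟩ := Finset.mem_image.mp hk0mem
  have hne3 : ((c.support.filter (fun p => p.2 = k₀)).image Prod.fst).Nonempty :=
    ⟨p.1, Finset.mem_image.mpr ⟨p, Finset.mem_filter.mpr ⟨hp, hpk⟩, rfl⟩⟩
  set m₀ := ((c.support.filter (fun p => p.2 = k₀)).image Prod.fst).max' hne3 with hm₀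
  have hm0mem := Finset.max'_mem _ hne3
  obtain ⟨q, hq, hqm⟩ := Finset.mem_image.mp hm0mem
  have hq' := Finset.mem_filter.mp hq
  refine ⟨m₀, k₀, ?_, ?_, ?_⟩
  · have : q = (m₀, k₀) := Prod.ext hqm hq'.2
    rw [← this]
    exact Finsupp.mem_support_iff.mp hq'.1
  · intro m k hmk
    rw [hk₀]
    apply Finset.min'_le
    exact Finset.mem_image.mpr ⟨(m, k), Finsupp.mem_support_iff.mpr hmk, rfl⟩
  · intro m k hmk hkk
    rw [hm₀]
    apply Finset.le_max'
    exact Finset.mem_image.mpr ⟨(m, k),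
      Finset.mem_filter.mpr ⟨Finsupp.mem_support_iff.mpr hmk, hkk⟩, rfl⟩

include S in
lemma nontrivial_B : Nontrivial B := by
  refine nontrivial_of_ne (S.b (0,0)) 0 ?_
  exact S.b.ne_zero _

lemma units_eq_smul_xp (u : Bˣ) : ∃ (lam : Kˣ) (k : ℤ), (u : B) = (lam : K) • S.xp k := by
  have : Nontrivial B := S.nontrivial_B
  have hu0 : (u : B) ≠ 0 := Units.ne_zero u
  have hv0 : ((u⁻¹ : Bˣ) : B) ≠ 0 := Units.ne_zero _
  obtain ⟨mu, ku, hmu, hku, hmku⟩ := S.exists_corner_max _ hu0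
  obtain ⟨nv, lv, hnv, hlv, hnlv⟩ := S.exists_corner_max _ hv0
  obtain ⟨mu', ku', hmu', hku', hmku'⟩ := S.exists_corner_min _ hu0
  obtain ⟨nv', lv', hnv', hlv', hnlv'⟩ := S.exists_corner_min _ hv0
  have huv : ((u : B) * ((u⁻¹ : Bˣ) : B)) = 1 := by
    rw [← Units.val_mul, mul_inv_cancel, Units.val_one]
  have hrepr1 : S.b.repr (1 : B) = Finsupp.single ((0 : ℕ), (0 : ℤ)) 1 := by
    rw [S.one_eq_b, Basis.repr_self]
  -- max corner
  have hcor := S.repr_corner (u : B) ((u⁻¹ : Bˣ) : B) mu nv ku lv hmu hnv hmku hnlv ?_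
  · have hcor' := S.repr_corner (u : B) ((u⁻¹ : Bˣ) : B) mu' nv' ku' lv' hmu' hnv' hmku' hnlv' ?_
    · rw [huv, hrepr1] at hcor hcor'
      have hne : S.b.repr (u : B) (mu, ku) * S.b.repr ((u⁻¹ : Bˣ) : B) (nv, lv) ≠ 0 :=
        mul_ne_zero hmu hnv
      have hne' : S.b.repr (u : B) (mu', ku') * S.b.repr ((u⁻¹ : Bˣ) : B) (nv', lv') ≠ 0 :=
        mul_ne_zero hmu' hnv'
      rw [← hcor] at hne
      rw [← hcor'] at hne'
      have hmax : ((mu + nv : ℕ), (ku + lv : ℤ)) = ((0 : ℕ), (0 : ℤ)) := by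
        by_contra hcon
        rw [Finsupp.single_apply, if_neg (fun hcon' => hcon hcon'.symm)] at hne
        exact hne rfl
      have hmin : ((mu' + nv' : ℕ), (ku' + lv' : ℤ)) = ((0 : ℕ), (0 : ℤ)) := by
        by_contra hcon
        rw [Finsupp.single_apply, if_neg (fun hcon' => hcon hcon'.symm)] at hne'
        exact hne' rfl
      obtain ⟨hM, hKmax⟩ := Prod.ext_iff.mp hmax
      obtain ⟨hM', hKmin⟩ := Prod.ext_iff.mp hmin
      simp only at hM hKmax hM' hKmin
      -- deduce ku = ku'
      have hk1 : ku' ≤ ku := hku' _ _ hmu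
      have hk2 : lv' ≤ lv := hlv' _ _ hnv
      have hkeq : ku = ku' := by omega
      have hmu0 : mu = 0 := by omega
      -- support of repr u is {(0, ku)}
      refine ⟨Units.mk0 (S.b.repr (u : B) (0, ku)) (by rw [← hmu0]; exact hmu), ku, ?_⟩
      have hsupp : ∀ p ∈ (S.b.repr (u : B)).support, p = ((0 : ℕ), ku) := by
        intro p hps
        have hpne := Finsupp.mem_support_iff.mp hps
        have h1 : p.2 ≤ ku := hku p.1 p.2 (by rwa [show ((p.1 : ℕ), p.2) = p from rfl])
        have h2 : ku' ≤ p.2 := hku' p.1 p.2 (by rwa [show ((p.1 : ℕ), p.2) = p from rfl])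
        have hp2 : p.2 = ku := by omega
        have h3 : p.1 ≤ mu := hmku p.1 p.2 (by rwa [show ((p.1 : ℕ), p.2) = p from rfl]) hp2
        have hp1 : p.1 = 0 := by omega
        exact Prod.ext hp1 hp2
      have : (u : B) = S.b.repr (u : B) (0, ku) • S.b (0, ku) := by
        conv_lhs => rw [← Basis.linearCombination_repr (b := S.b) (x := (u : B)), Finsupp.linearCombination_apply, Finsupp.sum]
        rcases Finset.eq_empty_or_nonempty (S.b.repr (u : B)).support with hemp | hnemp
        · exact absurd (Finsupp.support_eq_empty.mp hemp)
            (S.repr_ne_zero_of_ne_zero hu0)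
        · have : (S.b.repr (u : B)).support = {((0 : ℕ), ku)} := by
            apply Finset.eq_singleton_iff_nonempty_unique_mem.mpr ⟨hnemp, hsupp⟩
          rw [this, Finset.sum_singleton]
      conv_lhs => rw [this]
      rw [xp_eq_b]
      simp [Units.val_mk0]
    · intro p hps q hqs hsum
      have h1 : p.2 ≥ ku' := hku' p.1 p.2 (by
        rw [show ((p.1 : ℕ), p.2) = p from rfl]; exact Finsupp.mem_support_iff.mp hps)
      have h2 : q.2 ≥ lv' := hlv' q.1 q.2 (by
        rw [show ((q.1 : ℕ), q.2) = q from rfl]; exact Finsupp.mem_support_iff.mp hqs)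
      constructor <;> omega
  · intro p hps q hqs hsum
    have h1 : p.2 ≤ ku := hku p.1 p.2 (by
      rw [show ((p.1 : ℕ), p.2) = p from rfl]; exact Finsupp.mem_support_iff.mp hps)
    have h2 : q.2 ≤ lv := hlv q.1 q.2 (by
      rw [show ((q.1 : ℕ), q.2) = q from rfl]; exact Finsupp.mem_support_iff.mp hqs)
    constructor <;> omega

omit [CharZero K] in
lemma comp_sub_C_eq_self [CharZero K] {a : K} (ha : a ≠ 0) {q : K[X]}
    (hq : q.comp (X - C a) = q) : ∃ co, q = C co := by
  have heval : ∀ t : K, q.eval (t - a) = q.eval t := by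
    intro t
    conv_rhs => rw [← hq]
    rw [eval_comp, eval_sub, eval_X, eval_C]
  have hn : ∀ n : ℕ, q.eval (-((n : K) * a)) = q.eval 0 := by
    intro n
    induction n with
    | zero => simp
    | succ n ih =>
        have h1 : (-(((((n : ℕ) + 1 : ℕ)) : K) * a)) = -((n : K) * a) - a := by push_cast; ring
        calc q.eval (-(((((n : ℕ) + 1 : ℕ)) : K) * a)) = q.eval (-((n : K) * a) - a) := by
              rw [h1]
          _ = q.eval (-((n : K) * a)) := heval _
          _ = q.eval 0 := ih
  have hz : q - C (q.eval 0) = 0 := by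
    apply Polynomial.eq_zero_of_infinite_isRoot
    apply Set.infinite_of_injective_forall_mem (f := fun n : ℕ => -((n : K) * a))
    · intro n m hnm
      simp only [neg_inj] at hnm
      exact Nat.cast_injective (mul_right_cancel₀ ha hnm)
    · intro n
      simp only [Set.mem_setOf_eq, IsRoot, eval_sub, eval_C]
      rw [hn n, sub_self]
  exact ⟨q.eval 0, by rwa [sub_eq_zero] at hz⟩

omit [CharZero K] in
lemma comp_sub_C_eq_self_sub_one [CharZero K] {a : K} (ha : a ≠ 0) {q : K[X]}
    (hq : q.comp (X - C a) = q - 1) : ∃ co, q = C a⁻¹ * X + C co := by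
  have hCa : (C a⁻¹ : K[X]) * C a = 1 := by rw [← C_mul, inv_mul_cancel₀ ha, C_1]
  have hr : (q - C a⁻¹ * X).comp (X - C a) = q - C a⁻¹ * X := by
    rw [sub_comp, mul_comp, C_comp, X_comp, hq]
    linear_combination hCa
  obtain ⟨co, hco⟩ := comp_sub_C_eq_self ha hr
  exact ⟨co, by linear_combination hco⟩

lemma h_eq_b : S.h = S.b (1, 0) := by
  rw [b_eq, pow_one, xp_zero, mul_one]

lemma repr_xpk_mul (k : ℤ) (w : B) (i : ℕ) (t : ℤ) :
    S.b.repr (S.xp k * w) (i, t) =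
      ∑ p ∈ (S.b.repr w).support,
        (if t = k + p.2 then S.b.repr w p * (((X : K[X]) - C ((k : K))) ^ p.1).coeff i
         else 0) := by
  conv_lhs => rw [← Basis.linearCombination_repr (b := S.b) (x := w)]
  rw [Finsupp.linearCombination_apply, Finsupp.sum, Finset.mul_sum, map_sum, Finsupp.finset_sum_apply]
  refine Finset.sum_congr rfl fun p _ => ?_
  rw [mul_smul_comm, map_smul, Finsupp.smul_apply]
  have hxb : S.xp k * S.b p = aeval S.h (((X : K[X]) - C ((k : K))) ^ p.1) * S.xp (k + p.2) := by
    rw [show S.b p = S.b (p.1, p.2) from rfl, b_eq, ← mul_assoc, xp_mul_hpow, map_pow, map_sub,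
      aeval_X, aeval_C, ← intCast_eq (K := K) (B := B) k, mul_assoc, xp_mul]
  rw [hxb, repr_aeval_mul_xp, smul_eq_mul, mul_ite, mul_zero]

lemma repr_mul_xpk (k : ℤ) (w : B) (i : ℕ) (t : ℤ) :
    S.b.repr (w * S.xp k) (i, t) = S.b.repr w (i, t - k) := by
  conv_lhs => rw [← Basis.linearCombination_repr (b := S.b) (x := w)]
  rw [Finsupp.linearCombination_apply, Finsupp.sum, Finset.sum_mul, map_sum, Finsupp.finset_sum_apply]
  have hterm : ∀ p ∈ (S.b.repr w).support,
      (S.b.repr ((S.b.repr w) p • S.b p * S.xp k)) (i, t) =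
        if p = ((i : ℕ), t - k) then S.b.repr w p else 0 := by
    intro p _
    rw [smul_mul_assoc, map_smul, Finsupp.smul_apply]
    have hbb : S.b p * S.xp k = S.b (p.1, p.2 + k) := by
      rw [show S.b p = S.b (p.1, p.2) from rfl, b_eq, b_eq, mul_assoc, xp_mul]
    rw [hbb, Basis.repr_self, Finsupp.single_apply, smul_eq_mul]
    by_cases hpe : (p.1, p.2 + k) = ((i : ℕ), t)
    · obtain ⟨h1, h2⟩ := Prod.ext_iff.mp hpe
      simp only at h1 h2
      rw [if_pos hpe, mul_one, if_pos (Prod.ext h1 (by omega))]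
    · rw [if_neg hpe, mul_zero, if_neg]
      intro hpe2
      obtain ⟨h1, h2⟩ := Prod.ext_iff.mp hpe2
      simp only at h1 h2
      exact hpe (Prod.ext h1 (by omega))
  rw [Finset.sum_congr rfl hterm, Finset.sum_ite_eq' _ (((i : ℕ), t - k)) _]
  by_cases hmem : ((i : ℕ), t - k) ∈ (S.b.repr w).support
  · rw [if_pos hmem]
  · rw [if_neg hmem]
    exact (Finsupp.notMem_support_iff.mp hmem).symm

lemma repr_psum (p : ℤ →₀ K) (i : ℕ) (j : ℤ) :
    S.b.repr (p.sum fun t a => a • S.xp t) (i, j) = if i = 0 then p j else 0 := by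
  rw [map_finsuppSum, Finsupp.sum_apply, Finsupp.sum]
  have hterm : ∀ t ∈ p.support,
      (S.b.repr ((p t) • S.xp t)) (i, j) = if t = j ∧ i = 0 then p t else 0 := by
    intro t _
    rw [repr_smul_xp, Finsupp.single_apply]
    by_cases hc : ((0 : ℕ), t) = ((i : ℕ), j)
    · obtain ⟨h1, h2⟩ := Prod.ext_iff.mp hc
      simp only at h1 h2
      rw [if_pos hc, if_pos ⟨h2, h1.symm⟩]
    · rw [if_neg hc, if_neg]
      intro ⟨h2, h1⟩
      exact hc (Prod.ext h1.symm h2)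
  rw [Finset.sum_congr rfl hterm]
  by_cases hi : i = 0
  · simp only [hi, and_true]
    rw [Finset.sum_ite_eq' p.support j p]
    by_cases hmem : j ∈ p.support
    · simp [hmem]
    · simp [hmem, Finsupp.notMem_support_iff.mp hmem]
  · rw [if_neg hi]
    refine Finset.sum_eq_zero fun t _ => ?_
    rw [if_neg (fun hc => hi hc.2)]

lemma shift_eq (w : B) (k : ℤ) (hk : k ≠ 0)
    (heq : S.xp k * w = (w - 1) * S.xp k) :
    ∃ p : ℤ →₀ K, w = ((k : K))⁻¹ • S.h + p.sum fun j a => a • S.xp j := by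
  classical
  have hka : ((k : K)) ≠ 0 := Int.cast_ne_zero.mpr hk
  set c := S.b.repr w with hc
  set q : ℤ → K[X] :=
    fun j => ∑ p ∈ c.support, if p.2 = j then monomial p.1 (c p) else 0 with hqdef
  have hq_coeff : ∀ j i, (q j).coeff i = c (i, j) := by
    intro j i
    simp only [hqdef]
    rw [finset_sum_coeff]
    have hterm : ∀ p ∈ c.support,
        ((if p.2 = j then monomial p.1 (c p) else 0).coeff i) =
          if p = ((i : ℕ), j) then c p else 0 := by
      intro p _
      by_cases h2 : p.2 = j
      · rw [if_pos h2, coeff_monomial]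
        by_cases h1 : p.1 = i
        · rw [if_pos h1, if_pos (Prod.ext h1 h2)]
        · rw [if_neg h1, if_neg (fun hpe => h1 (Prod.ext_iff.mp hpe).1)]
      · rw [if_neg h2, coeff_zero, if_neg (fun hpe => h2 (Prod.ext_iff.mp hpe).2)]
    rw [Finset.sum_congr rfl hterm, Finset.sum_ite_eq' c.support ((i : ℕ), j) c]
    by_cases hmem : ((i : ℕ), j) ∈ c.support
    · rw [if_pos hmem]
    · rw [if_neg hmem]
      exact (Finsupp.notMem_support_iff.mp hmem).symm
  have hdagger : ∀ j : ℤ,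
      (q j).comp (X - C ((k : K))) = q j - (if j = 0 then 1 else 0) := by
    intro j
    ext i
    have hL : ((q j).comp (X - C ((k : K)))).coeff i = S.b.repr (S.xp k * w) (i, k + j) := by
      rw [repr_xpk_mul]
      simp only [hqdef]
      rw [Polynomial.sum_comp, finset_sum_coeff]
      refine Finset.sum_congr rfl fun p hp => ?_
      by_cases h2 : p.2 = j
      · rw [if_pos h2, monomial_comp, coeff_C_mul, if_pos (by omega)]
      · rw [if_neg h2, zero_comp, coeff_zero, if_neg (by omega)]
    have hrepr_eq' : S.b.repr (S.xp k * w) (i, k + j) =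
        S.b.repr ((w - 1) * S.xp k) (i, k + j) := by rw [heq]
    have hR : S.b.repr ((w - 1) * S.xp k) (i, k + j) =
        (q j - (if j = 0 then 1 else 0)).coeff i := by
      rw [sub_mul, one_mul, map_sub, Finsupp.sub_apply, repr_mul_xpk,
        show k + j - k = j by ring, coeff_sub, hq_coeff, ← hc]
      congr 1
      rw [S.xp_eq_b k, Basis.repr_self, Finsupp.single_apply]
      by_cases hj : j = 0
      · subst hj
        rw [if_pos rfl, Polynomial.coeff_one]
        by_cases hi : i = 0
        · subst hi
          rw [if_pos (by norm_num), if_pos rfl]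
        · rw [if_neg (fun hcon => hi ((Prod.ext_iff.mp hcon).1).symm),
            if_neg (fun hcon => hi hcon)]
      · rw [if_neg hj, coeff_zero, if_neg]
        intro hcon
        have h2 := (Prod.ext_iff.mp hcon).2
        simp only at h2
        omega
    rw [hL, hrepr_eq', hR]
  obtain ⟨co0, hco0⟩ := comp_sub_C_eq_self_sub_one hka
    (by have := hdagger 0; rwa [if_pos rfl] at this)
  have hrow : ∀ j : ℤ, j ≠ 0 → ∀ i : ℕ, i ≠ 0 → c (i, j) = 0 := by
    intro j hj i hi
    obtain ⟨co, hco⟩ := comp_sub_C_eq_self hka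
      (by have := hdagger j; rwa [if_neg hj, sub_zero] at this)
    rw [← hq_coeff, hco, coeff_C, if_neg hi]
  have h10 : c (1, 0) = ((k : K))⁻¹ := by
    rw [← hq_coeff 0 1, hco0, coeff_add, coeff_C_mul, coeff_X, coeff_C,
      if_pos rfl, if_neg one_ne_zero, mul_one, add_zero]
  have hrow0 : ∀ i : ℕ, 2 ≤ i → c (i, 0) = 0 := by
    intro i hi
    rw [← hq_coeff 0 i, hco0, coeff_add, coeff_C_mul, coeff_X, coeff_C,
      if_neg (by omega), if_neg (by omega), mul_zero, add_zero]
  refine ⟨Finsupp.comapDomain (fun j : ℤ => (((0 : ℕ)), j)) c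
    (Prod.mk_right_injective (0 : ℕ)).injOn, ?_⟩
  apply S.b.repr.injective
  apply Finsupp.ext
  rintro ⟨i, j⟩
  rw [map_add, map_smul, Finsupp.add_apply, Finsupp.smul_apply, repr_psum,
    Finsupp.comapDomain_apply, S.h_eq_b, Basis.repr_self, Finsupp.single_apply, smul_eq_mul]
  by_cases hi0 : i = 0
  · subst hi0
    rw [if_neg (fun hcon => one_ne_zero ((Prod.ext_iff.mp hcon).1)), if_pos rfl, mul_zero,
      zero_add]
  · rw [if_neg hi0, add_zero]
    by_cases hj0 : j = 0
    · subst hj0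
      by_cases hi1 : i = 1
      · subst hi1
        rw [if_pos rfl, mul_one, ← hc, h10]
      · rw [if_neg (fun hcon => hi1 ((Prod.ext_iff.mp hcon).1).symm), mul_zero, ← hc,
          hrow0 i (by omega)]
    · rw [if_neg (fun hcon => hj0 ((Prod.ext_iff.mp hcon).2).symm), mul_zero, ← hc,
        hrow j hj0 i hi0]

/-- `p(x)` for a Laurent polynomial given by finitely supported coefficients. -/
noncomputable def Pp (p : ℤ →₀ K) : B := p.sum fun j a => a • S.xp j

lemma Pp_zero : S.Pp 0 = 0 := Finsupp.sum_zero_index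

lemma Pp_single (j : ℤ) (a : K) : S.Pp (Finsupp.single j a) = a • S.xp j :=
  Finsupp.sum_single_index (zero_smul _ _)

lemma Pp_add (p q : ℤ →₀ K) : S.Pp (p + q) = S.Pp p + S.Pp q :=
  Finsupp.sum_add_index' (fun j => zero_smul _ _) (fun j a a' => add_smul a a' _)

lemma Pp_neg (p : ℤ →₀ K) : S.Pp (-p) = - S.Pp p := by
  have h0 : S.Pp p + S.Pp (-p) = 0 := by rw [← Pp_add, add_neg_cancel, Pp_zero]
  exact eq_neg_of_add_eq_zero_left (by rw [add_comm] at h0; exact h0)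

lemma xp_mul_Pp (k : ℤ) (p : ℤ →₀ K) : S.xp k * S.Pp p = S.Pp p * S.xp k := by
  rw [Pp, Finsupp.sum, Finset.mul_sum, Finset.sum_mul]
  refine Finset.sum_congr rfl fun j _ => ?_
  rw [mul_smul_comm, smul_mul_assoc, xp_comm]

omit [CharZero K] in
lemma conj_pow {y z z' : B} (hzy : y * z = z' * y) : ∀ n : ℕ, y * z ^ n = z' ^ n * y := by
  intro n
  induction n with
  | zero => simp
  | succ n ih =>
      rw [pow_succ, ← mul_assoc, ih, mul_assoc, hzy, ← mul_assoc, ← pow_succ]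

omit [CharZero K] in
lemma aeval_eq_sum_smul (z : B) (q : K[X]) : aeval z q = q.sum fun m a => a • z ^ m := by
  rw [aeval_def, eval₂_eq_sum, Polynomial.sum_def, Polynomial.sum_def]
  exact Finset.sum_congr rfl fun m _ => (Algebra.smul_def _ _).symm

/-- The linear map underlying the automorphism `x ↦ λ x^e`, `h ↦ e h + p(x)`. -/
noncomputable def Fmap (e : ℤ) (lam : Kˣ) (p : ℤ →₀ K) : B →ₗ[K] B :=
  Basis.constr S.b ℕ fun pr =>
    ((lam ^ pr.2 : Kˣ) : K) • ((((e : K)) • S.h + S.Pp p) ^ pr.1 * S.xp (e * pr.2))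

lemma Fmap_b (e : ℤ) (lam : Kˣ) (p : ℤ →₀ K) (m : ℕ) (k : ℤ) :
    S.Fmap e lam p (S.b (m, k)) =
      ((lam ^ k : Kˣ) : K) • ((((e : K)) • S.h + S.Pp p) ^ m * S.xp (e * k)) := by
  rw [Fmap, Basis.constr_basis]

lemma Fmap_aeval (e : ℤ) (lam : Kˣ) (p : ℤ →₀ K) (q : K[X]) (j : ℤ) :
    S.Fmap e lam p (aeval S.h q * S.xp j) =
      ((lam ^ j : Kˣ) : K) • (aeval ((((e : K)) • S.h + S.Pp p)) q * S.xp (e * j)) := by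
  rw [aeval_mul_xp_eq_sum, Polynomial.sum_def, map_sum, aeval_eq_sum_smul, Polynomial.sum_def,
    Finset.sum_mul, Finset.smul_sum]
  refine Finset.sum_congr rfl fun m _ => ?_
  rw [map_smul, Fmap_b, smul_smul, smul_mul_assoc, smul_smul, mul_comm]

lemma xp_mul_Hp {e : ℤ} (he : e * e = 1) (p : ℤ →₀ K) (k : ℤ) :
    S.xp (e * k) * ((((e : K)) • S.h + S.Pp p)) =
      (((((e : K)) • S.h + S.Pp p)) - (((k : ℤ) : B))) * S.xp (e * k) := by
  have hek : e * (e * k) = k := by rw [← mul_assoc, he, one_mul]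
  have heK : ((e : K)) * ((e : K)) = 1 := by
    have h2 := congrArg (fun t : ℤ => ((t : K))) he
    push_cast at h2
    exact h2
  have hscal : ((e : K)) • (((e * k : ℤ) : B)) = (((k : ℤ)) : B) := by
    rw [intCast_eq (K := K) (B := B) (e * k), intCast_eq (K := K) (B := B) k,
      Algebra.smul_def, ← map_mul]
    congr 1
    push_cast
    rw [← mul_assoc, heK, one_mul]
  rw [mul_add, xp_mul_Pp, mul_smul_comm, xp_mul_h, ← smul_mul_assoc, smul_sub, hscal]
  noncomm_ring

lemma xp_mul_Hp_pow {e : ℤ} (he : e * e = 1) (p : ℤ →₀ K) (k : ℤ) (n : ℕ) :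
    S.xp (e * k) * ((((e : K)) • S.h + S.Pp p)) ^ n =
      (((((e : K)) • S.h + S.Pp p)) - (((k : ℤ) : B))) ^ n * S.xp (e * k) :=
  conj_pow (S.xp_mul_Hp he p k) n

lemma Fmap_one (e : ℤ) (lam : Kˣ) (p : ℤ →₀ K) : S.Fmap e lam p 1 = 1 := by
  conv_lhs => rw [S.one_eq_b]
  rw [Fmap_b]
  simp [xp_zero]

lemma Fmap_mul {e : ℤ} (he : e * e = 1) (lam : Kˣ) (p : ℤ →₀ K) (u v : B) :
    S.Fmap e lam p (u * v) = S.Fmap e lam p u * S.Fmap e lam p v := by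
  have key : ∀ pr qr : ℕ × ℤ,
      S.Fmap e lam p (S.b pr * S.b qr) = S.Fmap e lam p (S.b pr) * S.Fmap e lam p (S.b qr) := by
    rintro ⟨m, k⟩ ⟨n, l⟩
    rw [b_mul_b, Fmap_aeval, Fmap_b, Fmap_b]
    have haev : aeval ((((e : K)) • S.h + S.Pp p)) ((X : K[X]) ^ m * (X - C ((k : K))) ^ n) =
        ((((e : K)) • S.h + S.Pp p)) ^ m *
          (((((e : K)) • S.h + S.Pp p)) - (((k : ℤ)) : B)) ^ n := by
      rw [map_mul, aeval_X_pow, map_pow, map_sub, aeval_X, aeval_C,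
        ← intCast_eq (K := K) (B := B) k]
    rw [haev, smul_mul_assoc, mul_smul_comm, smul_smul, ← Units.val_mul, ← zpow_add]
    congr 1
    have hmid : S.xp (e * k) * (((((e : K)) • S.h + S.Pp p)) ^ n * S.xp (e * l)) =
        (((((e : K)) • S.h + S.Pp p)) - (((k : ℤ)) : B)) ^ n * S.xp (e * (k + l)) := by
      rw [← mul_assoc, S.xp_mul_Hp_pow he, mul_assoc, xp_mul, ← mul_add]
    conv_rhs => rw [mul_assoc, hmid, ← mul_assoc]
  let F := S.Fmap e lam p
  let Φ₁ : B →ₗ[K] B →ₗ[K] B := (LinearMap.mul K B).compr₂ F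
  let Φ₂ : B →ₗ[K] B →ₗ[K] B := (LinearMap.mul K B).compl₁₂ F F
  have hΦ : Φ₁ = Φ₂ := by
    apply Basis.ext S.b
    intro pr
    apply Basis.ext S.b
    intro qr
    exact key pr qr
  exact LinearMap.congr_fun (LinearMap.congr_fun hΦ u) v

/-- The algebra endomorphism `x ↦ λ x^e`, `h ↦ e h + p(x)` (`e = ±1`). -/
noncomputable def Fhom (e : ℤ) (he : e * e = 1) (lam : Kˣ) (p : ℤ →₀ K) : B →ₐ[K] B :=
  AlgHom.ofLinearMap (S.Fmap e lam p) (S.Fmap_one e lam p) (S.Fmap_mul he lam p)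

lemma Fhom_h (e : ℤ) (he : e * e = 1) (lam : Kˣ) (p : ℤ →₀ K) :
    S.Fhom e he lam p S.h = ((e : K)) • S.h + S.Pp p := by
  show S.Fmap e lam p S.h = _
  conv_lhs => rw [S.h_eq_b]
  rw [Fmap_b]
  simp [xp_zero]

lemma Fhom_xp (e : ℤ) (he : e * e = 1) (lam : Kˣ) (p : ℤ →₀ K) (j : ℤ) :
    S.Fhom e he lam p (S.xp j) = ((lam ^ j : Kˣ) : K) • S.xp (e * j) := by
  show S.Fmap e lam p (S.xp j) = _
  conv_lhs => rw [S.xp_eq_b]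
  rw [Fmap_b]
  simp

lemma algHom_ext {f g : B →ₐ[K] B} (hh : f S.h = g S.h)
    (hx : f (S.xp 1) = g (S.xp 1)) (hx' : f (S.xp (-1)) = g (S.xp (-1))) : f = g := by
  have hxp : ∀ j : ℤ, f (S.xp j) = g (S.xp j) := by
    intro j
    induction j using Int.induction_on with
    | zero => rw [S.xp_zero, map_one, map_one]
    | succ n ih =>
        rw [show ((n : ℤ) + 1) = (n + 1 : ℤ) from rfl, ← S.xp_mul n 1, map_mul, map_mul, ih, hx]
    | pred n ih =>
        rw [show (-(n : ℤ) - 1) = (-(n : ℤ)) + (-1) by ring, ← S.xp_mul, map_mul, map_mul, ih,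
          hx']
  apply AlgHom.toLinearMap_injective
  apply Basis.ext S.b
  rintro ⟨m, j⟩
  show f (S.b (m, j)) = g (S.b (m, j))
  rw [b_eq, map_mul, map_mul, map_pow, map_pow, hh, hxp]

lemma algEquiv_ext {f g : B ≃ₐ[K] B} (hh : f S.h = g S.h)
    (hx : f (S.xp 1) = g (S.xp 1)) (hx' : f (S.xp (-1)) = g (S.xp (-1))) : f = g := by
  have h1 : (f : B →ₐ[K] B) = (g : B →ₐ[K] B) := S.algHom_ext hh hx hx'
  exact AlgEquiv.ext fun a => DFunLike.congr_fun h1 a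

/-- The automorphism `t_λ : x ↦ λ x`, `h ↦ h`. -/
noncomputable def tAut (lam : Kˣ) : B ≃ₐ[K] B := by
  refine AlgEquiv.ofAlgHom (S.Fhom 1 (by norm_num) lam 0) (S.Fhom 1 (by norm_num) lam⁻¹ 0) ?_ ?_
  · apply S.algHom_ext <;>
      simp [AlgHom.comp_apply, Fhom_h, Fhom_xp, Pp_zero, map_smul, smul_smul, ← Units.val_mul,
        ← mul_zpow]
  · apply S.algHom_ext <;>
      simp [AlgHom.comp_apply, Fhom_h, Fhom_xp, Pp_zero, map_smul, smul_smul, ← Units.val_mul,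
        ← mul_zpow]

/-- The automorphism `s_p : x ↦ x`, `h ↦ h + p(x)`. -/
noncomputable def sAut (p : ℤ →₀ K) : B ≃ₐ[K] B := by
  refine AlgEquiv.ofAlgHom (S.Fhom 1 (by norm_num) 1 p) (S.Fhom 1 (by norm_num) 1 (-p)) ?_ ?_
  · have hP : ∀ q p' : ℤ →₀ K, S.Fhom 1 (by norm_num) 1 p' (S.Pp q) = S.Pp q := by
      intro q p'
      rw [Pp, map_finsuppSum]
      refine Finsupp.sum_congr fun j _ => ?_
      rw [map_smul, Fhom_xp]
      simp
    apply S.algHom_ext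
    · rw [AlgHom.comp_apply, Fhom_h, Int.cast_one, one_smul, map_add, Fhom_h, Int.cast_one,
        one_smul, hP, Pp_neg, AlgHom.id_apply]
      abel
    · simp [AlgHom.comp_apply, Fhom_xp]
    · simp [AlgHom.comp_apply, Fhom_xp]
  · have hP : ∀ q p' : ℤ →₀ K, S.Fhom 1 (by norm_num) 1 p' (S.Pp q) = S.Pp q := by
      intro q p'
      rw [Pp, map_finsuppSum]
      refine Finsupp.sum_congr fun j _ => ?_
      rw [map_smul, Fhom_xp]
      simp
    apply S.algHom_ext
    · rw [AlgHom.comp_apply, Fhom_h, Int.cast_one, one_smul, map_add, Fhom_h, Int.cast_one,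
        one_smul, hP, Pp_neg, AlgHom.id_apply]
      abel
    · simp [AlgHom.comp_apply, Fhom_xp]
    · simp [AlgHom.comp_apply, Fhom_xp]

/-- The automorphism `ζ : x ↦ x⁻¹`, `h ↦ -h`. -/
noncomputable def zAut : B ≃ₐ[K] B := by
  refine AlgEquiv.ofAlgHom (S.Fhom (-1) (by norm_num) 1 0) (S.Fhom (-1) (by norm_num) 1 0) ?_ ?_ <;>
  · apply S.algHom_ext <;>
      simp [AlgHom.comp_apply, Fhom_h, Fhom_xp, Pp_zero, map_smul, smul_smul]

lemma tAut_h (lam : Kˣ) : S.tAut lam S.h = S.h := by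
  show S.Fhom 1 (by norm_num) lam 0 S.h = S.h
  rw [Fhom_h]
  simp [Pp_zero]

lemma tAut_xp (lam : Kˣ) (j : ℤ) : S.tAut lam (S.xp j) = ((lam ^ j : Kˣ) : K) • S.xp j := by
  show S.Fhom 1 (by norm_num) lam 0 (S.xp j) = _
  rw [Fhom_xp]
  simp

lemma sAut_h (p : ℤ →₀ K) : S.sAut p S.h = S.h + S.Pp p := by
  show S.Fhom 1 (by norm_num) 1 p S.h = _
  rw [Fhom_h]
  simp

lemma sAut_xp (p : ℤ →₀ K) (j : ℤ) : S.sAut p (S.xp j) = S.xp j := by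
  show S.Fhom 1 (by norm_num) 1 p (S.xp j) = _
  rw [Fhom_xp]
  simp

lemma zAut_h : S.zAut S.h = - S.h := by
  show S.Fhom (-1) (by norm_num) 1 0 S.h = _
  rw [Fhom_h]
  simp [Pp_zero]

lemma zAut_xp (j : ℤ) : S.zAut (S.xp j) = S.xp (-j) := by
  show S.Fhom (-1) (by norm_num) 1 0 (S.xp j) = _
  rw [Fhom_xp]
  simp

lemma tAut_symm (lam : Kˣ) : (S.tAut lam).symm = S.tAut lam⁻¹ := by
  apply S.algEquiv_ext
  · rw [AlgEquiv.symm_apply_eq, tAut_h, tAut_h]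
  · rw [AlgEquiv.symm_apply_eq, tAut_xp, map_smul, tAut_xp, smul_smul, ← Units.val_mul,
      ← mul_zpow, inv_mul_cancel, one_zpow, Units.val_one, one_smul]
  · rw [AlgEquiv.symm_apply_eq, tAut_xp, map_smul, tAut_xp, smul_smul, ← Units.val_mul,
      ← mul_zpow, inv_mul_cancel, one_zpow, Units.val_one, one_smul]

lemma sAut_symm (p : ℤ →₀ K) : (S.sAut p).symm = S.sAut (-p) := by
  apply S.algEquiv_ext
  · rw [AlgEquiv.symm_apply_eq, sAut_h, map_add, sAut_h]
    have : S.sAut p (S.Pp (-p)) = S.Pp (-p) := by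
      rw [Pp, map_finsuppSum]
      refine Finsupp.sum_congr fun j _ => ?_
      rw [map_smul, sAut_xp]
    rw [this, Pp_neg]
    abel
  · rw [AlgEquiv.symm_apply_eq, sAut_xp, sAut_xp]
  · rw [AlgEquiv.symm_apply_eq, sAut_xp, sAut_xp]

lemma zAut_symm : (S.zAut).symm = S.zAut := by
  apply S.algEquiv_ext
  · rw [AlgEquiv.symm_apply_eq, zAut_h, map_neg, zAut_h, neg_neg]
  · rw [AlgEquiv.symm_apply_eq, zAut_xp, zAut_xp, neg_neg]
  · rw [AlgEquiv.symm_apply_eq, zAut_xp, zAut_xp, neg_neg]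

lemma aut_inv' (σ : B ≃ₐ[K] B) : σ⁻¹ = σ.symm := rfl

lemma apply_xp_inv (σ : B ≃ₐ[K] B) {lam : K} {e : ℤ} (hl : lam ≠ 0)
    (hx : σ (S.xp 1) = lam • S.xp e) : σ (S.xp (-1)) = lam⁻¹ • S.xp (-e) := by
  have h1 : σ (S.xp 1) * σ (S.xp (-1)) = 1 := by
    rw [← map_mul, xp_mul, show (1 + -1 : ℤ) = 0 by ring, xp_zero, map_one]
  rw [hx] at h1
  have h2 : (lam⁻¹ • S.xp (-e)) * (lam • S.xp e) = 1 := by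
    rw [smul_mul_assoc, mul_smul_comm, smul_smul, inv_mul_cancel₀ hl, one_smul, xp_mul,
      show (-e + e : ℤ) = 0 by ring, xp_zero]
  calc σ (S.xp (-1)) = ((lam⁻¹ • S.xp (-e)) * (lam • S.xp e)) * σ (S.xp (-1)) := by
        rw [h2, one_mul]
    _ = (lam⁻¹ • S.xp (-e)) * ((lam • S.xp e) * σ (S.xp (-1))) := by rw [mul_assoc]
    _ = lam⁻¹ • S.xp (-e) := by rw [h1, mul_one]

lemma apply_xp_zpow (σ : B ≃ₐ[K] B) (lam : Kˣ) (e : ℤ)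
    (hx : σ (S.xp 1) = ((lam : K)) • S.xp e) :
    ∀ l : ℤ, σ (S.xp l) = ((lam ^ l : Kˣ) : K) • S.xp (e * l) := by
  have hneg : σ (S.xp (-1)) = ((lam ^ (-1 : ℤ) : Kˣ) : K) • S.xp (e * (-1)) := by
    rw [S.apply_xp_inv σ (Units.ne_zero lam) hx]
    norm_num [zpow_neg]
  intro l
  induction l using Int.induction_on with
  | zero => simp [xp_zero]
  | succ n ih =>
      rw [show ((n : ℤ) + 1) = (n + 1 : ℤ) from rfl, ← S.xp_mul n 1, map_mul, ih, hx,
        smul_mul_assoc, mul_smul_comm, smul_smul, xp_mul, ← Units.val_mul, ← zpow_add_one]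
      rw [mul_add, mul_one]
  | pred n ih =>
      rw [show (-(n : ℤ) - 1) = (-(n : ℤ)) + (-1) by ring, ← S.xp_mul, map_mul, ih, hneg,
        smul_mul_assoc, mul_smul_comm, smul_smul, xp_mul, ← Units.val_mul, ← zpow_add]
      rw [mul_add]

theorem classify (σ : B ≃ₐ[K] B) :
    ∃ (lam : Kˣ) (e : ℤ) (p : ℤ →₀ K), (e = 1 ∨ e = -1) ∧
      σ (S.xp 1) = ((lam : K)) • S.xp e ∧
      σ S.h = ((e : K)) • S.h + S.Pp p := by
  have hnt : Nontrivial B := S.nontrivial_B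
  obtain ⟨lam, k, hx0⟩ := S.units_eq_smul_xp (Units.map (σ : B →* B) S.x)
  have hx : σ (S.xp 1) = ((lam : K)) • S.xp k := by
    rw [xp_one]
    rw [Units.coe_map] at hx0
    exact hx0
  obtain ⟨mu, l, hy0⟩ := S.units_eq_smul_xp (Units.map ((σ.symm :
    B ≃ₐ[K] B) : B →* B) S.x)
  have hy : σ.symm (S.xp 1) = ((mu : K)) • S.xp l := by
    rw [xp_one]
    rw [Units.coe_map] at hy0
    exact hy0
  have hcomp : S.xp 1 = (((mu : K)) * ((lam ^ l : Kˣ) : K)) • S.xp (k * l) := by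
    conv_lhs => rw [← σ.apply_symm_apply (S.xp 1)]
    rw [hy, map_smul, S.apply_xp_zpow σ lam k hx l, smul_smul]
  have h1 : (1 : K) • S.xp 1 = (((mu : K)) * ((lam ^ l : Kˣ) : K)) • S.xp (k * l) := by
    rw [one_smul]
    exact hcomp
  obtain ⟨hsc, hkl⟩ := S.smul_xp_inj (one_ne_zero (α := K)) h1
  have hk1 : k = 1 ∨ k = -1 := by
    have : IsUnit k := IsUnit.of_mul_eq_one l hkl.symm
    exact Int.isUnit_iff.mp this
  have hkne : k ≠ 0 := by rcases hk1 with h | h <;> omega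
  have hrel2 : S.xp k * σ S.h = (σ S.h - 1) * S.xp k := by
    have hσ := congrArg σ S.hrel
    rw [map_mul, map_mul, map_sub, map_one, ← S.xp_one, hx,
      smul_mul_assoc, mul_smul_comm] at hσ
    exact smul_right_injective B (Units.ne_zero lam) hσ
  obtain ⟨p, hp⟩ := S.shift_eq (σ S.h) k hkne hrel2
  have hinv : (((k : ℤ)) : K)⁻¹ = (((k : ℤ)) : K) := by
    rcases hk1 with h | h <;> subst h <;> norm_num
  exact ⟨lam, k, p, hk1, hx, by rw [hp, hinv]; rfl⟩

/-- Rescale the coefficients of a Laurent polynomial: `q_j ↦ μ^j q_j`. -/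
noncomputable def mscl (mu : Kˣ) (q : ℤ →₀ K) : ℤ →₀ K :=
  Finsupp.onFinset q.support (fun j => ((mu ^ j : Kˣ) : K) * q j)
    (fun j hj => Finsupp.mem_support_iff.mpr fun h0 => hj (by simp [h0]))

lemma mscl_apply (mu : Kˣ) (q : ℤ →₀ K) (j : ℤ) :
    mscl mu q j = ((mu ^ j : Kˣ) : K) * q j := rfl

lemma mscl_mscl (mu : Kˣ) (q : ℤ →₀ K) : mscl mu (mscl mu⁻¹ q) = q := by
  apply Finsupp.ext
  intro j
  rw [mscl_apply, mscl_apply, ← mul_assoc, ← Units.val_mul, ← mul_zpow, mul_inv_cancel,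
    one_zpow, Units.val_one, one_mul]

lemma mscl_neg (mu : Kˣ) (q : ℤ →₀ K) : mscl mu (-q) = - mscl mu q := by
  apply Finsupp.ext
  intro j
  rw [Finsupp.neg_apply, mscl_apply, mscl_apply, Finsupp.neg_apply, mul_neg]

lemma sAut_Pp (p q : ℤ →₀ K) : S.sAut p (S.Pp q) = S.Pp q := by
  rw [Pp, map_finsuppSum]
  refine Finsupp.sum_congr fun j _ => ?_
  rw [map_smul, sAut_xp]

lemma tAut_Pp (mu : Kˣ) (q : ℤ →₀ K) : S.tAut mu (S.Pp q) = S.Pp (mscl mu q) := by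
  rw [Pp, map_finsuppSum, Pp, Finsupp.sum, Finsupp.sum]
  have hR : ∑ j ∈ (mscl mu q).support, (mscl mu q) j • S.xp j
      = ∑ j ∈ q.support, (mscl mu q) j • S.xp j :=
    Finset.sum_subset Finsupp.support_onFinset_subset
      (fun x _ hx => by rw [Finsupp.notMem_support_iff.mp hx, zero_smul])
  rw [hR]
  refine Finset.sum_congr rfl fun j _ => ?_
  rw [map_smul, tAut_xp, smul_smul, mscl_apply, mul_comm]

lemma zAut_Pp_single0 (a : K) :
    S.zAut (S.Pp (Finsupp.single 0 a)) = S.Pp (Finsupp.single 0 a) := by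
  rw [Pp_single, map_smul, zAut_xp, neg_zero]

lemma sAut_mul (p q : ℤ →₀ K) : S.sAut p * S.sAut q = S.sAut (p + q) := by
  apply S.algEquiv_ext
  · simp only [AlgEquiv.mul_apply, sAut_h, map_add, sAut_Pp, Pp_add]
    abel
  · rw [AlgEquiv.mul_apply, sAut_xp, sAut_xp, sAut_xp]
  · rw [AlgEquiv.mul_apply, sAut_xp, sAut_xp, sAut_xp]

lemma comm_t_z (lam : Kˣ) : ⁅S.tAut lam, S.zAut⁆ = S.tAut (lam * lam) := by
  rw [commutatorElement_def, aut_inv', aut_inv', tAut_symm, zAut_symm]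
  apply S.algEquiv_ext
  · simp [AlgEquiv.mul_apply, zAut_h, tAut_h, map_neg]
  · simp only [AlgEquiv.mul_apply, zAut_xp, tAut_xp, map_smul, neg_neg, smul_smul,
      ← Units.val_mul]
    congr 1
    exact congrArg Units.val (by group)
  · simp only [AlgEquiv.mul_apply, zAut_xp, tAut_xp, map_smul, neg_neg, smul_smul,
      ← Units.val_mul]
    congr 1
    exact congrArg Units.val (by group)

lemma comm_t_s (mu : Kˣ) (q : ℤ →₀ K) :
    ⁅S.tAut mu, S.sAut q⁆ = S.sAut (mscl mu q - q) := by
  rw [commutatorElement_def, aut_inv', aut_inv', tAut_symm, sAut_symm]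
  have hsub : mscl mu q - q = mscl mu q + (-q) := sub_eq_add_neg _ _
  apply S.algEquiv_ext
  · rw [hsub]
    simp only [AlgEquiv.mul_apply, sAut_h, tAut_h, map_add, tAut_Pp, sAut_Pp, mscl_neg,
      mscl_mscl, Pp_add, Pp_neg, map_neg]
    abel
  · simp only [AlgEquiv.mul_apply, sAut_xp, tAut_xp, map_smul, smul_smul, ← Units.val_mul]
    rw [show (mu⁻¹ ^ (1 : ℤ) * mu ^ (1 : ℤ)) = 1 by group, Units.val_one, one_smul]
  · simp only [AlgEquiv.mul_apply, sAut_xp, tAut_xp, map_smul, smul_smul, ← Units.val_mul]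
    rw [show (mu⁻¹ ^ (-1 : ℤ) * mu ^ (-1 : ℤ)) = 1 by group, Units.val_one, one_smul]

lemma comm_z_s0 (a : K) :
    ⁅S.zAut, S.sAut (Finsupp.single 0 a)⁆ = S.sAut (Finsupp.single 0 (-(2 * a))) := by
  rw [commutatorElement_def, aut_inv', aut_inv', zAut_symm, sAut_symm]
  apply S.algEquiv_ext
  · simp only [AlgEquiv.mul_apply, sAut_h, zAut_h, map_add, map_neg, Pp_neg,
      Pp_single, map_smul, zAut_xp, neg_zero, sAut_xp, xp_zero, neg_neg, map_one]
    module
  · rw [AlgEquiv.mul_apply, AlgEquiv.mul_apply, AlgEquiv.mul_apply, sAut_xp, zAut_xp, sAut_xp,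
      zAut_xp, neg_neg, sAut_xp]
  · rw [AlgEquiv.mul_apply, AlgEquiv.mul_apply, AlgEquiv.mul_apply, sAut_xp, zAut_xp, sAut_xp,
      zAut_xp, neg_neg, sAut_xp]

omit [CharZero K] in
lemma two_val_zpow_ne_one [CharZero K] {j : ℤ} (hj : j ≠ 0) :
    ((Units.mk0 (2 : K) (two_ne_zero) ^ j : Kˣ) : K) ≠ 1 := by
  intro hcon
  have h2 : ((2 : K)) ^ j = 1 := by
    rw [← hcon]
    push_cast
    rfl
  have h3 : ((2 : ℚ)) ^ j = 1 := by
    have hinj : Function.Injective (algebraMap ℚ K) := (algebraMap ℚ K).injective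
    apply hinj
    rw [map_zpow₀, map_one, map_ofNat]
    exact h2
  exact hj (zpow_right_injective₀ (by norm_num : (0:ℚ) < 2) (by norm_num)
    (by rw [h3, zpow_zero] : ((2:ℚ)) ^ j = ((2:ℚ)) ^ (0 : ℤ)))

lemma t_sq_mem (mu : Kˣ) : S.tAut (mu * mu) ∈ commutator (B ≃ₐ[K] B) := by
  rw [← S.comm_t_z mu, commutator_def]
  exact Subgroup.commutator_mem_commutator (Subgroup.mem_top _) (Subgroup.mem_top _)

lemma sAut_mem (p : ℤ →₀ K) : S.sAut p ∈ commutator (B ≃ₐ[K] B) := by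
  classical
  set c0 := p 0 with hc0
  set p' := p - Finsupp.single 0 c0 with hp'
  have hp'0 : p' 0 = 0 := by
    rw [hp', Finsupp.sub_apply, Finsupp.single_eq_same, hc0, sub_self]
  have h1 : S.sAut (Finsupp.single 0 c0) ∈ commutator (B ≃ₐ[K] B) := by
    have hcz := S.comm_z_s0 (-(c0 / 2))
    rw [show -(2 * -(c0 / 2)) = c0 by ring] at hcz
    rw [← hcz, commutator_def]
    exact Subgroup.commutator_mem_commutator (Subgroup.mem_top _) (Subgroup.mem_top _)
  set two : Kˣ := Units.mk0 (2 : K) two_ne_zero with htwo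
  set qq : ℤ →₀ K := Finsupp.onFinset p'.support
    (fun j => ((((two ^ j : Kˣ) : K)) - 1)⁻¹ * p' j)
    (fun j hj => Finsupp.mem_support_iff.mpr fun h0 => hj (by simp [h0])) with hqq
  have hscl : mscl two qq - qq = p' := by
    apply Finsupp.ext
    intro j
    rw [Finsupp.sub_apply, mscl_apply]
    show ((two ^ j : Kˣ) : K) * (((((two ^ j : Kˣ) : K)) - 1)⁻¹ * p' j)
      - (((((two ^ j : Kˣ) : K)) - 1)⁻¹ * p' j) = p' j
    by_cases hj : j = 0
    · subst hj
      simp [hp'0]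
    · have hd : ((((two ^ j : Kˣ) : K)) - 1) ≠ 0 :=
        sub_ne_zero.mpr (two_val_zpow_ne_one hj)
      have hd' : ((two : Kˣ) : K) ^ j - 1 ≠ 0 := by
        push_cast at hd
        exact hd
      field_simp [hd']
  have h2 : S.sAut p' ∈ commutator (B ≃ₐ[K] B) := by
    rw [← hscl, ← S.comm_t_s two qq, commutator_def]
    exact Subgroup.commutator_mem_commutator (Subgroup.mem_top _) (Subgroup.mem_top _)
  have hsplit : S.sAut p = S.sAut (Finsupp.single 0 c0) * S.sAut p' := by
    rw [S.sAut_mul]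
    congr 1
    rw [hp']
    abel
  rw [hsplit]
  exact mul_mem h1 h2

lemma sigma_form (σ : B ≃ₐ[K] B) (mu : Kˣ) (p : ℤ →₀ K)
    (hx : σ (S.xp 1) = ((mu : K)) • S.xp 1) (hh : σ S.h = S.h + S.Pp p) :
    σ = S.sAut p * S.tAut mu := by
  apply S.algEquiv_ext
  · rw [hh, AlgEquiv.mul_apply, tAut_h, sAut_h]
  · rw [hx, AlgEquiv.mul_apply, tAut_xp, map_smul, sAut_xp, zpow_one]
  · rw [S.apply_xp_inv σ (Units.ne_zero mu) hx, AlgEquiv.mul_apply, tAut_xp, map_smul, sAut_xp]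
    congr 1
    rw [zpow_neg, zpow_one, ← Units.val_inv_eq_inv_val]

noncomputable def lamOf (σ : B ≃ₐ[K] B) : Kˣ := (S.classify σ).choose

noncomputable def epsOf (σ : B ≃ₐ[K] B) : ℤ := (S.classify σ).choose_spec.choose

noncomputable def pOf (σ : B ≃ₐ[K] B) : ℤ →₀ K :=
  (S.classify σ).choose_spec.choose_spec.choose

lemma classify_spec (σ : B ≃ₐ[K] B) :
    (S.epsOf σ = 1 ∨ S.epsOf σ = -1) ∧
      σ (S.xp 1) = ((S.lamOf σ : K)) • S.xp (S.epsOf σ) ∧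
      σ S.h = (((S.epsOf σ : ℤ) : K)) • S.h + S.Pp (S.pOf σ) :=
  (S.classify σ).choose_spec.choose_spec.choose_spec

lemma unique_inv (σ : B ≃ₐ[K] B) {mu : Kˣ} {e : ℤ}
    (hx : σ (S.xp 1) = ((mu : K)) • S.xp e) : S.lamOf σ = mu ∧ S.epsOf σ = e := by
  obtain ⟨-, hx', -⟩ := S.classify_spec σ
  obtain ⟨h1, h2⟩ := S.smul_xp_inj (Units.ne_zero (S.lamOf σ)) (hx'.symm.trans hx)
  exact ⟨Units.ext h1, h2⟩

omit [CharZero K] in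
lemma quot_comm (a b : Kˣ ⧸ (powMonoidHom 2 : Kˣ →* Kˣ).range) : a * b = b * a := by
  refine QuotientGroup.induction_on a fun x => QuotientGroup.induction_on b fun y => ?_
  rw [← QuotientGroup.mk_mul, ← QuotientGroup.mk_mul, mul_comm]

/-- The abelianization homomorphism `σ ↦ (ε, λ mod squares)`. -/
noncomputable def phi : (B ≃ₐ[K] B) →*
    Multiplicative (ZMod 2) × (Kˣ ⧸ (powMonoidHom 2 : Kˣ →* Kˣ).range) where
  toFun σ := (Multiplicative.ofAdd (if S.epsOf σ = 1 then (0 : ZMod 2) else 1),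
    (QuotientGroup.mk (S.lamOf σ) : Kˣ ⧸ (powMonoidHom 2 : Kˣ →* Kˣ).range))
  map_one' := by
    obtain ⟨hl, he⟩ := S.unique_inv 1 (mu := 1) (e := 1)
      (by rw [AlgEquiv.one_apply, Units.val_one, one_smul])
    refine Prod.ext ?_ ?_
    · show Multiplicative.ofAdd _ = 1
      rw [he, if_pos rfl, ofAdd_zero]
    · show QuotientGroup.mk _ = 1
      rw [hl, QuotientGroup.mk_one]
  map_mul' σ τ := by
    obtain ⟨heσ1, hxσ, -⟩ := S.classify_spec σ
    obtain ⟨heτ1, hxτ, -⟩ := S.classify_spec τ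
    have hmulx : (σ * τ) (S.xp 1) =
        (((S.lamOf τ * (S.lamOf σ) ^ (S.epsOf τ) : Kˣ)) : K) •
          S.xp (S.epsOf σ * S.epsOf τ) := by
      rw [AlgEquiv.mul_apply, hxτ, map_smul,
        S.apply_xp_zpow σ (S.lamOf σ) (S.epsOf σ) hxσ (S.epsOf τ), smul_smul, ← Units.val_mul]
    obtain ⟨hl, he⟩ := S.unique_inv (σ * τ) hmulx
    have hq : ∀ u : Kˣ, (QuotientGroup.mk (u * u) :
        Kˣ ⧸ (powMonoidHom 2 : Kˣ →* Kˣ).range) = 1 := by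
      intro u
      rw [QuotientGroup.eq_one_iff]
      exact ⟨u, by rw [powMonoidHom_apply, pow_two]⟩
    have hinv : ∀ u : Kˣ, (QuotientGroup.mk u⁻¹ :
        Kˣ ⧸ (powMonoidHom 2 : Kˣ →* Kˣ).range) = QuotientGroup.mk u := by
      intro u
      have hu2 : (QuotientGroup.mk u : Kˣ ⧸ (powMonoidHom 2 : Kˣ →* Kˣ).range) *
          QuotientGroup.mk u = 1 := by
        rw [← QuotientGroup.mk_mul, hq]
      rw [QuotientGroup.mk_inv]
      exact inv_eq_of_mul_eq_one_right hu2
    refine Prod.ext ?_ ?_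
    · show Multiplicative.ofAdd _ = Multiplicative.ofAdd _ * Multiplicative.ofAdd _
      rw [← ofAdd_add]
      congr 1
      rw [he]
      rcases heσ1 with h | h <;> rcases heτ1 with h' | h' <;> rw [h, h'] <;> decide
    · show QuotientGroup.mk _ = QuotientGroup.mk _ * QuotientGroup.mk _
      rw [hl]
      rcases heτ1 with h' | h'
      · rw [h', zpow_one, QuotientGroup.mk_mul]
        exact quot_comm _ _
      · rw [h', zpow_neg, zpow_one, QuotientGroup.mk_mul, hinv]
        exact quot_comm _ _

lemma mem_ker_form (σ : B ≃ₐ[K] B) : σ ∈ S.phi.ker ↔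
    ∃ (mu : Kˣ) (p : ℤ →₀ K), σ (S.xp 1) = (((mu * mu : Kˣ)) : K) • S.xp 1 ∧
      σ S.h = S.h + S.Pp p := by
  constructor
  · intro hker
    have hk : S.phi σ = 1 := hker
    have h1 : Multiplicative.ofAdd (if S.epsOf σ = 1 then (0 : ZMod 2) else 1) =
        (1 : Multiplicative (ZMod 2)) := congrArg Prod.fst hk
    have h2' : (QuotientGroup.mk (S.lamOf σ) :
        Kˣ ⧸ (powMonoidHom 2 : Kˣ →* Kˣ).range) = 1 := congrArg Prod.snd hk
    have heps : S.epsOf σ = 1 := by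
      by_contra hne
      rw [if_neg hne] at h1
      exact absurd h1 (by decide)
    rw [QuotientGroup.eq_one_iff] at h2'
    obtain ⟨mu, hmu⟩ := h2'
    obtain ⟨-, hx, hh⟩ := S.classify_spec σ
    refine ⟨mu, S.pOf σ, ?_, ?_⟩
    · rw [hx, heps]
      congr 2
      rw [← hmu, powMonoidHom_apply, pow_two]
    · rw [hh, heps, Int.cast_one, one_smul]
  · rintro ⟨mu, p, hx, hh⟩
    rw [MonoidHom.mem_ker]
    obtain ⟨hl, he⟩ := S.unique_inv σ hx
    refine Prod.ext ?_ ?_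
    · show Multiplicative.ofAdd _ = 1
      rw [he, if_pos rfl, ofAdd_zero]
    · show QuotientGroup.mk _ = 1
      rw [hl, QuotientGroup.eq_one_iff]
      exact ⟨mu, by rw [powMonoidHom_apply, pow_two]⟩

lemma ker_eq_commutator : S.phi.ker = commutator (B ≃ₐ[K] B) := by
  apply le_antisymm
  · intro σ hker
    obtain ⟨mu, p, hx, hh⟩ := (S.mem_ker_form σ).mp hker
    rw [S.sigma_form σ (mu * mu) p hx hh]
    exact mul_mem (S.sAut_mem p) (S.t_sq_mem mu)
  · rw [commutator_def, Subgroup.commutator_le]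
    intro g _ h _
    rw [MonoidHom.mem_ker, map_commutatorElement]
    refine commutatorElement_eq_one_iff_mul_comm.mpr ?_
    exact Prod.ext (mul_comm _ _) (quot_comm _ _)

lemma phi_surjective : Function.Surjective S.phi := by
  rintro ⟨z, qc⟩
  obtain ⟨lam, rfl⟩ := QuotientGroup.mk_surjective qc
  have hphit : S.phi (S.tAut lam) =
      (Multiplicative.ofAdd (0 : ZMod 2), QuotientGroup.mk lam) := by
    obtain ⟨hl, he⟩ := S.unique_inv (S.tAut lam) (mu := lam) (e := 1)
      (by rw [tAut_xp, zpow_one])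
    refine Prod.ext ?_ ?_
    · show Multiplicative.ofAdd _ = _
      rw [he, if_pos rfl]
    · show QuotientGroup.mk _ = _
      rw [hl]
  have hphiz : S.phi S.zAut =
      (Multiplicative.ofAdd (1 : ZMod 2), QuotientGroup.mk 1) := by
    obtain ⟨hl, he⟩ := S.unique_inv S.zAut (mu := 1) (e := -1)
      (by rw [zAut_xp, Units.val_one, one_smul])
    refine Prod.ext ?_ ?_
    · show Multiplicative.ofAdd _ = _
      rw [he, if_neg (by norm_num)]
    · show QuotientGroup.mk _ = _
      rw [hl]
  have hz2 : z = Multiplicative.ofAdd (0 : ZMod 2) ∨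
      z = Multiplicative.ofAdd (1 : ZMod 2) := by
    have hw := (by decide : ∀ w : ZMod 2, w = 0 ∨ w = 1) (Multiplicative.toAdd z)
    rcases hw with h | h
    · left; rw [← ofAdd_toAdd z, h]
    · right; rw [← ofAdd_toAdd z, h]
  rcases hz2 with rfl | rfl
  · exact ⟨S.tAut lam, hphit⟩
  · refine ⟨S.zAut * S.tAut lam, ?_⟩
    rw [map_mul, hphit, hphiz, Prod.mk_mul_mk]
    refine Prod.ext ?_ ?_
    · show _ * _ = _
      rw [← ofAdd_add]
      norm_num
    · show _ * _ = _
      rw [← QuotientGroup.mk_mul, one_mul]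

set_option maxHeartbeats 1000000 in
theorem final :
    (∀ σ : B ≃ₐ[K] B, σ ∈ commutator (B ≃ₐ[K] B) ↔
      ∃ (lam : Kˣ) (p : ℤ →₀ K),
        σ ((S.x : Bˣ) : B) = algebraMap K B ((lam : K) ^ 2) * ((S.x : Bˣ) : B) ∧
        σ S.h = S.h + p.sum fun i a => a • S.xp i) ∧
    Nonempty ((B ≃ₐ[K] B) ⧸ commutator (B ≃ₐ[K] B) ≃*
      Multiplicative (ZMod 2) × (Kˣ ⧸ (powMonoidHom 2 : Kˣ →* Kˣ).range)) := by
  constructor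
  · intro σ
    rw [← S.ker_eq_commutator, S.mem_ker_form σ]
    constructor
    · rintro ⟨mu, p, hx, hh⟩
      refine ⟨mu, p, ?_, hh⟩
      calc σ ((S.x : Bˣ) : B) = σ (S.xp 1) := by rw [S.xp_one]
        _ = (((mu * mu : Kˣ)) : K) • S.xp 1 := hx
        _ = algebraMap K B ((mu : K) ^ 2) * ((S.x : Bˣ) : B) := by
            rw [Algebra.smul_def, S.xp_one, Units.val_mul, pow_two]
    · rintro ⟨lam, p, hx, hh⟩
      refine ⟨lam, p, ?_, hh⟩
      rw [S.xp_one, hx, ← Algebra.smul_def,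
        show ((lam * lam : Kˣ) : K) = ((lam : K)) ^ 2 by rw [Units.val_mul, pow_two]]
  · have e1 : ((B ≃ₐ[K] B) ⧸ commutator (B ≃ₐ[K] B)) ≃* ((B ≃ₐ[K] B) ⧸ S.phi.ker) :=
      QuotientGroup.quotientMulEquivOfEq S.ker_eq_commutator.symm
    have e2 := QuotientGroup.quotientKerEquivOfSurjective (G := B ≃ₐ[K] B)
      (H := Multiplicative (ZMod 2) × (Kˣ ⧸ (powMonoidHom 2 : Kˣ →* Kˣ).range)) S.phi S.phi_surjective
    exact ⟨e1.trans e2⟩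

end GWA

/- `B₁ = K[H][x, x^{−1}; σ]`, `σ(H) = H − 1`, is axiomatised as a `K`-algebra `B` with an
element `h`, a unit `x`, the commutation rule `x h = (h − 1) x`, and `K`-basis
`{h^m x^k : m ∈ ℕ, k ∈ ℤ}`. -/
/-- The commutator subgroup of `G = Aut_{K-alg}(B₁)` is `{t_{λ²}} ⋉ Sh₁`, i.e. it consists of
the automorphisms `x ↦ λ² x`, `H ↦ H + p(x)`; and `G/[G,G] ≅ ℤ/2 × K^*/(K^*)²`. -/
theorem commutator_aut_B1 (K B : Type*) [Field K] [CharZero K] [Ring B] [Algebra K B]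
    (h : B) (x : Bˣ) (hrel : (x : B) * h = (h - 1) * (x : B))
    (b : Module.Basis (ℕ × ℤ) K B) (hb : ∀ m : ℕ, ∀ k : ℤ, b (m, k) = h ^ m * ((x ^ k : Bˣ) : B)) :
    (∀ σ : B ≃ₐ[K] B, σ ∈ commutator (B ≃ₐ[K] B) ↔
      ∃ (lam : Kˣ) (p : ℤ →₀ K),
        σ (x : B) = algebraMap K B ((lam : K) ^ 2) * (x : B) ∧
        σ h = h + p.sum fun i a => a • ((x ^ i : Bˣ) : B)) ∧
    Nonempty ((B ≃ₐ[K] B) ⧸ commutator (B ≃ₐ[K] B) ≃*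
      Multiplicative (ZMod 2) × (Kˣ ⧸ (powMonoidHom 2 : Kˣ →* Kˣ).range)) := by
  exact GWA.final (S := ⟨h, x, hrel, b, hb⟩)
end

section
/- Let L_n = K[z₁^{±1},…,z_n^{±1}] be the Laurent polynomial algebra and L_n' := {(p₁,…,p_n) ∈ L_n^n : z_i ∂p_j/∂z_i = z_j ∂p_i/∂z_j for all i ≠ j}. Then L_n' is a K-subspace of L_n^n with K-basis consisting of the constant tuples together with the elements b_α = (λ_i z^α) for 0 ≠ α ∈ ℤ^n, where λ_i = 0 if α_i = 0, λ_i = 1 if i = min(Supp α), and λ_i = α_i/α_{min(Supp α)} if α_i ≠ 0; i.e., L_n' = K^n ⊕ ⊕_{0≠α∈ℤ^n} K b_α. -/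
/-- The Laurent polynomial algebra `L_n = K[z₁^{±1},…,z_n^{±1}]`, modelled as finitely supported
functions on the monomial exponents `ℤ^n`. -/
abbrev Laur (K : Type*) [Field K] (n : ℕ) := (Fin n → ℤ) →₀ K

/-- The `K`-linear operator `z_i ∂/∂z_i` on `L_n`, acting on the monomial `z^α` by `α_i z^α`. -/
noncomputable def Dz (K : Type*) [Field K] (n : ℕ) (i : Fin n) : Laur K n →ₗ[K] Laur K n :=
  Finsupp.lsum K fun α => LinearMap.toSpanSingleton K (Laur K n) (Finsupp.single α ((α i : K)))

/-- `L_n' = {(p₁,…,p_n) : z_i ∂p_j/∂z_i = z_j ∂p_i/∂z_j for all i ≠ j}`, a `K`-subspace of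
`L_n^n`. -/
noncomputable def LaurC (K : Type*) [Field K] (n : ℕ) : Submodule K (Fin n → Laur K n) where
  carrier := {p | ∀ i j, i ≠ j → Dz K n i (p j) = Dz K n j (p i)}
  add_mem' := by
    intro p q hp hq i j hij
    simp only [Pi.add_apply, map_add, hp i j hij, hq i j hij]
  zero_mem' := by intro i j hij; simp
  smul_mem' := by
    intro c p hp i j hij
    simp only [Pi.smul_apply, map_smul, hp i j hij]

/-- The minimal element of the support of a nonzero `α ∈ ℤ^n`. -/
noncomputable def minSupp {n : ℕ} (α : Fin n → ℤ) (hα : α ≠ 0) : Fin n :=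
  (Finset.univ.filter fun i => α i ≠ 0).min' (by
    obtain ⟨i, hi⟩ := Function.ne_iff.mp hα
    exact ⟨i, by simpa using hi⟩)

/-- The element `b_α = (λ_i z^α)_{i} ∈ L_n^n`, where `λ_i = 0` if `α_i = 0`, `λ_i = 1` if
`i = min(Supp α)`, and `λ_i = α_i / α_{min(Supp α)}` otherwise. -/
noncomputable def bAlpha (K : Type*) [Field K] {n : ℕ} (α : Fin n → ℤ) (hα : α ≠ 0) :
    Fin n → Laur K n := fun i =>
  Finsupp.single α
    (if α i = 0 then 0 else if i = minSupp α hα then 1 else (α i : K) / (α (minSupp α hα) : K))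

section Aux

variable {K : Type*} [Field K] {n : ℕ}

lemma minSupp_ne {α : Fin n → ℤ} (hα : α ≠ 0) : α (minSupp α hα) ≠ 0 := by
  have := Finset.min'_mem (Finset.univ.filter fun i => α i ≠ 0)
    (by obtain ⟨i, hi⟩ := Function.ne_iff.mp hα; exact ⟨i, by simpa using hi⟩)
  simpa [minSupp] using this

/-- The coefficient of `b_α` at index `i`. -/
noncomputable def lam (K : Type*) [Field K] {n : ℕ} (α : Fin n → ℤ) (hα : α ≠ 0) (i : Fin n) : K :=
  if α i = 0 then 0 else if i = minSupp α hα then 1 else (α i : K) / (α (minSupp α hα) : K)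

lemma bAlpha_eq (α : Fin n → ℤ) (hα : α ≠ 0) (i : Fin n) :
    bAlpha K α hα i = Finsupp.single α (lam K α hα i) := rfl

lemma lam_eq [CharZero K] (α : Fin n → ℤ) (hα : α ≠ 0) (i : Fin n) :
    lam K α hα i = (α i : K) / (α (minSupp α hα) : K) := by
  have hm : ((α (minSupp α hα) : K)) ≠ 0 := by
    exact_mod_cast Int.cast_ne_zero.mpr (minSupp_ne hα)
  unfold lam
  by_cases h0 : α i = 0
  · simp [h0]
  · by_cases hmin : i = minSupp α hα
    · subst hmin; simp [h0, div_self hm]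
    · simp [h0, hmin]

lemma Dz_single (i : Fin n) (α : Fin n → ℤ) (k : K) :
    Dz K n i (Finsupp.single α k) = Finsupp.single α (k * (α i : K)) := by
  rw [Dz, Finsupp.lsum_single, LinearMap.toSpanSingleton_apply, Finsupp.smul_single,
    smul_eq_mul]

lemma Dz_apply (i : Fin n) (q : Laur K n) (β : Fin n → ℤ) :
    Dz K n i q β = q β * (β i : K) := by
  classical
  rw [Dz, Finsupp.lsum_apply]
  have : (q.sum fun α k => (LinearMap.toSpanSingleton K (Laur K n)
      (Finsupp.single α ((α i : K)))) k) β
      = q.sum fun α k => (Finsupp.single α (k * (α i : K))) β := by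
    rw [Finsupp.sum_apply]
    refine Finsupp.sum_congr fun α _ => ?_
    rw [LinearMap.toSpanSingleton_apply, Finsupp.smul_single, smul_eq_mul]
  rw [this]
  simp only [Finsupp.single_apply]
  rw [Finsupp.sum_ite_eq' q β (fun α k => k * (α i : K))]
  split_ifs with h
  · rfl
  · rw [Finsupp.notMem_support_iff.mp h, zero_mul]

/-- The basis family, in the ambient module. -/
noncomputable def vFam (K : Type*) [Field K] (n : ℕ) :
    (Fin n ⊕ {α : Fin n → ℤ // α ≠ 0}) → (Fin n → Laur K n) :=
  Sum.elim (fun i j => if j = i then Finsupp.single 0 1 else 0)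
    (fun α => bAlpha K α.1 α.2)

lemma vFam_mem [CharZero K] (s : Fin n ⊕ {α : Fin n → ℤ // α ≠ 0}) :
    vFam K n s ∈ LaurC K n := by
  intro i j hij
  cases s with
  | inl i₀ =>
    simp only [vFam, Sum.elim_inl]
    by_cases h1 : j = i₀ <;> by_cases h2 : i = i₀ <;>
      simp [h1, h2, Dz_single]
  | inr α =>
    simp only [vFam, Sum.elim_inr, bAlpha_eq, Dz_single, lam_eq]
    congr 1
    have hm : ((α.1 (minSupp α.1 α.2) : K)) ≠ 0 :=
      Int.cast_ne_zero.mpr (minSupp_ne α.2)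
    field_simp

lemma sum_mul_indicator (c : (Fin n ⊕ {α : Fin n → ℤ // α ≠ 0}) →₀ K)
    (w : (Fin n ⊕ {α : Fin n → ℤ // α ≠ 0}) → K) (s₀ : Fin n ⊕ {α : Fin n → ℤ // α ≠ 0})
    (hw : ∀ s, s ≠ s₀ → w s = 0) :
    (c.sum fun s k => k * w s) = c s₀ * w s₀ := by
  classical
  rw [Finsupp.sum]
  rw [Finset.sum_eq_single s₀ (fun b _ hb => by rw [hw b hb, mul_zero])
    (fun h => by rw [Finsupp.notMem_support_iff.mp h, zero_mul])]

lemma lc_eval (c : (Fin n ⊕ {α : Fin n → ℤ // α ≠ 0}) →₀ K) (j : Fin n) (β : Fin n → ℤ) :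
    (Finsupp.linearCombination K (vFam K n) c) j β
      = c.sum fun s k => k * (vFam K n s j β) := by
  classical
  rw [Finsupp.linearCombination_apply, Finsupp.sum, Finset.sum_apply, Finsupp.finset_sum_apply,
    Finsupp.sum]
  exact Finset.sum_congr rfl fun s _ => by simp

lemma vFam_eval_zero (s : Fin n ⊕ {α : Fin n → ℤ // α ≠ 0}) (j : Fin n) :
    vFam K n s j 0 = if s = Sum.inl j then 1 else 0 := by
  cases s with
  | inl i =>
    by_cases h : j = i
    · subst h; simp [vFam, Finsupp.single_apply]
    · simp [vFam, h, Ne.symm h, Finsupp.single_apply]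
  | inr α =>
    simp only [vFam, Sum.elim_inr, bAlpha_eq, Finsupp.single_apply]
    simp [α.2]

lemma vFam_eval_ne (s : Fin n ⊕ {α : Fin n → ℤ // α ≠ 0}) (j : Fin n) (β : Fin n → ℤ)
    (hβ : β ≠ 0) :
    vFam K n s j β = if s = Sum.inr ⟨β, hβ⟩ then lam K β hβ j else 0 := by
  cases s with
  | inl i =>
    by_cases h : j = i <;> simp [vFam, h, Finsupp.single_apply, Ne.symm hβ]
  | inr α =>
    simp only [vFam, Sum.elim_inr, bAlpha_eq, Finsupp.single_apply]
    by_cases h : α.1 = β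
    · have : α = ⟨β, hβ⟩ := Subtype.ext h
      subst this
      simp
    · have : ¬ (Sum.inr α = (Sum.inr ⟨β, hβ⟩ : Fin n ⊕ {α : Fin n → ℤ // α ≠ 0})) := by
        simp [Subtype.ext_iff, h]
      simp [h, this]

lemma vFam_linearIndependent [CharZero K] : LinearIndependent K (vFam K n) := by
  rw [linearIndependent_iff]
  intro c hc
  ext s
  cases s with
  | inl j =>
    have h0 : (Finsupp.linearCombination K (vFam K n) c) j 0 = 0 := by
      rw [hc]; rfl
    rw [lc_eval] at h0
    have := sum_mul_indicator c (fun s => vFam K n s j 0) (Sum.inl j)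
      (fun s hs => by show vFam K n s j 0 = 0; rw [vFam_eval_zero]; simp [hs])
    rw [this] at h0
    simp only [vFam_eval_zero, if_pos rfl, mul_one] at h0
    simpa using h0
  | inr α =>
    have h0 : (Finsupp.linearCombination K (vFam K n) c) (minSupp α.1 α.2) α.1 = 0 := by
      rw [hc]; rfl
    rw [lc_eval] at h0
    have := sum_mul_indicator c (fun s => vFam K n s (minSupp α.1 α.2) α.1) (Sum.inr α)
      (fun s hs => by
        show vFam K n s (minSupp α.1 α.2) α.1 = 0
        rw [vFam_eval_ne s _ _ α.2]
        simp only [Subtype.coe_eta]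
        simp [hs])
    rw [this] at h0
    have h0' : c (Sum.inr α) * vFam K n (Sum.inr α) (minSupp α.1 α.2) α.1 = 0 := h0
    have hvv : vFam K n (Sum.inr α) (minSupp α.1 α.2) α.1 = 1 := by
      simp only [vFam, Sum.elim_inr, bAlpha_eq, Finsupp.single_apply, if_pos rfl]
      simp [lam, minSupp_ne α.2]
    rw [hvv, mul_one] at h0'
    simpa using h0'

lemma vFam_span [CharZero K] (p : Fin n → Laur K n) (hp : p ∈ LaurC K n) :
    p ∈ Submodule.span K (Set.range (vFam K n)) := by
  classical
  rw [← Finsupp.range_linearCombination]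
  set T : Finset (Fin n → ℤ) := Finset.univ.biUnion (fun j => (p j).support) with hT
  set f : (Fin n ⊕ {α : Fin n → ℤ // α ≠ 0}) → K :=
    Sum.elim (fun j => p j 0) (fun γ => p (minSupp γ.1 γ.2) γ.1) with hf
  set c : (Fin n ⊕ {α : Fin n → ℤ // α ≠ 0}) →₀ K :=
    Finsupp.onFinset ((Finset.univ.image Sum.inl) ∪
      ((T.subtype (fun β => β ≠ 0)).image Sum.inr)) f
      (by
        intro a ha
        cases a with
        | inl j => simp
        | inr γ =>
          simp only [Finset.mem_union, Finset.mem_image]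
          right
          refine ⟨γ, ?_, rfl⟩
          rw [Finset.mem_subtype]
          rw [hT]
          simp only [Finset.mem_biUnion, Finset.mem_univ, true_and]
          exact ⟨minSupp γ.1 γ.2, Finsupp.mem_support_iff.mpr ha⟩) with hcdef
  refine ⟨c, ?_⟩
  funext j
  ext β
  rw [lc_eval]
  by_cases hβ : β = 0
  · subst hβ
    rw [sum_mul_indicator c (fun s => vFam K n s j 0) (Sum.inl j)
      (fun s hs => by show vFam K n s j 0 = 0; rw [vFam_eval_zero]; simp [hs])]
    simp only [vFam_eval_zero, if_pos rfl, mul_one]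
    simp [hcdef, hf]
  · rw [sum_mul_indicator c (fun s => vFam K n s j β) (Sum.inr ⟨β, hβ⟩)
      (fun s hs => by show vFam K n s j β = 0; rw [vFam_eval_ne s _ _ hβ]; simp [hs])]
    show c (Sum.inr ⟨β, hβ⟩) * vFam K n (Sum.inr ⟨β, hβ⟩) j β = _
    rw [vFam_eval_ne _ _ _ hβ, if_pos rfl]
    have hcval : c (Sum.inr ⟨β, hβ⟩) = p (minSupp β hβ) β := by
      simp [hcdef, hf]
    rw [hcval, lam_eq]
    set m := minSupp β hβ with hm
    have hmK : ((β m : K)) ≠ 0 := Int.cast_ne_zero.mpr (minSupp_ne hβ)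
    by_cases hj : j = m
    · subst hj
      field_simp
    · have h1 := hp m j (fun h => hj h.symm)
      have h3 : Dz K n m (p j) β = Dz K n j (p m) β := congrArg (fun q => q β) h1
      rw [Dz_apply, Dz_apply] at h3
      rw [mul_div_assoc', div_eq_iff hmK]
      exact h3.symm


lemma exists_basis_of {ι M : Type*} [AddCommGroup M] [Module K M] (p : Submodule K M)
    (v : ι → M) (hv : ∀ s, v s ∈ p) (hli : LinearIndependent K v)
    (hsp : ∀ x ∈ p, x ∈ Submodule.span K (Set.range v)) :
    ∃ bas : Module.Basis ι K p, ∀ s, (bas s : M) = v s := by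
  set v' : ι → p := fun s => ⟨v s, hv s⟩ with hv'
  have hcomp : p.subtype ∘ v' = v := rfl
  have hli' : LinearIndependent K v' :=
    LinearIndependent.of_comp p.subtype (by rw [hcomp]; exact hli)
  have hsp' : ⊤ ≤ Submodule.span K (Set.range v') := by
    intro x _
    have h1 : (x : M) ∈ Submodule.span K (Set.range v) := hsp x.1 x.2
    have h2 : Set.range v = p.subtype '' (Set.range v') := by
      rw [← Set.range_comp, hcomp]
    rw [h2, ← Submodule.map_span] at h1
    obtain ⟨q, hq, hqp⟩ := h1
    have : q = x := Subtype.ext hqp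
    rwa [this] at hq
  exact ⟨Module.Basis.mk hli' hsp', fun s => by rw [Module.Basis.mk_apply]⟩

end Aux

/-- `L_n' = K^n ⊕ ⊕_{0≠α∈ℤ^n} K b_α`: the constant tuples together with the `b_α` form a
`K`-basis of `L_n'`. -/
theorem LaurC_basis (K : Type*) [Field K] [CharZero K] (n : ℕ) :
    ∃ bas : Module.Basis ((Fin n) ⊕ {α : Fin n → ℤ // α ≠ 0}) K (LaurC K n),
      (∀ i : Fin n, ((bas (Sum.inl i) : Fin n → Laur K n)) =
        fun j => if j = i then Finsupp.single 0 1 else 0) ∧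
      (∀ α : {α : Fin n → ℤ // α ≠ 0},
        ((bas (Sum.inr α) : Fin n → Laur K n)) = bAlpha K α.1 α.2) := by
  obtain ⟨bas, hbas⟩ := exists_basis_of (LaurC K n) (vFam K n) vFam_mem
    vFam_linearIndependent (fun x hx => vFam_span x hx)
  exact ⟨bas, fun i => by rw [hbas]; rfl, fun α => by rw [hbas]; rfl⟩
end

section
/- Let B_n = K[H₁,…,H_n][z₁^{±1},…,z_n^{±1}; σ₁,…,σ_n] with σ_i(H_j) = H_j − δ_{ij}. For p₁,…,p_n ∈ K[z₁^{±1},…,z_n^{±1}], the elements H₁+p₁, …, H_n+p_n of B_n pairwise commute if and only if z_i ∂p_j/∂z_i = z_j ∂p_i/∂z_j for all i ≠ j. -/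
section Aux
variable {B : Type*} [Ring B]

lemma aux_inv_rel (u : Bˣ) (x c : B) (hc : ∀ y : B, Commute c y)
    (hrel : (u : B) * x = (x - c) * u) :
    ((u⁻¹ : Bˣ) : B) * x = (x + c) * ((u⁻¹ : Bˣ) : B) := by
  have h1 : x * ((u⁻¹ : Bˣ) : B) = ((u⁻¹ : Bˣ) : B) * (x - c) := by
    apply (Units.mul_right_inj u).mp
    rw [← mul_assoc, hrel, mul_assoc, Units.mul_inv, mul_one, ← mul_assoc, Units.mul_inv, one_mul]
  have h2 : ((u⁻¹ : Bˣ) : B) * x = ((u⁻¹ : Bˣ) : B) * (x - c) + ((u⁻¹ : Bˣ) : B) * c := by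
    noncomm_ring
  rw [h2, ← h1, ← (hc ((u⁻¹ : Bˣ) : B)).eq]
  noncomm_ring

lemma aux_zpow_rel (u : Bˣ) (x c : B) (hc : ∀ y : B, Commute c y)
    (hrel : (u : B) * x = (x - c) * u) :
    ∀ m : ℤ, ((u ^ m : Bˣ) : B) * x = (x - m • c) * ((u ^ m : Bˣ) : B) := by
  intro m
  induction m using Int.induction_on with
  | zero => simp
  | succ k ih =>
    have hu : (u ^ ((k : ℤ) + 1)) = u ^ (k : ℤ) * u := by rw [zpow_add_one]
    rw [hu, Units.val_mul]
    calc ((u ^ (k : ℤ) : Bˣ) : B) * (u : B) * x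
        = ((u ^ (k : ℤ) : Bˣ) : B) * ((x - c) * (u : B)) := by rw [mul_assoc, hrel]
      _ = (((u ^ (k : ℤ) : Bˣ) : B) * x - ((u ^ (k : ℤ) : Bˣ) : B) * c) * (u : B) := by
          noncomm_ring
      _ = ((x - (k : ℤ) • c) * ((u ^ (k : ℤ) : Bˣ) : B) - c * ((u ^ (k : ℤ) : Bˣ) : B)) * (u : B) := by
          rw [ih, (hc _).eq]
      _ = (x - ((k : ℤ) + 1) • c) * (((u ^ (k : ℤ) : Bˣ) : B) * (u : B)) := by
          rw [add_smul, one_smul]; noncomm_ring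
  | pred k ih =>
    have hu : (u ^ (-(k : ℤ) - 1)) = u ^ (-(k : ℤ)) * u⁻¹ := by rw [zpow_sub_one]
    rw [hu, Units.val_mul]
    have hinv := aux_inv_rel u x c hc hrel
    calc ((u ^ (-(k : ℤ)) : Bˣ) : B) * ((u⁻¹ : Bˣ) : B) * x
        = ((u ^ (-(k : ℤ)) : Bˣ) : B) * ((x + c) * ((u⁻¹ : Bˣ) : B)) := by rw [mul_assoc, hinv]
      _ = (((u ^ (-(k : ℤ)) : Bˣ) : B) * x + ((u ^ (-(k : ℤ)) : Bˣ) : B) * c) * ((u⁻¹ : Bˣ) : B) := by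
          noncomm_ring
      _ = ((x - (-(k : ℤ)) • c) * ((u ^ (-(k : ℤ)) : Bˣ) : B) + c * ((u ^ (-(k : ℤ)) : Bˣ) : B)) * ((u⁻¹ : Bˣ) : B) := by
          rw [ih, (hc _).eq]
      _ = (x - (-(k : ℤ) - 1) • c) * (((u ^ (-(k : ℤ)) : Bˣ) : B) * ((u⁻¹ : Bˣ) : B)) := by
          rw [sub_smul, one_smul]; noncomm_ring

lemma aux_prod_rel (x : B) : ∀ (l : List (B × B)),
    (∀ pc ∈ l, (∀ y : B, Commute pc.2 y) ∧ pc.1 * x = (x - pc.2) * pc.1) →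
    (l.map Prod.fst).prod * x = (x - (l.map Prod.snd).sum) * (l.map Prod.fst).prod := by
  intro l
  induction l with
  | nil => simp
  | cons pc l ih =>
    intro hl
    obtain ⟨hc, hrel⟩ := hl pc List.mem_cons_self
    have ih' := ih fun q hq => hl q (List.mem_cons_of_mem _ hq)
    have hS : ∀ y : B, Commute (l.map Prod.snd).sum y := by
      intro y
      apply Commute.list_sum_left
      intro s hs
      obtain ⟨q, hq, rfl⟩ := List.mem_map.mp hs
      exact (hl q (List.mem_cons_of_mem _ hq)).1 y
    simp only [List.map_cons, List.prod_cons, List.sum_cons]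
    calc pc.1 * (l.map Prod.fst).prod * x
        = pc.1 * ((l.map Prod.fst).prod * x) := by rw [mul_assoc]
      _ = pc.1 * ((x - (l.map Prod.snd).sum) * (l.map Prod.fst).prod) := by rw [ih']
      _ = (pc.1 * x - pc.1 * (l.map Prod.snd).sum) * (l.map Prod.fst).prod := by noncomm_ring
      _ = ((x - pc.2) * pc.1 - (l.map Prod.snd).sum * pc.1) * (l.map Prod.fst).prod := by
          rw [hrel, (hS pc.1).eq]
      _ = (x - (pc.2 + (l.map Prod.snd).sum)) * (pc.1 * (l.map Prod.fst).prod) := by noncomm_ring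

end Aux


/-- In `B_n = K[H₁,…,H_n][z₁^{±1},…,z_n^{±1}; σ₁,…,σ_n]` with `σ_i(H_j) = H_j − δ_{ij}`
(axiomatised by generators, relations and a monomial basis), the elements
`H₁+p₁, …, H_n+p_n` (with `p_i` Laurent polynomials in the `z`'s) pairwise commute iff
`z_i ∂p_j/∂z_i = z_j ∂p_i/∂z_j` for all `i ≠ j`. -/
theorem commute_H_add_p (K B : Type*) [Field K] [CharZero K] [Ring B] [Algebra K B] (n : ℕ)
    (h : Fin n → B) (z : Fin n → Bˣ)
    (hzh : ∀ i j, (z i : B) * h j = (h j - if i = j then 1 else 0) * (z i : B))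
    (hzz : ∀ i j, Commute ((z i : B)) ((z j : B)))
    (hhh : ∀ i j, Commute (h i) (h j))
    (b : Module.Basis ((Fin n → ℕ) × (Fin n → ℤ)) K B)
    (hb : ∀ (m : Fin n → ℕ) (α : Fin n → ℤ),
      b (m, α) = (List.ofFn fun i => h i ^ m i).prod * (List.ofFn fun i => ((z i ^ α i : Bˣ) : B)).prod)
    (p : Fin n → Laur K n) :
    (∀ i j, Commute
        (h i + (p i).sum fun α a => a • (List.ofFn fun k => ((z k ^ α k : Bˣ) : B)).prod)
        (h j + (p j).sum fun α a => a • (List.ofFn fun k => ((z k ^ α k : Bˣ) : B)).prod)) ↔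
      (∀ i j, i ≠ j → Dz K n i (p j) = Dz K n j (p i)) := by
  classical
  set Z : (Fin n → ℤ) → B := fun α => (List.ofFn fun k => ((z k ^ α k : Bˣ) : B)).prod with hZdef
  -- pairwise commutation of the monomials
  have hzzU : ∀ i j, Commute (z i) (z j) := fun i j => Units.ext (hzz i j)
  have hZZ : ∀ α β, Commute (Z α) (Z β) := by
    intro α β
    apply Commute.list_prod_right
    intro y hy
    obtain ⟨i, rfl⟩ := List.mem_ofFn.mp hy
    apply Commute.list_prod_left
    intro x hx
    obtain ⟨j, rfl⟩ := List.mem_ofFn.mp hx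
    exact ((hzzU j i).zpow_zpow (α j) (β i)).map (Units.coeHom B)
  -- commutation of monomials with the h's
  have hZh : ∀ (j : Fin n) (α : Fin n → ℤ), Z α * h j = (h j - ((α j : ℤ) : B)) * Z α := by
    intro j α
    have hper : ∀ k : Fin n, (∀ y : B, Commute (if k = j then ((α k : ℤ) : B) else 0) y) ∧
        ((z k ^ α k : Bˣ) : B) * h j = (h j - if k = j then ((α k : ℤ) : B) else 0) * ((z k ^ α k : Bˣ) : B) := by
      intro k
      constructor
      · intro y
        by_cases hk : k = j
        · simpa [hk] using Int.cast_commute (α k) y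
        · simpa [hk] using Commute.zero_left y
      · have hcent : ∀ y : B, Commute (if k = j then (1 : B) else 0) y := by
          intro y
          by_cases hk : k = j
          · simpa [hk] using Commute.one_left y
          · simpa [hk] using Commute.zero_left y
        have := aux_zpow_rel (z k) (h j) (if k = j then (1:B) else 0) hcent (hzh k j) (α k)
        have hsm : (α k) • (if k = j then (1:B) else 0) = (if k = j then ((α k : ℤ) : B) else 0) := by
          by_cases hk : k = j <;> simp [hk]
        rwa [hsm] at this
    have key := aux_prod_rel (h j)
      (List.ofFn fun k => (((z k ^ α k : Bˣ) : B), if k = j then ((α k : ℤ) : B) else 0))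
      (by intro pc hpc
          obtain ⟨k, rfl⟩ := List.mem_ofFn.mp hpc
          exact hper k)
    rw [List.map_ofFn, List.map_ofFn] at key
    have hsum : (List.ofFn fun k => if k = j then ((α k : ℤ) : B) else 0).sum = ((α j : ℤ) : B) := by
      rw [List.sum_ofFn]
      simp
    simp only [Function.comp_def] at key
    simp only [hZdef]
    simpa [hsum] using key
  -- the embedding of the Laurent algebra into B
  set Φ : Laur K n →ₗ[K] B := Finsupp.lsum K fun α => LinearMap.toSpanSingleton K B (Z α) with hΦdef
  have Φ_apply : ∀ q : Laur K n, Φ q = q.sum fun α a => a • Z α := by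
    intro q
    rw [hΦdef, Finsupp.lsum_apply]
    apply Finsupp.sum_congr
    intros
    rw [LinearMap.toSpanSingleton_apply]
  have Φ_single : ∀ (α : Fin n → ℤ) (a : K), Φ (Finsupp.single α a) = a • Z α := by
    intro α a
    rw [Φ_apply, Finsupp.sum_single_index (by simp)]
  have Dz_single : ∀ (i : Fin n) (α : Fin n → ℤ) (a : K),
      Dz K n i (Finsupp.single α a) = Finsupp.single α (a * ((α i : ℤ) : K)) := by
    intro i α a
    simp [Dz, Finsupp.lsum_single, LinearMap.toSpanSingleton_apply, Finsupp.smul_single,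
      smul_eq_mul]
  -- commutator of h i with Φ q
  have HΦ : ∀ (i : Fin n) (q : Laur K n), h i * Φ q - Φ q * h i = Φ (Dz K n i q) := by
    intro i q
    induction q using Finsupp.induction_linear with
    | zero => simp
    | add q q' hq hq' =>
      rw [map_add, map_add, map_add, mul_add, add_mul, ← hq, ← hq']
      noncomm_ring
    | single α a =>
      rw [Φ_single, Dz_single, Φ_single]
      have h1 : h i * (a • Z α) - (a • Z α) * h i = a • (h i * Z α - Z α * h i) := by
        rw [smul_sub, mul_smul_comm, smul_mul_assoc]
      have h2 : h i * Z α - Z α * h i = ((α i : ℤ) : B) * Z α := by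
        rw [hZh i α]
        noncomm_ring
      rw [h1, h2]
      have h3 : ((α i : ℤ) : B) = algebraMap K B ((α i : ℤ) : K) := by
        rw [map_intCast]
      rw [h3, ← Algebra.smul_def, mul_smul, smul_comm]
  -- Φ's of each other commute
  have hxΦ : ∀ (x : B), (∀ α, Commute x (Z α)) → ∀ q : Laur K n, Commute x (Φ q) := by
    intro x hx q
    rw [Φ_apply, Finsupp.sum]
    exact Commute.sum_right _ _ _ fun α _ => (hx α).smul_right _
  have hΦΦ : ∀ q q' : Laur K n, Commute (Φ q) (Φ q') :=
    fun q q' => hxΦ (Φ q) (fun β => (hxΦ (Z β) (fun α => hZZ β α) q).symm) q'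
  -- injectivity of Φ
  have hZb : ∀ α : Fin n → ℤ, Z α = b ((0 : Fin n → ℕ), α) := by
    intro α
    rw [hb]
    have : (List.ofFn fun i => h i ^ (0 : Fin n → ℕ) i).prod = 1 := by
      apply List.prod_eq_one
      intro x hx
      obtain ⟨i, rfl⟩ := List.mem_ofFn.mp hx
      simp
    rw [this, one_mul, hZdef]
  have hrepr : ∀ q : Laur K n,
      b.repr (Φ q) = Finsupp.mapDomain (fun α => ((0 : Fin n → ℕ), α)) q := by
    intro q
    rw [Φ_apply, map_finsuppSum, Finsupp.mapDomain]
    apply Finsupp.sum_congr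
    intro α _
    rw [map_smul, hZb, Module.Basis.repr_self, Finsupp.smul_single, smul_eq_mul, mul_one]
  have Φinj : Function.Injective Φ := by
    intro q q' hqq'
    have h0 := congrArg b.repr hqq'
    rw [hrepr, hrepr] at h0
    exact Finsupp.mapDomain_injective (fun a a' haa' => (Prod.ext_iff.mp haa').2) h0
  -- the commutator identity
  have key : ∀ i j, (h i + Φ (p i)) * (h j + Φ (p j)) - (h j + Φ (p j)) * (h i + Φ (p i))
      = Φ (Dz K n i (p j)) - Φ (Dz K n j (p i)) := by
    intro i j
    have expand : (h i + Φ (p i)) * (h j + Φ (p j)) - (h j + Φ (p j)) * (h i + Φ (p i))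
        = (h i * h j - h j * h i) + ((h i * Φ (p j) - Φ (p j) * h i) - (h j * Φ (p i) - Φ (p i) * h j))
          + (Φ (p i) * Φ (p j) - Φ (p j) * Φ (p i)) := by
      noncomm_ring
    rw [expand, (hhh i j).eq, (hΦΦ (p i) (p j)).eq, HΦ i (p j), HΦ j (p i)]
    abel
  have Φrw : ∀ i, ((p i).sum fun α a => a • (List.ofFn fun k => ((z k ^ α k : Bˣ) : B)).prod)
      = Φ (p i) := fun i => (Φ_apply (p i)).symm
  constructor
  · intro hc i j hij
    have h0 := hc i j
    rw [Φrw i, Φrw j] at h0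
    have h1 : Φ (Dz K n i (p j)) - Φ (Dz K n j (p i)) = 0 := by
      rw [← key i j]
      exact sub_eq_zero_of_eq h0.eq
    have h2 : Φ (Dz K n i (p j) - Dz K n j (p i)) = Φ 0 := by
      rw [map_sub, map_zero]
      exact h1
    exact sub_eq_zero.mp (Φinj h2)
  · intro hd i j
    rw [Φrw i, Φrw j]
    rcases eq_or_ne i j with rfl | hij
    · exact Commute.refl _
    · have h1 : Φ (Dz K n i (p j)) - Φ (Dz K n j (p i)) = 0 := by
        rw [hd i j hij, sub_self]
      have h2 := (key i j).trans h1
      exact sub_eq_zero.mp h2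
end

section
/- Let A be a K-algebra having a unique (up to isomorphism) faithful simple module M, realized as a subalgebra of End_K(M). Then every K-algebra automorphism σ of A is of the form σ(a) = φ a φ^{−1} for some K-linear automorphism φ of M satisfying φ A φ^{−1} = A. -/
/-- A representation `ρ : A → End_K(M)` is (absolutely) simple if the only `A`-invariant
`K`-subspaces of `M` are `⊥` and `⊤`, and `M ≠ 0`. -/
def IsSimpleRep {K A M : Type*} [Field K] [Ring A] [Algebra K A]
    [AddCommGroup M] [Module K M] (ρ : A →ₐ[K] Module.End K M) : Prop :=
  (∃ m : M, m ≠ 0) ∧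
    ∀ N : Submodule K M, (∀ a : A, ∀ m ∈ N, ρ a m ∈ N) → N = ⊥ ∨ N = ⊤

/-- If a `K`-algebra `A ⊆ End_K(M)` (faithfully represented via `ρ`) has `M` as its unique
(up to isomorphism) faithful simple module, then every `K`-algebra automorphism `σ` of `A` is
given by conjugation: `σ(a) = φ a φ⁻¹` for some `φ ∈ Aut_K(M)` with `φ A φ⁻¹ = A`. -/
theorem aut_eq_conj_of_unique_faithful_simple (K A : Type u_1) (M : Type u_2) [Field K] [Ring A]
    [Algebra K A] [AddCommGroup M] [Module K M]
    (ρ : A →ₐ[K] Module.End K M) (hinj : Function.Injective ρ) (hsimple : IsSimpleRep ρ)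
    (huniq : ∀ (M' : Type u_2) [AddCommGroup M'] [Module K M']
      (ρ' : A →ₐ[K] Module.End K M'), Function.Injective ρ' → IsSimpleRep ρ' →
      ∃ φ : M ≃ₗ[K] M', ∀ a : A,
        ρ' a = φ.toLinearMap ∘ₗ ρ a ∘ₗ φ.symm.toLinearMap) :
    ∀ σ : A ≃ₐ[K] A, ∃ φ : M ≃ₗ[K] M,
      (∀ a : A, ρ (σ a) = φ.toLinearMap ∘ₗ ρ a ∘ₗ φ.symm.toLinearMap) ∧
      (∀ a : A, ∃ b : A, φ.toLinearMap ∘ₗ ρ a ∘ₗ φ.symm.toLinearMap = ρ b) := by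
  intro σ
  obtain ⟨φ, hφ⟩ := huniq M (ρ.comp σ.toAlgHom)
    (hinj.comp σ.injective)
    ⟨hsimple.1, fun N hN => hsimple.2 N (fun a m hm => by
      have := hN (σ.symm a) m hm
      simpa using this)⟩
  exact ⟨φ, hφ, fun a => ⟨σ a, (hφ a).symm⟩⟩
end

section
/- Let K[H] be the polynomial ring and consider the simple skew Laurent algebra B₁ = K[H][x,x^{−1};σ], σ(H)=H−1. Then B₁ is a simple K-algebra (it has no nonzero proper two-sided ideals). -/
open Polynomial

section B1aux

variable {K B : Type*} [Field K] [CharZero K] [Ring B] [Algebra K B]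

private lemma B1_xinv_h {h : B} {x : Bˣ} (hrel : (x : B) * h = (h - 1) * (x : B)) :
    ((x⁻¹ : Bˣ) : B) * h = (h + 1) * ((x⁻¹ : Bˣ) : B) := by
  have e1 : h * ((x⁻¹ : Bˣ) : B) = ((x⁻¹ : Bˣ) : B) * (h - 1) := by
    have := congrArg (fun t => ((x⁻¹ : Bˣ) : B) * t * ((x⁻¹ : Bˣ) : B)) hrel
    simpa [mul_assoc] using this
  rw [add_mul, one_mul, e1, mul_sub, mul_one, sub_add_cancel]

private lemma B1_xzpow_h {h : B} {x : Bˣ} (hrel : (x : B) * h = (h - 1) * (x : B)) (k : ℤ) :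
    ((x ^ k : Bˣ) : B) * h = (h - ((k : ℤ) : B)) * ((x ^ k : Bˣ) : B) := by
  induction k using Int.induction_on with
  | zero => simp
  | succ n ih =>
    calc ((x ^ ((n : ℤ) + 1) : Bˣ) : B) * h
        = ((x ^ (n : ℤ) : Bˣ) : B) * ((x : B) * h) := by
          rw [zpow_add_one, Units.val_mul, mul_assoc]
      _ = ((x ^ (n : ℤ) : Bˣ) : B) * ((h - 1) * (x : B)) := by rw [hrel]
      _ = (((x ^ (n : ℤ) : Bˣ) : B) * h) * (x : B) - ((x ^ (n : ℤ) : Bˣ) : B) * (x : B) := by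
          noncomm_ring
      _ = ((h - ((n : ℤ) : B)) * ((x ^ (n : ℤ) : Bˣ) : B)) * (x : B)
            - ((x ^ (n : ℤ) : Bˣ) : B) * (x : B) := by rw [ih]
      _ = (h - (((n : ℤ) + 1 : ℤ) : B)) * ((x ^ ((n : ℤ) + 1) : Bˣ) : B) := by
          rw [zpow_add_one, Units.val_mul]; push_cast; noncomm_ring
  | pred n ih =>
    calc ((x ^ (-(n : ℤ) - 1) : Bˣ) : B) * h
        = ((x ^ (-(n : ℤ)) : Bˣ) : B) * (((x⁻¹ : Bˣ) : B) * h) := by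
          rw [zpow_sub_one, Units.val_mul, mul_assoc]
      _ = ((x ^ (-(n : ℤ)) : Bˣ) : B) * ((h + 1) * ((x⁻¹ : Bˣ) : B)) := by
          rw [B1_xinv_h hrel]
      _ = (((x ^ (-(n : ℤ)) : Bˣ) : B) * h) * ((x⁻¹ : Bˣ) : B)
            + ((x ^ (-(n : ℤ)) : Bˣ) : B) * ((x⁻¹ : Bˣ) : B) := by noncomm_ring
      _ = ((h - ((-(n : ℤ) : ℤ) : B)) * ((x ^ (-(n : ℤ)) : Bˣ) : B)) * ((x⁻¹ : Bˣ) : B)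
            + ((x ^ (-(n : ℤ)) : Bˣ) : B) * ((x⁻¹ : Bˣ) : B) := by rw [ih]
      _ = (h - ((-(n : ℤ) - 1 : ℤ) : B)) * ((x ^ (-(n : ℤ) - 1) : Bˣ) : B) := by
          rw [zpow_sub_one, Units.val_mul]; push_cast; noncomm_ring

private lemma B1_x_hpow {h : B} {x : Bˣ} (hrel : (x : B) * h = (h - 1) * (x : B)) (m : ℕ) :
    (x : B) * h ^ m = (h - 1) ^ m * (x : B) := by
  induction m with
  | zero => simp
  | succ n ih =>
    rw [pow_succ, ← mul_assoc, ih, mul_assoc, hrel, ← mul_assoc, ← pow_succ]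

private lemma B1_conj {h : B} {x : Bˣ} (hrel : (x : B) * h = (h - 1) * (x : B)) (p : K[X]) :
    (x : B) * (aeval h p) = (aeval (h - 1) p) * (x : B) := by
  induction p using Polynomial.induction_on' with
  | add p q hp hq => rw [map_add, map_add, mul_add, add_mul, hp, hq]
  | monomial n a =>
    rw [aeval_monomial, aeval_monomial]
    calc (x : B) * ((algebraMap K B a) * h ^ n)
        = (algebraMap K B a) * ((x : B) * h ^ n) := by
          rw [← mul_assoc, ← Algebra.commutes, mul_assoc]
      _ = (algebraMap K B a) * ((h - 1) ^ n * (x : B)) := by rw [B1_x_hpow hrel n]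
      _ = ((algebraMap K B a) * (h - 1) ^ n) * (x : B) := by rw [mul_assoc]

private lemma B1_reprD (h : B) (x : Bˣ) (hrel : (x : B) * h = (h - 1) * (x : B))
    (b : Module.Basis (ℕ × ℤ) K B)
    (hb : ∀ m : ℕ, ∀ k : ℤ, b (m, k) = h ^ m * ((x ^ k : Bˣ) : B)) (a : B) (j : ℕ × ℤ) :
    b.repr (h * a - a * h) j = (j.2 : K) * b.repr a j := by
  have key : ∀ i : ℕ × ℤ, h * b i - b i * h = (i.2 : ℤ) • b i := by
    rintro ⟨m, k⟩
    rw [hb m k]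
    have e2 : (h ^ m * ((x ^ k : Bˣ) : B)) * h
        = h ^ (m + 1) * ((x ^ k : Bˣ) : B)
          - h ^ m * (((k : ℤ) : B) * ((x ^ k : Bˣ) : B)) := by
      rw [mul_assoc, B1_xzpow_h hrel k, pow_succ]
      noncomm_ring
    rw [e2, ← mul_assoc h, ← pow_succ']
    rw [pow_succ'] at e2 ⊢
    rw [sub_sub_cancel, ← mul_assoc, ← (Int.cast_commute (k : ℤ) (h ^ m)).eq, mul_assoc,
      ← zsmul_eq_mul]
  have lmap : (Finsupp.lapply j) ∘ₗ (b.repr : B →ₗ[K] ((ℕ × ℤ) →₀ K))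
        ∘ₗ (LinearMap.mulLeft K h - LinearMap.mulRight K h)
      = (j.2 : K) • ((Finsupp.lapply j) ∘ₗ (b.repr : B →ₗ[K] ((ℕ × ℤ) →₀ K))) := by
    apply b.ext
    intro i
    simp only [LinearMap.comp_apply, LinearMap.sub_apply, LinearMap.mulLeft_apply,
      LinearMap.mulRight_apply, LinearMap.smul_apply, Finsupp.lapply_apply]
    rw [show h * b i - b i * h = (i.2 : ℤ) • b i from key i]
    simp only [map_zsmul, Module.Basis.repr_self, Finsupp.smul_apply, Finsupp.single_apply]
    rcases eq_or_ne i j with rfl | hij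
    · simp [zsmul_eq_mul]
    · simp [hij]
  simpa using LinearMap.congr_fun lmap a

private lemma B1_isolate (h : B) (x : Bˣ) (hrel : (x : B) * h = (h - 1) * (x : B))
    (b : Module.Basis (ℕ × ℤ) K B)
    (hb : ∀ m : ℕ, ∀ k : ℤ, b (m, k) = h ^ m * ((x ^ k : Bˣ) : B)) (I : TwoSidedIdeal B) :
    ∀ n : ℕ, ∀ a : B, a ∈ I → a ≠ 0 → ((b.repr a).support.image Prod.snd).card ≤ n →
    ∃ a' : B, a' ∈ I ∧ a' ≠ 0 ∧ ∃ k : ℤ, ∀ j ∈ (b.repr a').support, j.2 = k := by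
  intro n
  induction n with
  | zero =>
    intro a _ ha0 hcard
    exfalso
    have hne : (b.repr a).support.Nonempty := by
      rw [Finsupp.support_nonempty_iff]
      exact fun h0 => ha0 (by simpa using congrArg b.repr.symm h0)
    have := Finset.card_pos.mpr (hne.image Prod.snd)
    omega
  | succ n ih =>
    intro a haI ha0 hcard
    have hne : (b.repr a).support.Nonempty := by
      rw [Finsupp.support_nonempty_iff]
      exact fun h0 => ha0 (by simpa using congrArg b.repr.symm h0)
    by_cases hone : ((b.repr a).support.image Prod.snd).card ≤ 1
    · obtain ⟨j0, hj0⟩ := hne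
      refine ⟨a, haI, ha0, j0.2, fun j hj => ?_⟩
      exact Finset.card_le_one.mp hone _ (Finset.mem_image_of_mem _ hj) _
        (Finset.mem_image_of_mem _ hj0)
    · push_neg at hone
      obtain ⟨k0, hk0, k1, hk1, hkk⟩ := Finset.one_lt_card.mp hone
      set a'' := (h * a - a * h) - (k0 : ℤ) • a with ha''
      have key : ∀ j : ℕ × ℤ, b.repr a'' j = ((j.2 - k0 : ℤ) : K) * b.repr a j := by
        intro j
        rw [ha'', map_sub, map_zsmul, Finsupp.sub_apply, Finsupp.smul_apply,
          B1_reprD h x hrel b hb a j, zsmul_eq_mul]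
        push_cast
        ring
      have hmemI : a'' ∈ I := by
        refine I.sub_mem (I.sub_mem ?_ ?_) (I.zsmul_mem k0 haI)
        · exact I.mul_mem_left h a haI
        · exact I.mul_mem_right a h haI
      obtain ⟨j1, hj1supp, hj1⟩ := Finset.mem_image.mp hk1
      have hcoeff : b.repr a'' j1 ≠ 0 := by
        rw [key j1, hj1]
        exact mul_ne_zero (Int.cast_ne_zero.mpr (sub_ne_zero.mpr (Ne.symm hkk)))
          (Finsupp.mem_support_iff.mp hj1supp)
      have ha''0 : a'' ≠ 0 := by
        intro h0
        exact hcoeff (by rw [h0, map_zero]; rfl)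
      have hsub : (b.repr a'').support.image Prod.snd
          ⊆ ((b.repr a).support.image Prod.snd).erase k0 := by
        intro t ht
        obtain ⟨j, hj, rfl⟩ := Finset.mem_image.mp ht
        have hcj : b.repr a j ≠ 0 ∧ j.2 ≠ k0 := by
          have hj' := Finsupp.mem_support_iff.mp hj
          rw [key j] at hj'
          refine ⟨right_ne_zero_of_mul hj', fun hEq => ?_⟩
          exact hj' (by rw [hEq]; simp)
        exact Finset.mem_erase.mpr ⟨hcj.2,
          Finset.mem_image_of_mem _ (Finsupp.mem_support_iff.mpr hcj.1)⟩
      have hcard' : ((b.repr a'').support.image Prod.snd).card ≤ n := by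
        have h1 := Finset.card_le_card hsub
        have h2 := Finset.card_erase_of_mem hk0
        omega
      exact ih a'' hmemI ha''0 hcard'

private lemma B1_poly (h : B) (x : Bˣ) (hrel : (x : B) * h = (h - 1) * (x : B))
    (I : TwoSidedIdeal B) :
    ∀ n : ℕ, ∀ p : K[X], p ≠ 0 → p.natDegree ≤ n → (aeval h p ∈ I) → (1 : B) ∈ I := by
  intro n
  induction n with
  | zero =>
    intro p hp hdeg hI
    obtain ⟨c, rfl⟩ := Polynomial.natDegree_eq_zero.mp (Nat.le_zero.mp hdeg)
    have hc : c ≠ 0 := fun h0 => hp (by rw [h0, map_zero])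
    have h1 : (algebraMap K B c) ∈ I := by simpa using hI
    have h2 := I.mul_mem_left (algebraMap K B c⁻¹) _ h1
    rwa [← map_mul, inv_mul_cancel₀ hc, map_one] at h2
  | succ n ih =>
    intro p hp hdeg hI
    by_cases hd : p.natDegree ≤ n
    · exact ih p hp hd hI
    push_neg at hd
    have hdeg' : p.natDegree = n + 1 := le_antisymm hdeg hd
    have hX1 : (X - 1 : K[X]) = X - C 1 := by rw [map_one]
    have hX1deg : (X - 1 : K[X]).natDegree = 1 := by rw [hX1, natDegree_X_sub_C]
    set Δ : K[X] := p.comp (X - 1) - p with hΔ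
    have hcomp_deg : (p.comp (X - 1)).natDegree = n + 1 := by
      rw [natDegree_comp, hX1deg, mul_one, hdeg']
    have hcomp_lead : (p.comp (X - 1)).coeff (n + 1) = p.coeff (n + 1) := by
      have hm : (X - 1 : K[X]).leadingCoeff = 1 := by
        rw [hX1]; exact (monic_X_sub_C (1 : K)).leadingCoeff
      calc (p.comp (X - 1)).coeff (n + 1) = (p.comp (X - 1)).leadingCoeff := by
            rw [Polynomial.leadingCoeff, hcomp_deg]
        _ = p.leadingCoeff * (X - 1 : K[X]).leadingCoeff ^ p.natDegree :=
            leadingCoeff_comp (by rw [hX1deg]; norm_num)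
        _ = p.coeff (n + 1) := by rw [hm, one_pow, mul_one, Polynomial.leadingCoeff, hdeg']
    have hΔdegle : Δ.natDegree ≤ n + 1 := by
      refine le_trans (natDegree_sub_le _ _) ?_
      rw [hcomp_deg, hdeg', max_self]
    have hΔcoeff : Δ.coeff (n + 1) = 0 := by
      rw [hΔ, coeff_sub, hcomp_lead, sub_self]
    have hΔne : Δ ≠ 0 := by
      intro h0
      have hcomp : p.comp (X - 1) = p := by
        have := sub_eq_zero.mp (hΔ ▸ h0)
        exact this
      have heval : ∀ t : K, p.eval t = p.eval (t - 1) := by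
        intro t
        conv_lhs => rw [← hcomp]
        rw [eval_comp]
        simp
      have hiter : ∀ m : ℕ, p.eval (-(m : K)) = p.eval 0 := by
        intro m
        induction m with
        | zero => simp
        | succ s ihs =>
          have hs := heval (-(s : K))
          push_cast
          rw [show -((s : K) + 1) = -(s : K) - 1 by ring, ← hs, ihs]
      set r : K[X] := p - C (p.eval 0) with hr
      have hrne : r ≠ 0 := by
        intro h0
        have hpc : p = C (p.eval 0) := by
          have := sub_eq_zero.mp (hr ▸ h0)
          exact this
        rw [hpc, natDegree_C] at hdeg'
        omega
      have hfin := Polynomial.finite_setOf_isRoot hrne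
      have hinj : Function.Injective (fun m : ℕ => -(m : K)) := by
        intro a b hab
        simp only [neg_inj, Nat.cast_inj] at hab
        exact hab
      have hsubset : Set.range (fun m : ℕ => -(m : K)) ⊆ { t | r.IsRoot t } := by
        rintro _ ⟨m, rfl⟩
        simp [hr, IsRoot, hiter m]
      exact Set.infinite_range_of_injective hinj (hfin.subset hsubset)
    have hΔdeg : Δ.natDegree ≤ n := by
      by_contra hgt
      push_neg at hgt
      have heq : Δ.natDegree = n + 1 := le_antisymm hΔdegle hgt
      exact (Polynomial.leadingCoeff_ne_zero.mpr hΔne)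
        (by rwa [Polynomial.leadingCoeff, heq])
    have hconj : aeval h (p.comp (X - 1)) = (x : B) * (aeval h p) * ((x⁻¹ : Bˣ) : B) := by
      rw [aeval_comp, show (aeval h (X - 1 : K[X])) = h - 1 by simp, B1_conj hrel p,
        mul_assoc, Units.mul_inv, mul_one]
    have hΔI : aeval h Δ ∈ I := by
      rw [hΔ, map_sub]
      refine I.sub_mem ?_ hI
      rw [hconj]
      exact I.mul_mem_right _ _ (I.mul_mem_left _ _ hI)
    exact ih Δ hΔne hΔdeg hΔI

end B1aux

/- `B₁ = K[H][x, x^{−1}; σ]`, `σ(H) = H − 1`, is axiomatised as a `K`-algebra `B` with an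
element `h`, a unit `x`, the commutation rule `x h = (h − 1) x`, and `K`-basis
`{h^m x^k : m ∈ ℕ, k ∈ ℤ}`. -/
/-- `B₁ = K[H][x,x^{−1};σ]` with `σ(H) = H−1` is a simple `K`-algebra. -/
theorem B1_simple (K B : Type*) [Field K] [CharZero K] [Ring B] [Algebra K B]
    (h : B) (x : Bˣ) (hrel : (x : B) * h = (h - 1) * (x : B))
    (b : Module.Basis (ℕ × ℤ) K B) (hb : ∀ m : ℕ, ∀ k : ℤ, b (m, k) = h ^ m * ((x ^ k : Bˣ) : B)) :
    IsSimpleRing B := by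
  have hnt : Nontrivial B := ⟨b (0, 0), 0, b.ne_zero (0, 0)⟩
  constructor
  constructor
  intro I
  by_cases hI : I = ⊥
  · exact Or.inl hI
  right
  have hex : ∃ a, a ∈ I ∧ a ≠ 0 := by
    by_contra hc
    push_neg at hc
    exact hI (eq_bot_iff.mpr fun a ha => show a ∈ (⊥ : TwoSidedIdeal B) from hc a ha)
  obtain ⟨a, haI, ha0⟩ := hex
  obtain ⟨a', ha'I, ha'0, k, hk⟩ :=
    B1_isolate h x hrel b hb I ((b.repr a).support.image Prod.snd).card a haI ha0 le_rfl
  set q : B := a' * ((x ^ (-k) : Bˣ) : B) with hq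
  have hqI : q ∈ I := I.mul_mem_right _ _ ha'I
  have hq0 : q ≠ 0 := by
    intro h0
    apply ha'0
    have : a' = q * ((x ^ k : Bˣ) : B) := by
      rw [hq, mul_assoc, ← Units.val_mul, ← zpow_add, neg_add_cancel, zpow_zero,
        Units.val_one, mul_one]
    rw [this, h0, zero_mul]
  obtain ⟨p, hp⟩ : ∃ p : K[X], aeval h p = q := by
    refine ⟨∑ j ∈ (b.repr a').support, C (b.repr a' j) * X ^ j.1, ?_⟩
    have ha'sum : ∑ j ∈ (b.repr a').support, (b.repr a' j) • b j = a' := by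
      conv_rhs => rw [← b.linearCombination_repr a']
      rw [Finsupp.linearCombination_apply, Finsupp.sum]
    rw [map_sum]
    calc ∑ j ∈ (b.repr a').support, aeval h (C (b.repr a' j) * X ^ j.1)
        = ∑ j ∈ (b.repr a').support, (b.repr a' j) • (b j * ((x ^ (-k) : Bˣ) : B)) := by
          refine Finset.sum_congr rfl fun j hj => ?_
          rw [map_mul, aeval_C, map_pow, aeval_X, ← Algebra.smul_def]
          congr 1
          rw [hb j.1 j.2, hk j hj, mul_assoc, ← Units.val_mul, ← zpow_add, add_neg_cancel,
            zpow_zero, Units.val_one, mul_one]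
      _ = (∑ j ∈ (b.repr a').support, (b.repr a' j) • b j) * ((x ^ (-k) : Bˣ) : B) := by
          rw [Finset.sum_mul]
          exact Finset.sum_congr rfl fun j _ => (smul_mul_assoc _ _ _).symm
      _ = q := by rw [ha'sum]
  have hp0 : p ≠ 0 := fun h0 => hq0 (by rw [← hp, h0, map_zero])
  have h1 : (1 : B) ∈ I := B1_poly h x hrel I p.natDegree p hp0 le_rfl (hp ▸ hqI)
  exact I.eq_top h1
end
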